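/- arXiv:1501.00076 — 11 statements merged into one kernel-verified Lean document; each statement's English description precedes it below -/
import Mathlib

section
/- The maximum number of k-term arithmetic progressions contained in an n-point subset of the real line equals (n-r)(n+r-k+1)/(2(k-1)), where r is the remainder when n is divided by k-1, and this maximum is attained by the set {0, 1, …, n-1}. -/
attribute [local instance] Classical.propDecidable

open Finset

namespace Stmt4Aux


noncomputable def ap (k : ℕ) (a d : ℝ) : Finset ℝ :=
  (Finset.range k).image (fun i => a + (i : ℝ) * d)

lemma mem_ap_iff {k : ℕ} {a d y : ℝ} : y ∈ ap k a d ↔ ∃ i : ℕ, i < k ∧ a + (i:ℝ) * d = y := by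
  unfold ap; simp

lemma mem_ap {k : ℕ} {a d : ℝ} {i : ℕ} (hi : i < k) : a + (i : ℝ) * d ∈ ap k a d :=
  mem_ap_iff.2 ⟨i, hi, rfl⟩

lemma ap_nonempty {k : ℕ} (hk : 0 < k) (a d : ℝ) : (ap k a d).Nonempty :=
  ⟨a + ((0:ℕ) : ℝ) * d, mem_ap hk⟩

lemma ap_min' {k : ℕ} (hk : 0 < k) {a d : ℝ} (hd : 0 < d) :
    (ap k a d).min' (ap_nonempty hk a d) = a := by
  apply le_antisymm
  · have := Finset.min'_le (ap k a d) (a + ((0:ℕ):ℝ) * d) (mem_ap hk)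
    simpa using this
  · apply Finset.le_min'
    intro y hy
    obtain ⟨i, _, rfl⟩ := mem_ap_iff.1 hy
    have h0 : (0:ℝ) ≤ (i : ℝ) := Nat.cast_nonneg i
    nlinarith

lemma ap_max' {k : ℕ} (hk : 0 < k) {a d : ℝ} (hd : 0 < d) :
    (ap k a d).max' (ap_nonempty hk a d) = a + ((k - 1 : ℕ) : ℝ) * d := by
  apply le_antisymm
  · apply Finset.max'_le
    intro y hy
    obtain ⟨i, hi, rfl⟩ := mem_ap_iff.1 hy
    have hik : i ≤ k - 1 := by omega
    have hik' : (i : ℝ) ≤ ((k - 1 : ℕ) : ℝ) := by exact_mod_cast hik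
    nlinarith
  · exact Finset.le_max' _ _ (mem_ap (by omega))

lemma ap_mem_bounds {k : ℕ} {a d y : ℝ} (hd : 0 < d) (hy : y ∈ ap k a d) :
    a ≤ y ∧ y ≤ a + ((k - 1 : ℕ) : ℝ) * d := by
  obtain ⟨i, hi, rfl⟩ := mem_ap_iff.1 hy
  have h0 : (0:ℝ) ≤ (i : ℝ) := Nat.cast_nonneg i
  have hik : i ≤ k - 1 := by omega
  have hik' : (i : ℝ) ≤ ((k - 1 : ℕ) : ℝ) := by exact_mod_cast hik
  constructor <;> nlinarith

lemma ap_inj {k : ℕ} (hk : 1 < k) {a d a' d' : ℝ} (hd : 0 < d) (hd' : 0 < d')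
    (h : ap k a d = ap k a' d') : a = a' ∧ d = d' := by
  have h0 : 0 < k := by omega
  have hK : (0:ℝ) < ((k - 1 : ℕ) : ℝ) := by
    have h1 : 0 < k - 1 := by omega
    exact_mod_cast h1
  have m1 : a ∈ ap k a' d' := by
    rw [← h]; simpa using mem_ap (a := a) (d := d) h0
  have m2 : a' ∈ ap k a d := by
    rw [h]; simpa using mem_ap (a := a') (d := d') h0
  have m3 : a + ((k - 1 : ℕ) : ℝ) * d ∈ ap k a' d' := by
    rw [← h]; exact mem_ap (by omega)
  have m4 : a' + ((k - 1 : ℕ) : ℝ) * d' ∈ ap k a d := by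
    rw [h]; exact mem_ap (by omega)
  have b1 := ap_mem_bounds hd' m1
  have b2 := ap_mem_bounds hd m2
  have b3 := ap_mem_bounds hd' m3
  have b4 := ap_mem_bounds hd m4
  have hmin : a = a' := le_antisymm b2.1 b1.1
  refine ⟨hmin, ?_⟩
  subst hmin
  have : ((k - 1 : ℕ) : ℝ) * d = ((k - 1 : ℕ) : ℝ) * d' := by linarith [b3.2, b4.2]
  exact mul_left_cancel₀ (ne_of_gt hK) this




def A (k n : ℕ) : Finset (ℕ × ℕ) :=
  (range n).biUnion (fun d => (range (n - (k-1)*(d+1))).image (fun a => (a, d+1)))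

lemma mem_A {k n : ℕ} (hk : 1 < k) {x : ℕ × ℕ} :
    x ∈ A k n ↔ 0 < x.2 ∧ x.1 + (k-1)*x.2 < n := by
  obtain ⟨a, e⟩ := x
  unfold A
  simp only [Finset.mem_biUnion, Finset.mem_range, Finset.mem_image, Prod.mk.injEq]
  constructor
  · rintro ⟨d, hd, b, hb, rfl, rfl⟩
    have h1 := Nat.lt_sub_iff_add_lt.1 hb
    exact ⟨by omega, h1⟩
  · rintro ⟨h1, h2⟩
    have he : e ≤ (k-1)*e := Nat.le_mul_of_pos_left e (by omega)
    refine ⟨e - 1, by omega, a, ?_, rfl, by omega⟩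
    have : e - 1 + 1 = e := by omega
    rw [this]
    exact Nat.lt_sub_iff_add_lt.2 (by omega)

lemma card_A {k n : ℕ} : (A k n).card = ∑ d ∈ range n, (n - (k-1)*(d+1)) := by
  unfold A
  rw [Finset.card_biUnion]
  · exact Finset.sum_congr rfl (fun d _ => by
      rw [Finset.card_image_of_injective _ (fun a b hab => by simpa using hab)]
      exact Finset.card_range _)
  · intro x _ y _ hxy
    simp only [Finset.disjoint_left, Finset.mem_image]
    rintro p ⟨a, _, rfl⟩ ⟨b, _, hb⟩
    simp only [Prod.mk.injEq] at hb
    exact hxy (by omega)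




lemma sum_eval {m n D : ℕ} (hmD : ∀ d, d < D → m*(d+1) ≤ n) :
    ((∑ d ∈ range D, (n - m*(d+1)) : ℕ) : ℤ) * (2*m)
      = 2*m*D*n - m^2*D^2 - m^2*D := by
  have h1 : ((∑ d ∈ range D, (n - m*(d+1)) : ℕ) : ℤ)
      = ∑ d ∈ range D, ((n:ℤ) - (m:ℤ)*((d:ℤ)+1)) := by
    rw [Nat.cast_sum]
    refine Finset.sum_congr rfl (fun d hd => ?_)
    have h := hmD d (Finset.mem_range.1 hd)
    rw [Nat.cast_sub h]
    push_cast
    ring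
  have h3 : (∑ d ∈ range D, (d:ℤ)) * 2 = (D:ℤ)^2 - D := by
    have := Finset.sum_range_id_mul_two D
    have hc : ((∑ i ∈ range D, i : ℕ) : ℤ) * 2 = ((D * (D-1) : ℕ) : ℤ) := by
      exact_mod_cast congrArg (Nat.cast (R := ℤ)) this
    rw [Nat.cast_sum] at hc
    cases D with
    | zero => simp
    | succ D' =>
      rw [hc]
      push_cast [Nat.succ_sub_one]
      ring
  rw [h1, Finset.sum_sub_distrib, Finset.sum_const, Finset.card_range, ← Finset.mul_sum,
    Finset.sum_add_distrib, Finset.sum_const, Finset.card_range, nsmul_eq_mul, nsmul_eq_mul]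
  nlinarith [h3]

lemma card_A_eq {k n : ℕ} (hk : 1 < k) (hn : 0 < n) :
    (∑ d ∈ range n, (n - (k-1)*(d+1))) * (2*(k-1))
      = (n - n % (k-1)) * (n + n % (k-1) + 1 - k) := by
  set m := k - 1 with hmdef
  have hm : 0 < m := by omega
  by_cases hnm : n ≤ m
  · have hz : ∑ d ∈ range n, (n - m*(d+1)) = 0 :=
      Finset.sum_eq_zero (fun d _ => Nat.sub_eq_zero_of_le
        (le_trans hnm (Nat.le_mul_of_pos_right m (by omega))))
    rw [hz]
    rcases Nat.lt_or_ge n m with h | h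
    · rw [Nat.mod_eq_of_lt h]; simp
    · have hnm' : n = m := le_antisymm hnm h
      rw [hnm', Nat.mod_self]
      have h1 : m + 0 + 1 - k = 0 := by omega
      rw [h1, Nat.mul_zero, Nat.zero_mul]
  · push_neg at hnm
    have hqr := Nat.div_add_mod n m
    set q := n / m with hq
    set r' := n % m with hr'
    have hrm : r' < m := Nat.mod_lt _ hm
    -- determine D
    have hD : ∃ D : ℕ, (∀ d, d < D → m*(d+1) ≤ n) ∧ (∀ d, D ≤ d → n ≤ m*(d+1)) ∧
        ((0 < r' ∧ D = q) ∨ (r' = 0 ∧ D + 1 = q)) := by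
      rcases Nat.eq_zero_or_pos r' with h0 | hpos
      · refine ⟨q - 1, ?_, ?_, Or.inr ⟨h0, ?_⟩⟩
        · intro d hd
          have : d + 1 ≤ q - 1 := by omega
          calc m * (d+1) ≤ m * (q-1) := Nat.mul_le_mul_left m this
            _ ≤ m * q := Nat.mul_le_mul_left m (by omega)
            _ = n := by omega
        · intro d hd
          have h1 : q ≤ d + 1 := by omega
          calc n = m * q := by omega
            _ ≤ m * (d+1) := Nat.mul_le_mul_left m h1
        · have hq1 : 1 ≤ q := (Nat.one_le_div_iff hm).2 (le_of_lt hnm)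
          omega
      · refine ⟨q, ?_, ?_, Or.inl ⟨hpos, rfl⟩⟩
        · intro d hd
          have : d + 1 ≤ q := by omega
          calc m * (d+1) ≤ m * q := Nat.mul_le_mul_left m this
            _ ≤ n := by omega
        · intro d hd
          have h1 : q + 1 ≤ d + 1 := by omega
          calc n = m * q + r' := by omega
            _ ≤ m * q + m := by omega
            _ = m * (q + 1) := by ring
            _ ≤ m * (d+1) := Nat.mul_le_mul_left m h1
    obtain ⟨D, hD1, hD2, hDval⟩ := hD
    have hDn : D ≤ n := by
      by_contra h
      push_neg at h
      have h2 := hD1 n h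
      have h3 : n < m * (n + 1) := by nlinarith
      omega
    have hsum : ∑ d ∈ range n, (n - m*(d+1)) = ∑ d ∈ range D, (n - m*(d+1)) := by
      refine (Finset.sum_subset (Finset.range_subset_range.2 hDn) (fun d _ hd => ?_)).symm
      exact Nat.sub_eq_zero_of_le (hD2 d (by simpa using hd))
    rw [hsum]
    -- cast to ℤ
    have key := sum_eval hD1
    have hk' : (k:ℤ) = (m:ℤ) + 1 := by
      have : k = m + 1 := by omega
      exact_mod_cast this
    have hn' : (n:ℤ) = (m:ℤ)*(q:ℤ) + (r':ℤ) := by exact_mod_cast hqr.symm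
    have hz : ((∑ d ∈ range D, (n - m*(d+1)) : ℕ) : ℤ) * (2*(m:ℤ))
        = ((n:ℤ) - r')*((n:ℤ) + r' + 1 - k) := by
      rw [key]
      rcases hDval with ⟨hpos, rfl⟩ | ⟨hr0, hD1q⟩
      · rw [hn', hk']; ring
      · have hq' : (q:ℤ) = (D:ℤ) + 1 := by exact_mod_cast hD1q.symm
        have hr0' : (r':ℤ) = 0 := by exact_mod_cast hr0
        rw [hn', hk', hq', hr0']; ring
    have c1 : r' ≤ n := Nat.mod_le n m
    have c2 : k ≤ n + r' + 1 := by omega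
    have hrhs : (((n - r') * (n + r' + 1 - k) : ℕ) : ℤ)
        = ((n:ℤ) - r')*((n:ℤ) + r' + 1 - k) := by
      rw [Nat.cast_mul, Nat.cast_sub c1, Nat.cast_sub c2]
      push_cast
      ring
    rw [← hrhs] at hz
    exact_mod_cast hz




def S (k n : ℕ) : Finset (ℕ × ℕ × ℕ) :=
  ((range (k-1)) ×ˢ ((range n) ×ˢ (range n))).filter
    (fun x => x.1 * (n-1) ≤ (k-1) * x.2.1 ∧ x.2.1 < x.2.2 ∧
      (x.1 + 1 < k - 1 → (k-1) * x.2.2 < (x.1+1)*(n-1)))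

lemma mem_S {k n : ℕ} {t i j : ℕ} :
    (t, i, j) ∈ S k n ↔ (t < k - 1 ∧ i < n ∧ j < n) ∧
      t * (n-1) ≤ (k-1) * i ∧ i < j ∧
      (t + 1 < k - 1 → (k-1) * j < (t+1)*(n-1)) := by
  unfold S
  simp [Finset.mem_filter, Finset.mem_product, and_assoc]

lemma key1 {k n t i j : ℕ} (hk : 1 < k) (h : (t, i, j) ∈ S k n) :
    t * j ≤ (t+1) * i := by
  obtain ⟨⟨ht, hi, hj⟩, c1, c2, c3⟩ := mem_S.1 h
  have hm : 0 < k - 1 := by omega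
  have hmul : (k-1) * (t * j) ≤ (k-1) * ((t+1) * i) := by
    rcases Nat.lt_or_ge (t+1) (k-1) with hcase | hcase
    · have h3 := c3 hcase
      calc (k-1) * (t * j) = t * ((k-1) * j) := by ring
        _ ≤ t * ((t+1)*(n-1)) := Nat.mul_le_mul_left t (le_of_lt h3)
        _ = (t+1) * (t * (n-1)) := by ring
        _ ≤ (t+1) * ((k-1) * i) := Nat.mul_le_mul_left (t+1) c1
        _ = (k-1) * ((t+1) * i) := by ring
    · have hte : t + 1 = k - 1 := by omega
      calc (k-1) * (t * j) = t * ((k-1) * j) := by ring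
        _ ≤ t * ((k-1) * (n-1)) := Nat.mul_le_mul_left t (Nat.mul_le_mul_left _ (by omega))
        _ = t * ((t+1) * (n-1)) := by rw [hte]
        _ = (t+1) * (t * (n-1)) := by ring
        _ ≤ (t+1) * ((k-1) * i) := Nat.mul_le_mul_left (t+1) c1
        _ = (k-1) * ((t+1) * i) := by ring
  exact Nat.le_of_mul_le_mul_left hmul hm

lemma key2 {k n t i j : ℕ} (hk : 1 < k) (hn : 0 < n) (h : (t, i, j) ∈ S k n) :
    ((t+1) * i - t * j) + (k-1)*(j-i) < n := by
  obtain ⟨⟨ht, hi, hj⟩, c1, c2, c3⟩ := mem_S.1 h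
  have hm : 0 < k - 1 := by omega
  have hk1 := key1 hk h
  have hij : i ≤ j := le_of_lt c2
  have h1n : 1 ≤ n := hn
  have h1k : 1 ≤ k := by omega
  zify [hk1, hij, h1n, h1k] at c1 ⊢
  have hXN : ((t:ℤ)+1) * i - t * j + ((k:ℤ)-1)*((j:ℤ)-(i:ℤ)) ≤ (n:ℤ) - 1 := by
    rcases Nat.lt_or_ge (t+1) (k-1) with hcase | hcase
    · have h3 := c3 hcase
      zify [h1n, h1k] at h3
      have hc : ((t:ℤ)+1) - ((k:ℤ)-1) ≤ 0 := by
        have : (t:ℤ) + 1 ≤ (k:ℤ) - 1 := by exact_mod_cast (by omega : t + 1 ≤ k - 1)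
        linarith
      have e1 : (((t:ℤ)+1) - ((k:ℤ)-1)) * (((k:ℤ)-1)*i) ≤ (((t:ℤ)+1) - ((k:ℤ)-1)) * ((t:ℤ)*((n:ℤ)-1)) :=
        mul_le_mul_of_nonpos_left c1 hc
      have e2 : (((k:ℤ)-1) - t) * (((k:ℤ)-1)*j) ≤ (((k:ℤ)-1) - t) * (((t:ℤ)+1)*((n:ℤ)-1) - 1) := by
        apply mul_le_mul_of_nonneg_left (by linarith) (by linarith)
      have hMt : (t:ℤ) + 1 < (k:ℤ) - 1 := by omega
      have hM : (0:ℤ) < (k:ℤ) - 1 := by omega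
      nlinarith [e1, e2, hMt, hM]
    · have hte : t + 1 = k - 1 := by omega
      have hte' : (t:ℤ) + 1 = (k:ℤ) - 1 := by omega
      have hjn : (j:ℤ) ≤ (n:ℤ) - 1 := by omega
      nlinarith [hjn, hte']
  linarith





lemma S_no_two {k n t i j t' i' j' : ℕ} (hk : 1 < k) (hn : 0 < n)
    (hx : (t, i, j) ∈ S k n) (hx' : (t', i', j') ∈ S k n)
    (haz : ((t:ℤ)+1)*i - t*j = ((t':ℤ)+1)*i' - t'*j')
    (hdz : (j:ℤ) - i = (j':ℤ) - i') (hlt : t < t') : False := by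
  obtain ⟨⟨ht, hi, hj⟩, c1, c2, c3⟩ := mem_S.1 hx
  obtain ⟨⟨ht', hi', hj'⟩, c1', c2', c3'⟩ := mem_S.1 hx'
  have h1n : 1 ≤ n := hn
  have h1k : 1 ≤ k := by omega
  have h3 : (k-1) * j < (t+1)*(n-1) := c3 (by omega)
  zify [h1n, h1k] at h3 c1'
  have k1 := key1 hk hx
  zify at k1
  set K : ℤ := (k:ℤ) - 1 with hKdef
  set N : ℤ := (n:ℤ) - 1 with hNdef
  set a : ℤ := ((t:ℤ)+1)*i - t*j with hadef
  set d : ℤ := (j:ℤ) - i with hddef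
  set c : ℤ := K*d - N with hcdef
  have hK : (0:ℤ) < K := by simp only [hKdef]; omega
  have ha_nonneg : (0:ℤ) ≤ a := by simp only [hadef]; linarith
  have hF1 : K*a + ((t:ℤ)+1)*c < 0 := by
    have idF1 : K*a + ((t:ℤ)+1)*c = K*(j:ℤ) - ((t:ℤ)+1)*N := by
      simp only [hadef, hcdef, hddef]; ring
    linarith [h3]
  have hI' : (i':ℤ) = a + (t':ℤ)*d := by
    have : (i':ℤ) = (((t':ℤ)+1)*i' - t'*j') + (t':ℤ)*((j':ℤ) - i') := by ring
    rw [← haz, ← hdz] at this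
    simpa [hadef, hddef] using this
  have hF2 : (0:ℤ) ≤ K*a + (t':ℤ)*c := by
    have idF2 : K*a + (t':ℤ)*c = K*(a + (t':ℤ)*d) - (t':ℤ)*N := by
      simp only [hcdef]; ring
    rw [idF2, ← hI']
    linarith [c1']
  have htp : (0:ℤ) < (t:ℤ) + 1 := by positivity
  have hKa : (0:ℤ) ≤ K * a := mul_nonneg hK.le ha_nonneg
  have hc : c < 0 := by nlinarith [hF1, hKa, htp]
  have hlt' : (t:ℤ) + 1 ≤ (t':ℤ) := by omega
  have he : (t':ℤ)*c ≤ ((t:ℤ)+1)*c := mul_le_mul_of_nonpos_right hlt' hc.le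
  linarith

lemma S_card_le_A {k n : ℕ} (hk : 1 < k) (hn : 0 < n) :
    (S k n).card ≤ (A k n).card := by
  apply Finset.card_le_card_of_injOn (fun x => ((x.1+1)*x.2.1 - x.1*x.2.2, x.2.2 - x.2.1))
  · rintro ⟨t, i, j⟩ hx
    rw [Finset.mem_coe, mem_A hk]
    obtain ⟨⟨ht, hi, hj⟩, c1, c2, c3⟩ := mem_S.1 hx
    constructor
    · simp only; omega
    · simpa using key2 hk hn hx
  · rintro ⟨t, i, j⟩ hx ⟨t', i', j'⟩ hx' heq
    simp only [Finset.mem_coe] at hx hx'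
    simp only [Prod.mk.injEq] at heq
    obtain ⟨ha, hd⟩ := heq
    have k1 := key1 hk hx
    have k1' := key1 hk hx'
    have hij : i ≤ j := le_of_lt (mem_S.1 hx).2.2.1
    have hij' : i' ≤ j' := le_of_lt (mem_S.1 hx').2.2.1
    zify [k1, k1'] at ha
    zify [hij, hij'] at hd
    have htt : t = t' := by
      rcases lt_trichotomy t t' with h | h | h
      · exact absurd (S_no_two hk hn hx hx' ha hd h) (by simp)
      · exact h
      · exact absurd (S_no_two hk hn hx' hx ha.symm hd.symm h) (by simp)
    subst htt
    have hii : (i:ℤ) = (i':ℤ) := by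
      have e1 : (i:ℤ) = (((t:ℤ)+1)*i - t*j) + (t:ℤ)*((j:ℤ) - i) := by ring
      have e2 : (i':ℤ) = (((t:ℤ)+1)*i' - t*j') + (t:ℤ)*((j':ℤ) - i') := by ring
      rw [e1, e2, ha, hd]
    have : i = i' := by exact_mod_cast hii
    subst this
    have : j = j' := by omega
    subst this
    rfl





noncomputable def idx {n : ℕ} (V : Finset ℝ) (hV : V.card = n) (y : ℝ) : ℕ :=
  if h : y ∈ V then ((V.orderIsoOfFin hV).symm ⟨y, h⟩ : Fin n) else 0

lemma idx_lt {n : ℕ} {V : Finset ℝ} (hV : V.card = n) {y : ℝ} (hy : y ∈ V) :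
    idx V hV y < n := by
  unfold idx
  rw [dif_pos hy]
  exact ((V.orderIsoOfFin hV).symm ⟨y, hy⟩).isLt

lemma idx_strictMono {n : ℕ} {V : Finset ℝ} (hV : V.card = n) {y y' : ℝ}
    (hy : y ∈ V) (hy' : y' ∈ V) (h : y < y') : idx V hV y < idx V hV y' := by
  unfold idx
  rw [dif_pos hy, dif_pos hy']
  have : ((V.orderIsoOfFin hV).symm ⟨y, hy⟩) < ((V.orderIsoOfFin hV).symm ⟨y', hy'⟩) := by
    rw [OrderIso.lt_iff_lt]
    exact Subtype.mk_lt_mk.2 h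
  exact this

lemma idx_inj {n : ℕ} {V : Finset ℝ} (hV : V.card = n) {y y' : ℝ}
    (hy : y ∈ V) (hy' : y' ∈ V) (h : idx V hV y = idx V hV y') : y = y' := by
  rcases lt_trichotomy y y' with hc | hc | hc
  · exact absurd h (ne_of_lt (idx_strictMono hV hy hy' hc))
  · exact hc
  · exact absurd h.symm (ne_of_lt (idx_strictMono hV hy' hy hc))

noncomputable def iot {n : ℕ} (V : Finset ℝ) (hV : V.card = n) (a d : ℝ) (s : ℕ) : ℕ :=
  idx V hV (a + (s:ℝ) * d)

noncomputable def tch (k : ℕ) {n : ℕ} (V : Finset ℝ) (hV : V.card = n) (a d : ℝ) : ℕ :=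
  Nat.findGreatest (fun s => s * (n-1) ≤ (k-1) * iot V hV a d s) (k-2)

noncomputable def chiAD (k : ℕ) {n : ℕ} (V : Finset ℝ) (hV : V.card = n) (a d : ℝ) : ℕ × ℕ × ℕ :=
  (tch k V hV a d, iot V hV a d (tch k V hV a d), iot V hV a d (tch k V hV a d + 1))

noncomputable def chi (k : ℕ) {n : ℕ} (V : Finset ℝ) (hV : V.card = n) (P : Finset ℝ) : ℕ × ℕ × ℕ :=
  if hne : P.Nonempty then
    chiAD k V hV (P.min' hne) ((P.max' hne - P.min' hne) / ((k - 1 : ℕ) : ℝ))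
  else (0,0,0)


lemma chi_ap {k n : ℕ} {V : Finset ℝ} (hV : V.card = n) (hk : 1 < k) {a d : ℝ} (hd : 0 < d) :
    chi k V hV (ap k a d) = chiAD k V hV a d := by
  have h0 : 0 < k := by omega
  have hne := ap_nonempty h0 a d
  unfold chi
  rw [dif_pos hne]
  have hmin : (ap k a d).min' hne = a := ap_min' h0 hd
  have hmax : (ap k a d).max' hne = a + ((k - 1 : ℕ) : ℝ) * d := ap_max' h0 hd
  rw [hmin, hmax]
  have hK : ((k - 1 : ℕ) : ℝ) ≠ 0 := by
    have : 0 < k - 1 := by omega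
    positivity
  have hsimp : (a + ((k - 1 : ℕ) : ℝ) * d - a) = ((k - 1 : ℕ) : ℝ) * d := by ring
  rw [hsimp, mul_div_cancel_left₀ d hK]






lemma iot_mono {n : ℕ} {V : Finset ℝ} (hV : V.card = n) {a d : ℝ} (hd : 0 < d)
    {k : ℕ} (hmem : ∀ s, s < k → a + (s:ℝ)*d ∈ V) {s s' : ℕ} (hss : s < s') (hs'k : s' < k) :
    iot V hV a d s < iot V hV a d s' := by
  apply idx_strictMono hV (hmem s (by omega)) (hmem s' hs'k)
  have : (s:ℝ) < (s':ℝ) := by exact_mod_cast hss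
  nlinarith

lemma chiAD_mem_S {k n : ℕ} (hk : 1 < k) {V : Finset ℝ} (hV : V.card = n) {a d : ℝ}
    (hd : 0 < d) (hmem : ∀ s, s < k → a + (s:ℝ)*d ∈ V) :
    chiAD k V hV a d ∈ S k n := by
  set ι := iot V hV a d with hι
  set t := tch k V hV a d with htdef
  have htle : t ≤ k - 2 := Nat.findGreatest_le _
  have hfg : Nat.findGreatest (fun s => s * (n-1) ≤ (k-1) * iot V hV a d s) (k-2) = t := by
    rw [htdef]; rfl
  have hPt : t * (n-1) ≤ (k-1) * ι t := by
    have h2 : (fun s => s * (n-1) ≤ (k-1) * iot V hV a d s)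
        (Nat.findGreatest (fun s => s * (n-1) ≤ (k-1) * iot V hV a d s) (k-2)) :=
      Nat.findGreatest_spec (P := fun s => s * (n-1) ≤ (k-1) * iot V hV a d s)
        (m := 0) (n := k - 2) (Nat.zero_le _) (by simp)
    rw [hfg] at h2
    exact h2
  show (t, ι t, ι (t+1)) ∈ S k n
  rw [mem_S]
  refine ⟨⟨by omega, idx_lt hV (hmem t (by omega)), idx_lt hV (hmem (t+1) (by omega))⟩,
    hPt, iot_mono hV hd hmem (by omega) (by omega), ?_⟩
  intro hlt
  have hng := Nat.findGreatest_is_greatest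
    (P := fun s => s * (n-1) ≤ (k-1) * iot V hV a d s) (n := k - 2)
    (by rw [hfg]; omega) (by omega : t + 1 ≤ k - 2)
  exact not_le.1 hng

lemma chiAD_inj {k n : ℕ} (hk : 1 < k) {V : Finset ℝ} (hV : V.card = n) {a d a' d' : ℝ}
    (hd : 0 < d) (hd' : 0 < d')
    (hmem : ∀ s, s < k → a + (s:ℝ)*d ∈ V) (hmem' : ∀ s, s < k → a' + (s:ℝ)*d' ∈ V)
    (heq : chiAD k V hV a d = chiAD k V hV a' d') : a = a' ∧ d = d' := by
  unfold chiAD at heq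
  simp only [Prod.mk.injEq] at heq
  obtain ⟨ht, hi, hj⟩ := heq
  rw [← ht] at hi hj
  set t := tch k V hV a d with htdef
  have htle : t ≤ k - 2 := Nat.findGreatest_le _
  have e0 : a + (t:ℝ)*d = a' + (t:ℝ)*d' :=
    idx_inj hV (hmem t (by omega)) (hmem' t (by omega)) hi
  have e1 : a + ((t+1:ℕ):ℝ)*d = a' + ((t+1:ℕ):ℝ)*d' :=
    idx_inj hV (hmem (t+1) (by omega)) (hmem' (t+1) (by omega)) hj
  push_cast at e1
  have hdd : d = d' := by linarith
  rw [hdd] at e0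
  exact ⟨by linarith, hdd⟩

lemma F_le_S {k n : ℕ} (hk : 1 < k) (hn : 0 < n) (V : Finset ℝ) (hV : V.card = n) :
    ((V.powersetCard k).filter
        (fun P => ∃ a d : ℝ, 0 < d ∧
          P = (Finset.range k).image (fun i => a + (i : ℝ) * d))).card ≤ (S k n).card := by
  apply Finset.card_le_card_of_injOn (chi k V hV)
  · intro P hP
    rw [Finset.mem_coe, Finset.mem_filter, Finset.mem_powersetCard] at hP
    obtain ⟨⟨hsub, hcard⟩, aw, dw, hdw, hPeq⟩ := hP
    have hPap : P = ap k aw dw := hPeq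
    rw [hPap, chi_ap hV hk hdw]
    apply chiAD_mem_S hk hV hdw
    intro s hs
    apply hsub
    rw [hPap]
    exact mem_ap hs
  · intro P hP Q hQ heq
    simp only [Finset.mem_coe, Finset.mem_filter, Finset.mem_powersetCard] at hP hQ
    obtain ⟨⟨hsubP, hcardP⟩, aP, dP, hdP, hPeq⟩ := hP
    obtain ⟨⟨hsubQ, hcardQ⟩, aQ, dQ, hdQ, hQeq⟩ := hQ
    have hPap : P = ap k aP dP := hPeq
    have hQap : Q = ap k aQ dQ := hQeq
    rw [hPap, hQap, chi_ap hV hk hdP, chi_ap hV hk hdQ] at heq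
    have hmemP : ∀ s, s < k → aP + (s:ℝ)*dP ∈ V := fun s hs => hsubP (by rw [hPap]; exact mem_ap hs)
    have hmemQ : ∀ s, s < k → aQ + (s:ℝ)*dQ ∈ V := fun s hs => hsubQ (by rw [hQap]; exact mem_ap hs)
    obtain ⟨ha, hd⟩ := chiAD_inj hk hV hdP hdQ hmemP hmemQ heq
    rw [hPap, hQap, ha, hd]



noncomputable def V0 (n : ℕ) : Finset ℝ := (Finset.range n).image (fun i => (i : ℝ))

lemma V0_eq (n : ℕ) : V0 n = (range n).image (fun i : ℕ => (i:ℝ)) := by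
  ext y; unfold V0; simp

lemma V0_card (n : ℕ) : (V0 n).card = n := by
  rw [V0_eq, Finset.card_image_of_injective _ Nat.cast_injective, Finset.card_range]

lemma ap_eq_image (k : ℕ) (a d : ℝ) :
    ap k a d = (range k).image (fun i : ℕ => a + (i:ℝ)*d) := by
  ext y
  rw [mem_ap_iff]
  simp [Finset.mem_image]

lemma ap_card {k : ℕ} {a d : ℝ} (hd : 0 < d) : (ap k a d).card = k := by
  rw [ap_eq_image, Finset.card_image_of_injOn, Finset.card_range]
  intro u hu v hv huv
  simp only at huv
  have : (u:ℝ) * d = (v:ℝ) * d := by linarith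
  have := mul_right_cancel₀ (ne_of_gt hd) this
  exact_mod_cast this

lemma A_le_F0 {k n : ℕ} (hk : 1 < k) (hn : 0 < n) :
    (A k n).card ≤ (((V0 n).powersetCard k).filter
      (fun P => ∃ a d : ℝ, 0 < d ∧
        P = (Finset.range k).image (fun i => a + (i : ℝ) * d))).card := by
  apply Finset.card_le_card_of_injOn (fun x => ap k (x.1 : ℝ) (x.2 : ℝ))
  · rintro ⟨a, e⟩ hx
    rw [Finset.mem_coe, mem_A hk] at hx
    obtain ⟨he, hlt⟩ := hx
    simp only at he hlt
    rw [Finset.mem_coe, Finset.mem_filter, Finset.mem_powersetCard]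
    refine ⟨⟨?_, ap_card (by exact_mod_cast he)⟩, (a:ℝ), (e:ℝ), by exact_mod_cast he, rfl⟩
    intro y hy
    obtain ⟨i, hi, rfl⟩ := mem_ap_iff.1 hy
    rw [V0_eq]
    have hin : a + i * e < n := by
      have h1 : i * e ≤ (k-1) * e := Nat.mul_le_mul_right e (by omega)
      omega
    refine Finset.mem_image.2 ⟨a + i * e, Finset.mem_range.2 hin, by push_cast; ring⟩
  · rintro ⟨a, e⟩ hx ⟨a', e'⟩ hx' heq
    simp only [Finset.mem_coe] at hx hx'
    rw [mem_A hk] at hx hx'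
    have he : (0:ℝ) < (e:ℝ) := by exact_mod_cast hx.1
    have he' : (0:ℝ) < (e':ℝ) := by exact_mod_cast hx'.1
    obtain ⟨h1, h2⟩ := ap_inj hk he he' heq
    have : a = a' := by exact_mod_cast h1
    have : e = e' := by exact_mod_cast h2
    simp_all

end Stmt4Aux

open Stmt4Aux in
theorem stmt_4 (k n : ℕ) (hk : 1 < k) (hn : 0 < n) (r : ℕ) (hr : r = n % (k - 1)) :
    (∀ V : Finset ℝ, V.card = n →
      ((V.powersetCard k).filter
          (fun P => ∃ a d : ℝ, 0 < d ∧
            P = (Finset.range k).image (fun i => a + (i : ℝ) * d))).card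
        ≤ (n - r) * (n + r + 1 - k) / (2 * (k - 1)))
    ∧
    ((((Finset.range n).image (fun i => (i : ℝ))).powersetCard k).filter
        (fun P => ∃ a d : ℝ, 0 < d ∧
          P = (Finset.range k).image (fun i => a + (i : ℝ) * d))).card
      = (n - r) * (n + r + 1 - k) / (2 * (k - 1)) := by
  have hm : 0 < 2 * (k - 1) := by omega
  have hRHS : (n - r) * (n + r + 1 - k) / (2 * (k - 1)) = (A k n).card := by
    rw [hr, ← card_A_eq hk hn, ← card_A]
    exact (Nat.mul_div_cancel _ hm)
  constructor
  · intro V hV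
    rw [hRHS]
    exact le_trans (F_le_S hk hn V hV) (S_card_le_A hk hn)
  · rw [hRHS]
    apply le_antisymm
    · exact le_trans (F_le_S hk hn (V0 n) (V0_card n)) (S_card_le_A hk hn)
    · exact A_le_F0 hk hn
end

section
/- Let n ≥ 3 be odd and let E and O be nonempty finite sets where E consists of consecutive even integers, O consists of consecutive odd integers, E and O have the same barycenter (arithmetic mean), and |E| + |O| = n with E ∩ O = ∅. Then the set V = E ∪ O contains exactly (n-1)²/4 three-term arithmetic progressions, i.e., V is optimal for 3-term arithmetic progressions. -/
attribute [local instance] Classical.propDecidable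

private lemma sum_ap (a : ℤ) (m : ℕ) :
    ∑ i ∈ Finset.range m, (a + 2*(i:ℤ)) = m*a + m*(m-1) := by
  induction m with
  | zero => simp
  | succ k ih => rw [Finset.sum_range_succ, ih]; push_cast; ring

private lemma rank_sum (W : Finset ℤ) :
    2 * (∑ m ∈ W, (W.filter (fun x => x < m)).card) = W.card * (W.card - 1) := by
  have h1 : ∑ m ∈ W, (W.filter (fun x => x < m)).card
      = ∑ m ∈ W, (W.filter (fun x => m < x)).card := by
    simp only [Finset.card_filter]
    exact Finset.sum_comm
  have h2 : ∀ m ∈ W, (W.filter (fun x => x < m)).card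
      + (W.filter (fun x => m < x)).card + 1 = W.card := by
    intro m hm
    have hh := Finset.card_filter_add_card_filter_not (s := W) (p := fun x => x < m)
    have h3 : W.filter (fun x => ¬ x < m) = insert m (W.filter (fun x => m < x)) := by
      ext y
      simp only [Finset.mem_filter, Finset.mem_insert, not_lt]
      constructor
      · rintro ⟨hy, hmy⟩
        rcases eq_or_lt_of_le hmy with h | h
        · exact Or.inl h.symm
        · exact Or.inr ⟨hy, h⟩
      · rintro (rfl | ⟨hy, h⟩)
        exacts [⟨hm, le_refl _⟩, ⟨hy, le_of_lt h⟩]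
    rw [h3, Finset.card_insert_of_notMem (by simp)] at hh
    omega
  rw [two_mul]
  nth_rewrite 2 [h1]
  rw [← Finset.sum_add_distrib]
  have h4 : ∀ m ∈ W, (W.filter (fun x => x < m)).card + (W.filter (fun x => m < x)).card
      = W.card - 1 := fun m hm => by have := h2 m hm; omega
  rw [Finset.sum_congr rfl h4, Finset.sum_const, smul_eq_mul]

theorem stmt_5 (n : ℕ) (hn : 3 ≤ n) (hodd : Odd n)
    (E O : Finset ℤ)
    (hE : ∃ (a : ℤ) (m : ℕ), Even a ∧ 0 < m ∧
      E = (Finset.range m).image (fun i => a + 2 * (i : ℤ)))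
    (hO : ∃ (a : ℤ) (m : ℕ), Odd a ∧ 0 < m ∧
      O = (Finset.range m).image (fun i => a + 2 * (i : ℤ)))
    (hdisj : Disjoint E O)
    (hcard : E.card + O.card = n)
    (hbary : (∑ x ∈ E, x) * O.card = (∑ x ∈ O, x) * E.card) :
    (((E ∪ O).powersetCard 3).filter
        (fun P => ∃ a d : ℤ, 0 < d ∧ P = {a, a + d, a + 2 * d})).card
      = (n - 1) ^ 2 / 4 := by
  obtain ⟨a, p, ha, hp, hEeq⟩ := hE
  obtain ⟨b, q, hb, hq, hOeq⟩ := hO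
  have hEeq' : E = (Finset.range p).image (fun i : ℕ => a + 2 * (i : ℤ)) := by
    rw [hEeq]; ext x; simp
  have hOeq' : O = (Finset.range q).image (fun i : ℕ => b + 2 * (i : ℤ)) := by
    rw [hOeq]; ext x; simp
  have hinj : ∀ (t : ℤ), Function.Injective (fun i : ℕ => t + 2*(i:ℤ)) := by
    intro t i j h
    simp only at h
    omega
  have hEcard : E.card = p := by
    rw [hEeq', Finset.card_image_of_injective _ (hinj a), Finset.card_range]
  have hOcard : O.card = q := by
    rw [hOeq', Finset.card_image_of_injective _ (hinj b), Finset.card_range]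
  have hEsum : ∑ x ∈ E, x = p*a + p*((p:ℤ)-1) := by
    rw [hEeq', Finset.sum_image (fun i _ j _ h => hinj a h)]
    exact sum_ap a p
  have hOsum : ∑ x ∈ O, x = q*b + q*((q:ℤ)-1) := by
    rw [hOeq', Finset.sum_image (fun i _ j _ h => hinj b h)]
    exact sum_ap b q
  -- barycenter condition gives a + p = b + q
  have hpq : a + p = b + q := by
    rw [hEsum, hOsum, hEcard, hOcard] at hbary
    have h2 : ((a + p) - (b + q)) * ((p:ℤ) * q) = 0 := by linear_combination hbary
    rcases mul_eq_zero.mp h2 with h | h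
    · omega
    · have hq' : (q:ℤ) ≠ 0 := by exact_mod_cast hq.ne'
      have hp' : (p:ℤ) ≠ 0 := by exact_mod_cast hp.ne'
      exact absurd h (mul_ne_zero hp' hq')
  set c : ℤ := a + p - 1 with hcdef
  have ha2 : a % 2 = 0 := Int.even_iff.mp ha
  have hb2 : b % 2 = 1 := Int.odd_iff.mp hb
  have hmemV : ∀ x : ℤ, (x ∈ E ∪ O ↔
      (x % 2 = 0 ∧ c - ((p:ℤ)-1) ≤ x ∧ x ≤ c + ((p:ℤ)-1)) ∨
      (x % 2 = 1 ∧ c - ((q:ℤ)-1) ≤ x ∧ x ≤ c + ((q:ℤ)-1))) := by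
    intro x
    rw [Finset.mem_union, hEeq', hOeq']
    simp only [Finset.mem_image, Finset.mem_range]
    constructor
    · rintro (⟨i, hi, rfl⟩ | ⟨i, hi, rfl⟩)
      · left; omega
      · right; omega
    · rintro (⟨h1, h2, h3⟩ | ⟨h1, h2, h3⟩)
      · exact Or.inl ⟨((x-a)/2).toNat, by omega, by omega⟩
      · exact Or.inr ⟨((x-b)/2).toNat, by omega, by omega⟩
  set V := E ∪ O with hVdef
  have hVcard : V.card = n := by
    rw [hVdef, Finset.card_union_of_disjoint hdisj, hcard]
  have hL : ∀ x m : ℤ, x ∈ V → x < m → m ≤ c → 2*m - x ∈ V := by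
    intro x m hx hxm hmc
    rw [hmemV] at hx ⊢
    omega
  have hL' : ∀ x m : ℤ, x ∈ V → m < x → c ≤ m → 2*m - x ∈ V := by
    intro x m hx hxm hmc
    rw [hmemV] at hx ⊢
    omega
  have hsym : ∀ x : ℤ, x ∈ V → 2*c - x ∈ V := by
    intro x hx
    rw [hmemV] at hx ⊢
    omega
  have hcV : c ∈ V := by
    rw [hmemV]
    omega
  -- bijection with pairs (m, x) : x is left endpoint, m midpoint
  have key : ((V ×ˢ V).filter (fun z => z.2 < z.1 ∧ 2*z.1 - z.2 ∈ V)).card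
      = ((V.powersetCard 3).filter
          (fun P => ∃ a d : ℤ, 0 < d ∧ P = {a, a + d, a + 2 * d})).card := by
    apply Finset.card_bij (fun z _ => ({z.2, z.1, 2*z.1 - z.2} : Finset ℤ))
    · rintro ⟨m, x⟩ hz
      simp only [Finset.mem_filter, Finset.mem_product] at hz
      obtain ⟨⟨hm, hx⟩, hxm, he⟩ := hz
      rw [Finset.mem_filter, Finset.mem_powersetCard]
      refine ⟨⟨?_, ?_⟩, x, m - x, by omega, ?_⟩
      · intro t ht
        simp only [Finset.mem_insert, Finset.mem_singleton] at ht
        rcases ht with rfl | rfl | rfl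
        exacts [hx, hm, he]
      · exact Finset.card_eq_three.mpr ⟨x, m, 2*m - x, by omega, by omega, by omega, rfl⟩
      · have e1 : x + (m - x) = m := by ring
        have e2 : x + 2*(m - x) = 2*m - x := by ring
        rw [e1, e2]
    · rintro ⟨m1, x1⟩ h1 ⟨m2, x2⟩ h2 heq
      simp only [Finset.mem_filter, Finset.mem_product] at h1 h2
      dsimp only at heq
      have H := Finset.ext_iff.mp heq
      have A := H x1
      have B := H m1
      have C := H x2
      have D := H m2
      have Ee := H (2*m1 - x1)
      have Ff := H (2*m2 - x2)
      simp only [Finset.mem_insert, Finset.mem_singleton, true_or, or_true, true_iff, iff_true] at A B C D Ee Ff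
      have hx : m1 = m2 ∧ x1 = x2 := by omega
      simp only [Prod.mk.injEq]
      exact hx
    · intro P hP
      rw [Finset.mem_filter, Finset.mem_powersetCard] at hP
      obtain ⟨⟨hsub, hc3⟩, α, d, hd, rfl⟩ := hP
      have h1 : α ∈ V := hsub (by simp)
      have h2 : α + d ∈ V := hsub (by simp)
      have h3 : α + 2*d ∈ V := hsub (by simp)
      refine ⟨(α + d, α), ?_, ?_⟩
      · simp only [Finset.mem_filter, Finset.mem_product]
        refine ⟨⟨h2, h1⟩, by omega, ?_⟩
        have e : 2*(α+d) - α = α + 2*d := by ring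
        rw [e]; exact h3
      · have e : 2*(α+d) - α = α + 2*d := by ring
        rw [e]
  rw [← key]
  -- decompose into sum over midpoints
  have hsum1 : ((V ×ˢ V).filter (fun z => z.2 < z.1 ∧ 2*z.1 - z.2 ∈ V)).card
      = ∑ m ∈ V, (V.filter (fun x => x < m ∧ 2*m - x ∈ V)).card := by
    rw [Finset.card_filter, Finset.sum_product]
    refine Finset.sum_congr rfl (fun m _ => ?_)
    rw [Finset.card_filter]
  rw [hsum1]
  -- per-midpoint counts
  have hbelow : ∀ m : ℤ, m ≤ c → (V.filter (fun x => x < m ∧ 2*m - x ∈ V))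
      = V.filter (fun x => x < m) := by
    intro m hmc
    apply Finset.filter_congr
    intro x hx
    exact ⟨fun h => h.1, fun h => ⟨h, hL x m hx h hmc⟩⟩
  have habove : ∀ m : ℤ, c < m → (V.filter (fun x => x < m ∧ 2*m - x ∈ V)).card
      = (V.filter (fun x => m < x)).card := by
    intro m hmc
    apply Finset.card_bij' (fun x _ => 2*m - x) (fun y _ => 2*m - y)
    · intro x hx
      simp only [Finset.mem_filter] at hx ⊢
      exact ⟨hx.2.2, by omega⟩
    · intro y hy
      simp only [Finset.mem_filter] at hy ⊢
      refine ⟨hL' y m hy.1 hy.2 (le_of_lt hmc), by omega, ?_⟩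
      have e : 2*m - (2*m - y) = y := by ring
      rw [e]; exact hy.1
    · intro x hx; ring
    · intro y hy; ring
  have hrefl : ∀ m : ℤ, (V.filter (fun x => m < x)).card
      = (V.filter (fun x => x < 2*c - m)).card := by
    intro m
    apply Finset.card_bij' (fun x _ => 2*c - x) (fun y _ => 2*c - y)
    · intro x hx
      simp only [Finset.mem_filter] at hx ⊢
      exact ⟨hsym x hx.1, by omega⟩
    · intro y hy
      simp only [Finset.mem_filter] at hy ⊢
      exact ⟨hsym y hy.1, by omega⟩
    · intro x hx; ring
    · intro y hy; ring
  set k := (V.filter (fun x => x < c)).card with hkdef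
  -- cardinality split : n = 2k+1
  have hins : V.filter (fun x => ¬ x < c) = insert c (V.filter (fun x => c < x)) := by
    ext x
    simp only [Finset.mem_filter, Finset.mem_insert, not_lt]
    constructor
    · rintro ⟨hx, hcx⟩
      rcases eq_or_lt_of_le hcx with h | h
      · exact Or.inl h.symm
      · exact Or.inr ⟨hx, h⟩
    · rintro (rfl | ⟨hx, h⟩)
      exacts [⟨hcV, le_refl _⟩, ⟨hx, le_of_lt h⟩]
  have hgtk : (V.filter (fun x => c < x)).card = k := by
    rw [hrefl c, hkdef]
    congr 1
    apply Finset.filter_congr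
    intro x _
    constructor <;> intro h <;> omega
  have hnk : n = 2*k + 1 := by
    have hh := Finset.card_filter_add_card_filter_not (s := V) (p := fun x => x < c)
    rw [hins, Finset.card_insert_of_notMem (by simp), hgtk, hVcard] at hh
    omega
  -- the main sum
  have hVltmem : ∀ m ∈ V.filter (fun x => x < c), m ∈ V ∧ m < c := by
    intro m hm
    simpa only [Finset.mem_filter] using hm
  have hmain : ∑ m ∈ V, (V.filter (fun x => x < m ∧ 2*m - x ∈ V)).card
      = k + 2 * ∑ m ∈ V.filter (fun x => x < c), (V.filter (fun x => x < m)).card := by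
    rw [← Finset.sum_filter_add_sum_filter_not V (fun x => x < c)]
    have hA : ∑ m ∈ V.filter (fun x => x < c), (V.filter (fun x => x < m ∧ 2*m - x ∈ V)).card
        = ∑ m ∈ V.filter (fun x => x < c), (V.filter (fun x => x < m)).card := by
      refine Finset.sum_congr rfl (fun m hm => ?_)
      rw [hbelow m (le_of_lt (hVltmem m hm).2)]
    have hB : ∑ m ∈ V.filter (fun x => ¬ x < c), (V.filter (fun x => x < m ∧ 2*m - x ∈ V)).card
        = k + ∑ m ∈ V.filter (fun x => x < c), (V.filter (fun x => x < m)).card := by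
      rw [hins, Finset.sum_insert (by simp)]
      have hgc : (V.filter (fun x => x < c ∧ 2*c - x ∈ V)).card = k := by
        rw [hbelow c (le_refl c)]
      rw [hgc]
      congr 1
      have hC : ∑ m ∈ V.filter (fun x => c < x), (V.filter (fun x => x < m ∧ 2*m - x ∈ V)).card
          = ∑ m ∈ V.filter (fun x => c < x), (V.filter (fun x => x < 2*c - m)).card := by
        refine Finset.sum_congr rfl (fun m hm => ?_)
        have hm' : c < m := (Finset.mem_filter.mp hm).2
        rw [habove m hm', hrefl m]
      rw [hC]
      apply Finset.sum_nbij' (i := fun m => 2*c - m) (j := fun m => 2*c - m)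
      · intro x hx
        simp only [Finset.mem_filter] at hx ⊢
        exact ⟨hsym x hx.1, by omega⟩
      · intro x hx
        simp only [Finset.mem_filter] at hx ⊢
        exact ⟨hsym x hx.1, by omega⟩
      · intro x _; ring
      · intro x _; ring
      · intro x _; rfl
    rw [hA, hB]
    ring
  rw [hmain]
  -- rank sum over the lower half
  have hW : ∀ m ∈ V.filter (fun x => x < c), (V.filter (fun x => x < m)).card
      = ((V.filter (fun x => x < c)).filter (fun x => x < m)).card := by
    intro m hm
    obtain ⟨hmV, hmc⟩ := hVltmem m hm
    congr 1
    rw [Finset.filter_filter]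
    apply Finset.filter_congr
    intro x _
    constructor
    · intro h; exact ⟨by omega, h⟩
    · intro h; exact h.2
  rw [Finset.sum_congr rfl hW]
  have hrs := rank_sum (V.filter (fun x => x < c))
  rw [← hkdef] at hrs
  -- finish
  have hk1 : 1 ≤ k := by omega
  have hfin : (n - 1) ^ 2 / 4 = k * k := by
    have h1 : n - 1 = 2 * k := by omega
    rw [h1]
    have h2 : (2 * k) ^ 2 = 4 * (k * k) := by ring
    rw [h2, Nat.mul_div_cancel_left _ (by norm_num)]
  rw [hfin, hrs]
  have hKK : ∀ K : ℕ, K + K * (K - 1) = K * K := by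
    intro K
    cases K with
    | zero => rfl
    | succ j => simp [Nat.succ_sub_one]; ring
  exact hKK k
end

section
/- Let n ≥ 3 be odd and suppose V is an n-point subset of ℝ containing the maximum possible number (n-1)²/4 of 3-term arithmetic progressions, normalized so that its middle point (the ((n+1)/2)-th smallest) is 0 and the next point is 1. Then V is symmetric about 0, i.e., V = -V. -/
attribute [local instance] Classical.propDecidable

lemma triple_eq {y1 x1 z1 y2 x2 z2 : ℝ} (h1 : y1 < x1) (h2 : x1 < z1)
    (h3 : y2 < x2) (h4 : x2 < z2)
    (he : ({y1, x1, z1} : Finset ℝ) = {y2, x2, z2}) : y1 = y2 ∧ x1 = x2 ∧ z1 = z2 := by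
  have m1 : y1 = y2 ∨ y1 = x2 ∨ y1 = z2 := by
    have : y1 ∈ ({y2, x2, z2} : Finset ℝ) := he ▸ (by simp)
    simpa using this
  have m2 : y2 = y1 ∨ y2 = x1 ∨ y2 = z1 := by
    have : y2 ∈ ({y1, x1, z1} : Finset ℝ) := he ▸ (by simp)
    simpa using this
  have m3 : z1 = y2 ∨ z1 = x2 ∨ z1 = z2 := by
    have : z1 ∈ ({y2, x2, z2} : Finset ℝ) := he ▸ (by simp)
    simpa using this
  have m4 : z2 = y1 ∨ z2 = x1 ∨ z2 = z1 := by
    have : z2 ∈ ({y1, x1, z1} : Finset ℝ) := he ▸ (by simp)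
    simpa using this
  have m5 : x1 = y2 ∨ x1 = x2 ∨ x1 = z2 := by
    have : x1 ∈ ({y2, x2, z2} : Finset ℝ) := he ▸ (by simp)
    simpa using this
  have hy : y1 = y2 := by
    have a1 : y2 ≤ y1 := by rcases m1 with h|h|h <;> linarith
    have a2 : y1 ≤ y2 := by rcases m2 with h|h|h <;> linarith
    linarith
  have hz : z1 = z2 := by
    have a1 : z1 ≤ z2 := by rcases m3 with h|h|h <;> linarith
    have a2 : z2 ≤ z1 := by rcases m4 with h|h|h <;> linarith
    linarith
  refine ⟨hy, ?_, hz⟩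
  rcases m5 with h|h|h
  · exfalso; linarith [hy ▸ h1]
  · exact h
  · exfalso; linarith [hz ▸ h2]

lemma sum_min_eq (m : ℕ) : ∑ i ∈ Finset.range (2*m+1), min i (2*m - i) = m * m := by
  induction m with
  | zero => simp
  | succ m ih =>
    have h1 : 2*(m+1)+1 = (2*m+1) + 1 + 1 := by ring
    rw [h1, Finset.sum_range_succ, Finset.sum_range_succ]
    have h2 : ∑ i ∈ Finset.range (2*m+1), min i (2*(m+1) - i)
        = ∑ i ∈ Finset.range (2*m+1), (min i (2*m - i) + if m+1 ≤ i then 2 else 0) := by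
      apply Finset.sum_congr rfl
      intro i hi
      simp only [Finset.mem_range] at hi
      split_ifs with h <;> omega
    rw [h2, Finset.sum_add_distrib, ih]
    have h3 : ∑ i ∈ Finset.range (2*m+1), (if m+1 ≤ i then 2 else 0) = 2 * m := by
      rw [← Finset.sum_filter]
      have h4 : (Finset.range (2*m+1)).filter (fun i => m+1 ≤ i) = Finset.Ico (m+1) (2*m+1) := by
        ext i; simp [Finset.mem_Ico]; omega
      rw [h4, Finset.sum_const, Nat.card_Ico, smul_eq_mul]
      omega
    rw [h3]
    have : min (2*m+1) (2*(m+1) - (2*m+1)) = 1 := by omega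
    rw [this]
    have : min (2*m+1+1) (2*(m+1) - (2*m+1+1)) = 0 := by omega
    rw [this]
    ring

lemma stepA (V : Finset ℝ) :
    ((V.powersetCard 3).filter
        (fun P => ∃ a d : ℝ, 0 < d ∧ P = {a, a + d, a + 2 * d})).card
    = ∑ x ∈ V, (V.filter (fun y => y < x ∧ 2*x - y ∈ V)).card := by
  classical
  have hbij : ((V ×ˢ V).filter (fun p => p.2 < p.1 ∧ 2*p.1 - p.2 ∈ V)).card
      = ((V.powersetCard 3).filter
        (fun P => ∃ a d : ℝ, 0 < d ∧ P = {a, a + d, a + 2 * d})).card := by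
    apply Finset.card_bij (fun p _ => ({p.2, p.1, 2*p.1 - p.2} : Finset ℝ))
    · intro p hp
      simp only [Finset.mem_filter, Finset.mem_product] at hp
      obtain ⟨⟨hp1, hp2⟩, hlt, hp3⟩ := hp
      have h23 : p.1 < 2*p.1 - p.2 := by linarith
      rw [Finset.mem_filter, Finset.mem_powersetCard]
      refine ⟨⟨?_, ?_⟩, p.2, p.1 - p.2, by linarith, ?_⟩
      · intro a ha
        simp only [Finset.mem_insert, Finset.mem_singleton] at ha
        rcases ha with rfl|rfl|rfl <;> assumption
      · have n1 : p.2 ≠ p.1 := ne_of_lt hlt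
        have n2 : p.1 ≠ 2*p.1 - p.2 := ne_of_lt h23
        have n3 : p.2 ≠ 2*p.1 - p.2 := by intro h; exact absurd (by linarith : p.2 = p.1) n1
        rw [Finset.card_insert_of_notMem (by simp [n1, n3]),
          Finset.card_insert_of_notMem (by simp [n2]), Finset.card_singleton]
      · have e1 : p.2 + (p.1 - p.2) = p.1 := by ring
        have e2 : p.2 + 2 * (p.1 - p.2) = 2*p.1 - p.2 := by ring
        rw [e1, e2]
    · intro p hp q hq heq
      simp only [Finset.mem_filter, Finset.mem_product] at hp hq
      have hp23 : p.1 < 2*p.1 - p.2 := by linarith [hp.2.1]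
      have hq23 : q.1 < 2*q.1 - q.2 := by linarith [hq.2.1]
      obtain ⟨e2, e1, _⟩ := triple_eq hp.2.1 hp23 hq.2.1 hq23 heq
      exact Prod.ext e1 e2
    · intro P hP
      simp only [Finset.mem_filter, Finset.mem_powersetCard] at hP
      obtain ⟨⟨hsub, hcard⟩, a, d, hd, rfl⟩ := hP
      refine ⟨(a + d, a), ?_, ?_⟩
      · simp only [Finset.mem_filter, Finset.mem_product]
        refine ⟨⟨hsub (by simp), hsub (by simp)⟩, by simp [hd], ?_⟩
        have : 2*(a+d) - a = a + 2*d := by ring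
        rw [this]
        exact hsub (by simp)
      · have : 2*(a+d) - a = a + 2*d := by ring
        rw [this]
  rw [← hbij]
  rw [Finset.card_eq_sum_card_fiberwise
    (f := Prod.fst) (t := V)
    (fun p hp => (Finset.mem_product.mp (Finset.mem_filter.mp hp).1).1)]
  apply Finset.sum_congr rfl
  intro x hx
  have hfib : ((V ×ˢ V).filter (fun p => p.2 < p.1 ∧ 2*p.1 - p.2 ∈ V)).filter
      (fun p => p.1 = x) = {x} ×ˢ (V.filter (fun y => y < x ∧ 2*x - y ∈ V)) := by
    ext ⟨u, v⟩
    simp only [Finset.mem_filter, Finset.mem_product, Finset.mem_singleton]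
    constructor
    · rintro ⟨⟨⟨hu, hv⟩, hlt, hm⟩, rfl⟩
      exact ⟨rfl, hv, hlt, hm⟩
    · rintro ⟨rfl, hv, hlt, hm⟩
      exact ⟨⟨⟨hx, hv⟩, hlt, hm⟩, rfl⟩
  rw [hfib, Finset.card_product, Finset.card_singleton, one_mul]

theorem stmt_6 (n : ℕ) (hn : 3 ≤ n) (hodd : Odd n)
    (V : Finset ℝ) (hV : V.card = n)
    (hopt : ((V.powersetCard 3).filter
        (fun P => ∃ a d : ℝ, 0 < d ∧ P = {a, a + d, a + 2 * d})).card
      = (n - 1) ^ 2 / 4)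
    (h0 : (0 : ℝ) ∈ V)
    (hmid : (V.filter (fun x => x < (0 : ℝ))).card = (n - 1) / 2)
    (h1 : (1 : ℝ) ∈ V)
    (hnext : ∀ x ∈ V, 0 < x → 1 ≤ x) :
    ∀ x : ℝ, x ∈ V ↔ -x ∈ V := by
  classical
  obtain ⟨m, hm⟩ := hodd
  -- L and R counts
  set L : ℝ → ℕ := fun x => (V.filter (fun y => y < x)).card with hLdef
  set R : ℝ → ℕ := fun x => (V.filter (fun y => x < y)).card with hRdef
  set f : ℝ → ℕ := fun x => (V.filter (fun y => y < x ∧ 2*x - y ∈ V)).card with hfdef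
  -- L x + R x = 2m for x ∈ V
  have key : ∀ x ∈ V, L x + R x = 2 * m := by
    intro x hx
    have hdisj : Disjoint (V.filter (fun y => y < x)) (V.filter (fun y => x < y)) := by
      rw [Finset.disjoint_left]
      intro a ha hb
      simp only [Finset.mem_filter] at ha hb
      linarith [ha.2, hb.2]
    have hun : V.filter (fun y => y < x) ∪ V.filter (fun y => x < y) = V.erase x := by
      ext a
      simp only [Finset.mem_union, Finset.mem_filter, Finset.mem_erase]
      constructor
      · rintro (⟨ha, h⟩|⟨ha, h⟩)
        · exact ⟨by intro he; subst he; linarith, ha⟩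
        · exact ⟨by intro he; subst he; linarith, ha⟩
      · rintro ⟨hne, ha⟩
        rcases lt_trichotomy a x with h|h|h
        · exact Or.inl ⟨ha, h⟩
        · exact absurd h hne
        · exact Or.inr ⟨ha, h⟩
    have := Finset.card_union_of_disjoint hdisj
    rw [hun, Finset.card_erase_of_mem hx, hV] at this
    simp only [hLdef, hRdef]
    omega
  -- f x ≤ L x
  have hfL : ∀ x, f x ≤ L x := by
    intro x
    apply Finset.card_le_card
    intro y hy
    simp only [Finset.mem_filter] at hy ⊢
    exact ⟨hy.1, hy.2.1⟩
  -- f x ≤ R x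
  have hfR : ∀ x, f x ≤ R x := by
    intro x
    apply Finset.card_le_card_of_injOn (fun y => 2*x - y)
    · intro y hy
      have hy' := Finset.mem_filter.mp hy
      exact Finset.mem_filter.mpr ⟨hy'.2.2, by linarith [hy'.2.1]⟩
    · intro a _ b _ h
      dsimp at h
      linarith
  -- L strictly monotone on V
  have hLmono : ∀ x ∈ V, ∀ y, x < y → L x < L y := by
    intro x hx y hxy
    apply Finset.card_lt_card
    rw [Finset.ssubset_iff_of_subset]
    · exact ⟨x, by simp [Finset.mem_filter, hx, hxy], by simp⟩
    · intro z hz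
      simp only [Finset.mem_filter] at hz ⊢
      exact ⟨hz.1, by linarith [hz.2]⟩
  have hLinj : ∀ x ∈ V, ∀ y ∈ V, L x = L y → x = y := by
    intro x hx y hy h
    rcases lt_trichotomy x y with hl|hl|hl
    · exact absurd h (Nat.ne_of_lt (hLmono x hx y hl))
    · exact hl
    · exact absurd h.symm (Nat.ne_of_lt (hLmono y hy x hl))
  -- L x ≤ 2m
  have hLle : ∀ x ∈ V, L x ≤ 2 * m := by
    intro x hx
    have : L x + R x = 2 * m := key x hx
    omega
  -- sum of min bound
  have hminbound : ∑ x ∈ V, min (L x) (R x) ≤ m * m := by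
    have e1 : ∑ x ∈ V, min (L x) (R x) = ∑ x ∈ V, min (L x) (2*m - L x) := by
      apply Finset.sum_congr rfl
      intro x hx
      have := key x hx
      omega
    have e2 : ∑ i ∈ V.image L, min i (2*m - i) = ∑ x ∈ V, min (L x) (2*m - L x) :=
      Finset.sum_image hLinj
    rw [e1, ← e2]
    calc ∑ i ∈ V.image L, min i (2*m - i)
        ≤ ∑ i ∈ Finset.range (2*m+1), min i (2*m - i) := by
          apply Finset.sum_le_sum_of_subset
          intro i hi
          simp only [Finset.mem_image] at hi
          obtain ⟨x, hx, rfl⟩ := hi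
          simp only [Finset.mem_range]
          exact Nat.lt_succ_of_le (hLle x hx)
      _ = m * m := sum_min_eq m
  -- total sum equals m*m
  have htot : ∑ x ∈ V, f x = m * m := by
    rw [← stepA V] at *
    rw [hopt]
    have hn1 : n - 1 = 2 * m := by omega
    rw [hn1]
    have : (2*m)^2 = 4 * (m*m) := by ring
    rw [this]
    omega
  -- termwise equality
  have hle : ∀ x ∈ V, f x ≤ min (L x) (R x) := fun x _ => le_min (hfL x) (hfR x)
  have hsums : ∑ x ∈ V, f x = ∑ x ∈ V, min (L x) (R x) := by
    have h1 : ∑ x ∈ V, f x ≤ ∑ x ∈ V, min (L x) (R x) := Finset.sum_le_sum hle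
    omega
  have heach := (Finset.sum_eq_sum_iff_of_le hle).mp hsums
  -- at x = 0
  have hL0 : L 0 = m := by
    simp only [hLdef]
    rw [hmid]
    omega
  have hR0 : R 0 = m := by have := key 0 h0; omega
  have hf0 : f 0 = m := by
    have := heach 0 h0
    rw [hL0, hR0] at this
    simpa using this
  -- the negative part maps into V under negation
  have hnegset : V.filter (fun y => y < 0 ∧ 2*(0:ℝ) - y ∈ V) = V.filter (fun y => y < (0:ℝ)) := by
    apply Finset.eq_of_subset_of_card_le
    · intro y hy
      simp only [Finset.mem_filter] at hy ⊢
      exact ⟨hy.1, hy.2.1⟩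
    · have h2 : (V.filter (fun y => y < (0:ℝ))).card = m := by rw [hmid]; omega
      have h3 : (V.filter (fun y => y < 0 ∧ 2*(0:ℝ) - y ∈ V)).card = m := hf0
      omega
  have hneg : ∀ y ∈ V, y < 0 → -y ∈ V := by
    intro y hy hlt
    have : y ∈ V.filter (fun y => y < 0 ∧ 2*(0:ℝ) - y ∈ V) := by
      rw [hnegset]; simp [Finset.mem_filter, hy, hlt]
    simp only [Finset.mem_filter] at this
    have h2 := this.2.2
    have : 2*(0:ℝ) - y = -y := by ring
    rwa [this] at h2
  -- positives card
  have hposcard : (V.filter (fun y => (0:ℝ) < y)).card = m := hR0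
  have hnegcard : (V.filter (fun y => y < (0:ℝ))).card = m := by rw [hmid]; omega
  have himg : (V.filter (fun y => y < (0:ℝ))).image (fun y => -y)
      = V.filter (fun y => (0:ℝ) < y) := by
    apply Finset.eq_of_subset_of_card_le
    · intro z hz
      simp only [Finset.mem_image, Finset.mem_filter] at hz ⊢
      obtain ⟨y, ⟨hy, hylt⟩, rfl⟩ := hz
      exact ⟨hneg y hy hylt, by linarith⟩
    · rw [hposcard, Finset.card_image_of_injOn (fun a _ b _ h => by linarith [h]), hnegcard]
  have hpos : ∀ z ∈ V, 0 < z → -z ∈ V := by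
    intro z hz hlt
    have : z ∈ (V.filter (fun y => y < (0:ℝ))).image (fun y => -y) := by
      rw [himg]; simp [Finset.mem_filter, hz, hlt]
    simp only [Finset.mem_image, Finset.mem_filter] at this
    obtain ⟨y, ⟨hy, _⟩, rfl⟩ := this
    simpa using hy
  have hsym : ∀ v ∈ V, -v ∈ V := by
    intro v hv
    rcases lt_trichotomy v 0 with h|h|h
    · exact hneg v hv h
    · subst h; simpa using h0
    · exact hpos v hv h
  intro x
  constructor
  · exact hsym x
  · intro h
    have := hsym _ h
    rwa [neg_neg] at this
end

section
/- Let n ≥ k ≥ 4 with (k-1) dividing n, and let V = {0, 2, 3, 4, …, n} (an (n+1)-term arithmetic progression of consecutive integers with the second point removed, so |V| = n). Then V contains exactly n(n-k+1)/(2(k-1)) k-term arithmetic progressions, i.e., V is optimal for k-term arithmetic progressions among n-point sets. -/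
attribute [local instance] Classical.propDecidable

open Finset

private def apF (k a d : ℕ) : Finset ℕ := (Finset.range k).image (fun i => a + i * d)

private lemma apF_mem_iff {k a d x : ℕ} : x ∈ apF k a d ↔ ∃ i < k, x = a + i * d := by
  simp [apF, eq_comm]

private lemma apF_card {k a d : ℕ} (hd : 0 < d) : (apF k a d).card = k := by
  rw [apF, Finset.card_image_of_injective _ ?_, Finset.card_range]
  intro i j h
  exact Nat.eq_of_mul_eq_mul_right hd (Nat.add_left_cancel h)

private lemma apF_self_mem {k a d : ℕ} (hk : 0 < k) : a ∈ apF k a d :=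
  apF_mem_iff.2 ⟨0, hk, by simp⟩

private lemma apF_top_mem {k a d : ℕ} (hk : 0 < k) : a + (k - 1) * d ∈ apF k a d :=
  apF_mem_iff.2 ⟨k - 1, by omega, rfl⟩

private lemma apF_le {k a d x : ℕ} (hx : x ∈ apF k a d) : a ≤ x ∧ x ≤ a + (k - 1) * d := by
  obtain ⟨i, hi, rfl⟩ := apF_mem_iff.1 hx
  refine ⟨Nat.le_add_right _ _, Nat.add_le_add_left (Nat.mul_le_mul_right d (by omega)) a⟩

private lemma apF_inj {k a d a' d' : ℕ} (hk : 2 ≤ k) (hd : 0 < d) (hd' : 0 < d')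
    (h : apF k a d = apF k a' d') : a = a' ∧ d = d' := by
  have ha : a = a' := by
    have h1 := (apF_le (h ▸ apF_self_mem (d := d') (a := a') (by omega))).1
    have h2 := (apF_le (h.symm ▸ apF_self_mem (d := d) (a := a) (by omega))).1
    omega
  subst ha
  have h1 := (apF_le (h ▸ apF_top_mem (d := d') (a := a) (by omega))).2
  have h2 := (apF_le (h.symm ▸ apF_top_mem (d := d) (a := a) (by omega))).2
  have h3 : (k - 1) * d = (k - 1) * d' := by omega
  exact ⟨rfl, Nat.eq_of_mul_eq_mul_left (by omega) h3⟩

private lemma gauss (t : ℕ) : 2 * ∑ d ∈ Finset.Icc 1 t, d = t * (t + 1) := by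
  induction t with
  | zero => simp
  | succ t ih =>
    rw [Finset.sum_Icc_succ_top (by omega), Nat.mul_add, ih]
    ring

theorem stmt_7 (n k : ℕ) (hk : 4 ≤ k) (hkn : k ≤ n) (hdvd : (k - 1) ∣ n)
    (V : Finset ℕ) (hVdef : V = insert 0 (Finset.Icc 2 n)) :
    ((V.powersetCard k).filter
        (fun P => ∃ a d : ℕ, 0 < d ∧
          P = (Finset.range k).image (fun i => a + i * d))).card
      = n * (n - k + 1) / (2 * (k - 1)) := by
  obtain ⟨m, rfl⟩ : ∃ m, k = m + 1 := ⟨k - 1, by omega⟩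
  simp only [Nat.add_sub_cancel] at hdvd ⊢
  obtain ⟨D, hD⟩ := hdvd
  have hm3 : 3 ≤ m := by omega
  have hD2 : 2 ≤ D := by
    rcases Nat.lt_or_ge D 2 with h | h
    · interval_cases D <;> omega
    · exact h
  have hVmem : ∀ x, x ∈ V ↔ x ≤ n ∧ x ≠ 1 := by
    intro x
    subst hVdef
    simp only [Finset.mem_insert, Finset.mem_Icc]
    omega
  set Q : Finset (ℕ × ℕ) := (Finset.Icc 1 D ×ˢ Finset.range (n + 1)).filter
      (fun p => p.2 + m * p.1 ≤ n ∧ p.2 ≠ 1 ∧ ¬(p.2 = 0 ∧ p.1 = 1)) with hQ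
  set F : ℕ × ℕ → Finset ℕ := fun p => apF (m + 1) p.2 p.1 with hF
  have hSQ : ((V.powersetCard (m + 1)).filter
        (fun P => ∃ a d : ℕ, 0 < d ∧
          P = (Finset.range (m + 1)).image (fun i => a + i * d))) = Q.image F := by
    ext P
    simp only [Finset.mem_filter, Finset.mem_powersetCard, Finset.mem_image, hQ,
      Finset.mem_product, Finset.mem_Icc, Finset.mem_range]
    constructor
    · rintro ⟨⟨hPV, hPcard⟩, a, d, hd, rfl⟩
      have hsub : ∀ x ∈ apF (m + 1) a d, x ≤ n ∧ x ≠ 1 := by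
        intro x hx
        exact (hVmem x).1 (hPV hx)
      have htop : a + m * d ≤ n := by
        have h := (hsub _ (apF_top_mem (by omega))).1
        simp only [Nat.add_sub_cancel] at h
        exact h
      have hself := hsub _ (apF_self_mem (k := m + 1) (d := d) (by omega))
      have hdD : d ≤ D := by
        have h1 : m * d ≤ m * D := by omega
        exact Nat.le_of_mul_le_mul_left h1 (by omega)
      refine ⟨(d, a), ⟨⟨⟨hd, hdD⟩, by omega⟩, htop, hself.2, ?_⟩, rfl⟩
      rintro ⟨rfl, rfl⟩
      have h1 : (1 : ℕ) ∈ apF (m + 1) 0 1 := apF_mem_iff.2 ⟨1, by omega, by simp⟩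
      exact (hsub _ h1).2 rfl
    · rintro ⟨⟨d, a⟩, ⟨⟨⟨hd1, hdD⟩, han⟩, hle, ha1, h01⟩, rfl⟩
      dsimp only at hd1 hdD han hle ha1 h01
      simp only [hF]
      refine ⟨⟨?_, apF_card hd1⟩, a, d, hd1, rfl⟩
      intro x hx
      obtain ⟨i, hi, rfl⟩ := apF_mem_iff.1 hx
      rw [hVmem]
      constructor
      · have h2 : i * d ≤ m * d := Nat.mul_le_mul_right d (by omega)
        omega
      · intro hcon
        rcases Nat.eq_zero_or_pos i with rfl | hipos
        · simp at hcon; omega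
        · have hp : 0 < i * d := Nat.mul_pos hipos hd1
          have hdle : d ≤ i * d := Nat.le_mul_of_pos_left d hipos
          exact h01 ⟨by omega, by omega⟩
  rw [hSQ, Finset.card_image_of_injOn]
  swap
  · intro p hp p' hp' h
    simp only [hQ, Finset.mem_coe, Finset.mem_filter, Finset.mem_product, Finset.mem_Icc] at hp hp'
    have := apF_inj (k := m + 1) (by omega) (by omega : 0 < p.1) (by omega : 0 < p'.1) h
    exact Prod.ext this.2 this.1
  set A : ℕ → Finset ℕ := fun d => (Finset.range (n + 1)).filter
      (fun a => a + m * d ≤ n ∧ a ≠ 1 ∧ ¬(a = 0 ∧ d = 1)) with hA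
  have hfib : Q.card = ∑ d ∈ Finset.Icc 1 D, (A d).card := by
    rw [Finset.card_eq_sum_card_fiberwise (f := Prod.fst) (t := Finset.Icc 1 D)
      (fun p hp => by
        replace hp : p ∈ Q := hp
        simp only [hQ, Finset.mem_filter, Finset.mem_product] at hp
        exact hp.1.1)]
    refine Finset.sum_congr rfl (fun d hd => ?_)
    simp only [Finset.mem_Icc] at hd
    have : Q.filter (fun p => p.1 = d) = (A d).image (fun a => (d, a)) := by
      ext ⟨d', a⟩
      simp only [hQ, hA, Finset.mem_filter, Finset.mem_product, Finset.mem_Icc,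
        Finset.mem_range, Finset.mem_image, Prod.mk.injEq]
      constructor
      · rintro ⟨⟨⟨hd', han⟩, hle, ha1, h01⟩, rfl⟩
        exact ⟨a, ⟨han, hle, ha1, h01⟩, rfl, rfl⟩
      · rintro ⟨a', ⟨han, hle, ha1, h01⟩, rfl, rfl⟩
        exact ⟨⟨⟨hd, han⟩, hle, ha1, h01⟩, rfl⟩
    rw [this, Finset.card_image_of_injective _ (fun a b h => by
      simpa using congrArg Prod.snd h)]
  rw [hfib]
  have hnm : m * (D - 1) + m = n := by
    calc m * (D - 1) + m = m * (D - 1 + 1) := by ring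
      _ = m * D := by rw [Nat.sub_add_cancel (by omega)]
      _ = n := hD.symm
  have hA1 : A 1 = Finset.Icc 2 (n - m) := by
    ext a
    simp only [hA, Finset.mem_filter, Finset.mem_range, Finset.mem_Icc, and_true]
    omega
  have hAD : A D = {0} := by
    ext a
    simp only [hA, Finset.mem_filter, Finset.mem_range, Finset.mem_singleton]
    omega
  have hAmid : ∀ d ∈ Finset.Icc 2 (D - 1), (A d).card = n - m * d := by
    intro d hd
    simp only [Finset.mem_Icc] at hd
    have hbd : m * d + m * (D - d) = n := by
      rw [← Nat.mul_add, Nat.add_sub_cancel' (by omega), ← hD]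
    have hmono : m * d + m ≤ n := by
      have h1 : 1 ≤ D - d := by omega
      have h2 : m * 1 ≤ m * (D - d) := Nat.mul_le_mul_left m h1
      omega
    have : A d = insert 0 (Finset.Icc 2 (n - m * d)) := by
      ext a
      simp only [hA, Finset.mem_filter, Finset.mem_range, Finset.mem_insert, Finset.mem_Icc]
      omega
    rw [this, Finset.card_insert_of_notMem (by simp), Nat.card_Icc]
    omega
  have hsplit : Finset.Icc 1 D = insert 1 (insert D (Finset.Icc 2 (D - 1))) := by
    ext x
    simp only [Finset.mem_Icc, Finset.mem_insert]
    omega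
  rw [hsplit, Finset.sum_insert (by simp [Finset.mem_Icc]; omega),
    Finset.sum_insert (by simp [Finset.mem_Icc]; omega), hA1, hAD, Nat.card_Icc,
    Finset.card_singleton, Finset.sum_congr rfl hAmid]
  have hmid2 : ∑ d ∈ Finset.Icc 2 (D - 1), (n - m * d)
      = m * ∑ d ∈ Finset.Icc 2 (D - 1), (D - d) := by
    rw [Finset.mul_sum]
    refine Finset.sum_congr rfl (fun d hd => ?_)
    simp only [Finset.mem_Icc] at hd
    have hbd : m * d + m * (D - d) = n := by
      rw [← Nat.mul_add, Nat.add_sub_cancel' (by omega), ← hD]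
    omega
  rw [hmid2]
  have hre : ∑ d ∈ Finset.Icc 2 (D - 1), (D - d) = ∑ j ∈ Finset.Icc 1 (D - 2), j := by
    refine Finset.sum_nbij' (fun d => D - d) (fun j => D - j) ?_ ?_ ?_ ?_ ?_ <;>
      intro x hx <;> simp only [Finset.mem_Icc] at * <;> omega
  rw [hre]
  have hT := gauss (D - 2)
  set T := ∑ j ∈ Finset.Icc 1 (D - 2), j with hTdef
  have hnk : n - (m + 1) + 1 = m * (D - 1) := by omega
  have htotal : 2 * ((n - m + 1 - 2) + (1 + m * T)) = m * (D * (D - 1)) := by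
    obtain ⟨E, rfl⟩ : ∃ E, D = E + 2 := ⟨D - 2, by omega⟩
    have h1 : E + 2 - 1 = E + 1 := by omega
    have h2 : E + 2 - 2 = E := by omega
    rw [h1] at hnm
    rw [h2] at hT
    have h4 : 1 ≤ m * (E + 1) := Nat.mul_pos (by omega) (by omega)
    have h6 : (n - m + 1 - 2) + (1 + m * T) = m * (E + 1) + m * T := by omega
    rw [h6, h1]
    have h7 : 2 * (m * (E + 1) + m * T) = 2 * (m * (E + 1)) + m * (2 * T) := by ring
    rw [h7, hT]
    ring
  refine (Nat.div_eq_of_eq_mul_left (by omega) ?_).symm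
  rw [hnk]
  conv_lhs => rw [hD]
  calc m * D * (m * (D - 1)) = (m * (D * (D - 1))) * m := by ring
    _ = (2 * ((n - m + 1 - 2) + (1 + m * T))) * m := by rw [htotal]
    _ = ((n - m + 1 - 2) + (1 + m * T)) * (2 * m) := by ring
end

section
/- Let n ≥ k ≥ 4 with r the remainder of n divided by k-1 satisfying 0 < r < k-1. Then the set V = {0, 2, 3, …, n} (of size n) contains strictly fewer than (n-r)(n+r-k+1)/(2(k-1)) k-term arithmetic progressions; i.e., removing the second point of an (n+1)-term progression is not optimal when (k-1) does not divide n. -/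
attribute [local instance] Classical.propDecidable

private lemma sum_aux8 (m n : ℕ) : ∀ q : ℕ, m * q ≤ n →
    2 * (∑ d ∈ Finset.Icc 1 q, (n - m * d)) + m * (q * (q + 1)) = 2 * q * n := by
  intro q
  induction q with
  | zero => simp
  | succ q ih =>
    intro hq
    have h1 : m * q ≤ n := le_trans (Nat.mul_le_mul_left m (Nat.le_succ q)) hq
    rw [Finset.sum_Icc_succ_top (by omega)]
    have ih' := ih h1
    zify [hq] at ih' ⊢
    linear_combination ih'

theorem stmt_8 (n k : ℕ) (hk : 4 ≤ k) (hkn : k ≤ n)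
    (r : ℕ) (hr : r = n % (k - 1)) (hrpos : 0 < r)
    (V : Finset ℕ) (hVdef : V = insert 0 (Finset.Icc 2 n)) :
    ((V.powersetCard k).filter
        (fun P => ∃ a d : ℕ, 0 < d ∧
          P = (Finset.range k).image (fun i => a + i * d))).card
      < (n - r) * (n + r + 1 - k) / (2 * (k - 1)) := by
  set m := k - 1 with hm
  have hm3 : 3 ≤ m := by omega
  set q := n / m with hqdef
  have hn : m * q + r = n := by rw [hr, hqdef]; exact Nat.div_add_mod n m
  have hrm : r < m := by rw [hr]; exact Nat.mod_lt n (by omega)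
  have hq1 : 1 ≤ q := by
    rw [hqdef]; exact Nat.one_le_div_iff (by omega) |>.mpr (by omega)
  have hmqn : m * q ≤ n := by omega
  -- integer versions
  have hnZ : (m : ℤ) * q + r = n := by exact_mod_cast hn
  have hkZ : (k : ℤ) = m + 1 := by
    have : k = m + 1 := by omega
    exact_mod_cast this
  -- e = q(q-1)/2
  set e := q * (q - 1) / 2 with he
  have h2e : 2 * e = q * (q - 1) := by
    have hev : Even (q * (q - 1)) := by
      have h : q * (q - 1) = (q - 1) * ((q - 1) + 1) := by
        rw [Nat.sub_add_cancel hq1]; ring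
      rw [h]; exact Nat.even_mul_succ_self _
    obtain ⟨c, hc⟩ := hev
    rw [he]; omega
  have h2eZ : 2 * (e : ℤ) = q * ((q : ℤ) - 1) := by
    zify [hq1] at h2e; exact h2e
  set T := m * e + q * r with hT
  have hT1 : 1 ≤ T := le_trans (Nat.mul_pos hq1 hrpos) (Nat.le_add_left _ _)
  -- RHS equals T
  have hsub1 : n - r = m * q := Nat.sub_eq_of_eq_add (by omega)
  have hsub2 : n + r + 1 - k = m * (q - 1) + 2 * r := by
    apply Nat.sub_eq_of_eq_add
    zify [hq1]
    linear_combination (-1 : ℤ) * hnZ - hkZ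
  have hRHS : (n - r) * (n + r + 1 - k) / (2 * m) = T := by
    have hnum : (n - r) * (n + r + 1 - k) = (2 * m) * T := by
      rw [hsub1, hsub2, hT]
      zify [hq1]
      linear_combination (-(m : ℤ) ^ 2) * h2eZ
    rw [hnum, Nat.mul_div_cancel_left _ (by omega)]
  rw [hRHS]
  -- the counting sets
  set g : ℕ → Finset (ℕ × ℕ) :=
    fun d => ((Finset.range (n + 1 - m * d)).erase 1).image (fun a => (a, d)) with hg
  set B := (Finset.Icc 1 q).biUnion g with hB
  -- card of B
  have hdisj : ∀ d₁ ∈ Finset.Icc 1 q, ∀ d₂ ∈ Finset.Icc 1 q, d₁ ≠ d₂ →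
      Disjoint (g d₁) (g d₂) := by
    intro d₁ _ d₂ _ hne
    rw [Finset.disjoint_left]
    intro p hp1 hp2
    rw [hg] at hp1 hp2
    simp only [Finset.mem_image] at hp1 hp2
    obtain ⟨a₁, _, h1⟩ := hp1
    obtain ⟨a₂, _, h2⟩ := hp2
    apply hne
    rw [← h1] at h2
    exact (Prod.mk.injEq _ _ _ _ ▸ h2).2.symm
  have hcardg : ∀ d ∈ Finset.Icc 1 q, (g d).card = n - m * d := by
    intro d hd
    rw [Finset.mem_Icc] at hd
    have hmd : m * d + 1 ≤ n := by
      have : m * d ≤ m * q := Nat.mul_le_mul_left m hd.2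
      omega
    rw [hg]
    rw [Finset.card_image_of_injective _ (fun x y hxy => by
      simpa using (Prod.mk.injEq _ _ _ _ ▸ hxy).1)]
    rw [Finset.card_erase_of_mem (Finset.mem_range.mpr (by omega))]
    rw [Finset.card_range]
    omega
  have hcardB : B.card = T := by
    rw [hB, Finset.card_biUnion hdisj, Finset.sum_congr rfl hcardg]
    have key := sum_aux8 m n q hmqn
    have h2 : 2 * (∑ d ∈ Finset.Icc 1 q, (n - m * d)) = 2 * T := by
      zify [hq1] at key ⊢
      rw [hT]
      push_cast
      linear_combination key - (m : ℤ) * h2eZ - 2 * (q : ℤ) * hnZ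
    omega
  have h01B : (0, 1) ∈ B := by
    rw [hB, Finset.mem_biUnion]
    refine ⟨1, Finset.mem_Icc.mpr ⟨le_refl _, hq1⟩, ?_⟩
    rw [hg]
    simp only [Finset.mem_image]
    exact ⟨0, Finset.mem_erase.mpr ⟨by omega, Finset.mem_range.mpr (by omega)⟩, rfl⟩
  -- surjection from B.erase (0,1) onto the set of progressions
  have hV1 : (1 : ℕ) ∉ V := by
    rw [hVdef]
    simp [Finset.mem_insert, Finset.mem_Icc]
  have hVle : ∀ x ∈ V, x ≤ n := by
    intro x hx
    rw [hVdef] at hx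
    simp only [Finset.mem_insert, Finset.mem_Icc] at hx
    omega
  have hcard_le : ((V.powersetCard k).filter
        (fun P => ∃ a d : ℕ, 0 < d ∧
          P = (Finset.range k).image (fun i => a + i * d))).card
      ≤ (B.erase (0, 1)).card := by
    apply Finset.card_le_card_of_surjOn
      (fun p : ℕ × ℕ => (Finset.range k).image (fun i => p.1 + i * p.2))
    intro P hP
    simp only [Finset.coe_filter, Set.mem_setOf_eq, Finset.mem_powersetCard] at hP
    obtain ⟨⟨hsub, hcard⟩, a, d, hd, hPeq⟩ := hP
    have hmem : ∀ i, i < k → a + i * d ∈ P := by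
      intro i hi
      rw [hPeq]
      exact Finset.mem_image.mpr ⟨i, Finset.mem_range.mpr hi, rfl⟩
    have hlast : a + m * d ≤ n := by
      have h := hVle _ (hsub (hmem (k - 1) (by omega)))
      rw [← hm] at h
      exact h
    have ha0 : a ∈ V := by have := hsub (hmem 0 (by omega)); simpa using this
    have ha1 : a ≠ 1 := fun h => hV1 (h ▸ ha0)
    have hnot01 : ¬(a = 0 ∧ d = 1) := by
      rintro ⟨rfl, rfl⟩
      exact hV1 (by simpa using hsub (hmem 1 (by omega)))
    have hdq : d ≤ q := by
      rw [hqdef]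
      exact (Nat.le_div_iff_mul_le (by omega)).mpr (by rw [Nat.mul_comm]; omega)
    refine ⟨(a, d), ?_, hPeq.symm⟩
    rw [Finset.mem_coe, Finset.mem_erase]
    constructor
    · intro h
      rw [Prod.mk.injEq] at h
      exact hnot01 ⟨h.1, h.2⟩
    · rw [hB, Finset.mem_biUnion]
      refine ⟨d, Finset.mem_Icc.mpr ⟨hd, hdq⟩, ?_⟩
      rw [hg]
      simp only [Finset.mem_image]
      exact ⟨a, Finset.mem_erase.mpr ⟨ha1, Finset.mem_range.mpr (by omega)⟩, rfl⟩
  have hcardE : (B.erase (0, 1)).card = B.card - 1 := Finset.card_erase_of_mem h01B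
  omega
end

section
/- Let n ≥ k ≥ 4 and let V = {0, 2, 3, …, n-2, n-1, n+1} (an arithmetic progression of consecutive integers with both the second and second-to-last points removed, so |V| = n). Then V contains strictly fewer k-term arithmetic progressions than the maximum (n-r)(n+r-k+1)/(2(k-1)), where r is the remainder of n divided by k-1. -/
attribute [local instance] Classical.propDecidable

private lemma gauss_icc (D : ℕ) : (∑ d ∈ Finset.Icc 1 D, d) * 2 = (D + 1) * D := by
  have h : ∑ d ∈ Finset.Icc 1 D, d = ∑ d ∈ Finset.range (D + 1), d := by
    apply Finset.sum_subset
    · intro x hx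
      simp only [Finset.mem_Icc] at hx
      simp only [Finset.mem_range]
      omega
    · intro x hx hnx
      simp only [Finset.mem_range] at hx
      simp only [Finset.mem_Icc] at hnx
      omega
  rw [h, Finset.sum_range_id_mul_two]
  simp

private lemma sum_formula (m n r q : ℕ) (hm : 3 ≤ m) (hn : m + 1 ≤ n)
    (hq : n = m * q + r) (hrm : r < m) :
    (n - r) * (n + r + 1 - (m + 1)) = (2 * m) * (∑ d ∈ Finset.Icc 1 (n + 1), (n - m * d)) := by
  obtain ⟨D, s, hD, hs⟩ : ∃ D s, n - 1 = m * D + s ∧ s < m :=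
    ⟨(n - 1) / m, (n - 1) % m, (Nat.div_add_mod _ m).symm, Nat.mod_lt _ (by omega)⟩
  have htrunc : (∑ d ∈ Finset.Icc 1 (n + 1), (n - m * d)) = ∑ d ∈ Finset.Icc 1 D, (n - m * d) := by
    refine (Finset.sum_subset ?_ ?_).symm
    · intro x hx
      simp only [Finset.mem_Icc] at hx ⊢
      have h3 : 3 * D ≤ m * D := Nat.mul_le_mul hm (Nat.le_refl D)
      omega
    · intro x hx hnx
      simp only [Finset.mem_Icc] at hx hnx
      have h4 : m * (D + 1) ≤ m * x := Nat.mul_le_mul (Nat.le_refl m) (by omega)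
      rw [Nat.mul_add, Nat.mul_one] at h4
      omega
  rw [htrunc]
  have hgauss : (∑ d ∈ Finset.Icc 1 D, d) * 2 = (D + 1) * D := gauss_icc D
  have hkey : (∑ d ∈ Finset.Icc 1 D, (n - m * d)) + m * (∑ d ∈ Finset.Icc 1 D, d) = D * n := by
    rw [Finset.mul_sum, ← Finset.sum_add_distrib]
    have hcong : ∀ d ∈ Finset.Icc 1 D, (n - m * d) + m * d = n := by
      intro d hd
      simp only [Finset.mem_Icc] at hd
      have : m * d ≤ m * D := Nat.mul_le_mul (Nat.le_refl m) hd.2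
      omega
    rw [Finset.sum_congr rfl hcong, Finset.sum_const, Nat.card_Icc, smul_eq_mul, Nat.add_sub_cancel]
  set S0 := ∑ d ∈ Finset.Icc 1 D, (n - m * d) with hS0
  set G := ∑ d ∈ Finset.Icc 1 D, d with hGdef
  have K : (S0 : ℤ) + m * G = D * n := by exact_mod_cast hkey
  have Ga : (G : ℤ) * 2 = (D + 1) * D := by exact_mod_cast hgauss
  rcases Nat.eq_zero_or_pos r with hr0 | hrpos
  · subst hr0
    have hq' : n = m * D + m := by
      have h1 : m * D < m * q := by omega
      have h2 : m * q ≤ m * (D + 1) := by rw [Nat.mul_add, Nat.mul_one]; omega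
      have h3 : D < q := Nat.lt_of_mul_lt_mul_left h1
      have h4 : q ≤ D + 1 := Nat.le_of_mul_le_mul_left h2 (by omega)
      have h5 : q = D + 1 := by omega
      rw [h5, Nat.mul_add, Nat.mul_one] at hq
      omega
    have N : (n : ℤ) = m * D + m := by exact_mod_cast hq'
    simp only [Nat.sub_zero, Nat.add_zero]
    zify [show m + 1 ≤ n + 1 by omega]
    linear_combination (-2 * (m : ℤ)) * K + (m : ℤ) ^ 2 * Ga + ((n : ℤ) - m * D) * N
  · have hDq : D = q := by
      have h1 : m * D < m * (q + 1) := by rw [Nat.mul_add, Nat.mul_one]; omega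
      have h2 : m * q < m * (D + 1) := by rw [Nat.mul_add, Nat.mul_one]; omega
      have h3 := Nat.lt_of_mul_lt_mul_left h1
      have h4 := Nat.lt_of_mul_lt_mul_left h2
      omega
    subst hDq
    have N : (n : ℤ) = m * D + r := by exact_mod_cast hq
    zify [show r ≤ n by omega, show m + 1 ≤ n + r + 1 by omega]
    linear_combination (-2 * (m : ℤ)) * K + (m : ℤ) ^ 2 * Ga + ((n : ℤ) + r - m - m * D) * N

theorem stmt_9 (n k : ℕ) (hk : 4 ≤ k) (hkn : k ≤ n)
    (r : ℕ) (hr : r = n % (k - 1))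
    (V : Finset ℕ) (hVdef : V = insert 0 (insert (n + 1) (Finset.Icc 2 (n - 1)))) :
    ((V.powersetCard k).filter
        (fun P => ∃ a d : ℕ, 0 < d ∧
          P = (Finset.range k).image (fun i => a + i * d))).card
      < (n - r) * (n + r + 1 - k) / (2 * (k - 1)) := by
  obtain ⟨m, rfl⟩ : ∃ m, k = m + 1 := ⟨k - 1, by omega⟩
  simp only [Nat.add_sub_cancel] at hr ⊢
  have hm3 : 3 ≤ m := by omega
  have hn4 : m + 1 ≤ n := hkn
  have hmemV : ∀ x, x ∈ V ↔ x = 0 ∨ x = n + 1 ∨ (2 ≤ x ∧ x ≤ n - 1) := by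
    intro x
    rw [hVdef]
    simp [Finset.mem_insert, Finset.mem_Icc]
  set A : ℕ → Finset ℕ := fun d => (Finset.range (n + 2)).filter (fun a => ∀ i < m + 1, a + i * d ∈ V) with hA
  have hmemA : ∀ d a, a ∈ A d ↔ (a < n + 2 ∧ ∀ i < m + 1, a + i * d ∈ V) := by
    intro d a
    simp [hA, Finset.mem_filter, Finset.mem_range]
  set T : Finset (ℕ × ℕ) := (Finset.Icc 1 (n + 1)).biUnion (fun d => (A d).image (fun a => (a, d))) with hT
  have hmemT : ∀ p : ℕ × ℕ, p ∈ T ↔ (1 ≤ p.2 ∧ p.2 ≤ n + 1 ∧ p.1 ∈ A p.2) := by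
    rintro ⟨a, d⟩
    simp only [hT, Finset.mem_biUnion, Finset.mem_Icc, Finset.mem_image]
    constructor
    · rintro ⟨d', ⟨h1, h2⟩, a', ha', heq⟩
      have e1 : a' = a := congrArg Prod.fst heq
      have e2 : d' = d := congrArg Prod.snd heq
      subst e1; subst e2
      exact ⟨h1, h2, ha'⟩
    · rintro ⟨h1, h2, h3⟩
      exact ⟨d, ⟨h1, h2⟩, a, h3, rfl⟩
  set φ : ℕ × ℕ → Finset ℕ := fun p => (Finset.range (m + 1)).image (fun i => p.1 + i * p.2) with hφ
  have hVle : ∀ x ∈ V, x ≤ n + 1 := by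
    intro x hx
    rw [hmemV] at hx
    omega
  have hmemφ : ∀ p : ℕ × ℕ, ∀ x, x ∈ φ p ↔ ∃ i, i < m + 1 ∧ p.1 + i * p.2 = x := by
    intro p x
    simp [hφ, Finset.mem_image, Finset.mem_range]
  have hSeq : ((V.powersetCard (m + 1)).filter
        (fun P => ∃ a d : ℕ, 0 < d ∧
          P = (Finset.range (m + 1)).image (fun i => a + i * d))) = T.image φ := by
    ext P
    simp only [Finset.mem_filter, Finset.mem_powersetCard, Finset.mem_image]
    constructor
    · rintro ⟨⟨hPV, hPcard⟩, a, d, hd, rfl⟩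
      refine ⟨(a, d), (hmemT (a, d)).2 ⟨hd, ?_, ?_⟩, ?_⟩
      · have h1 : a + 1 * d ∈ V := hPV (Finset.mem_image.2 ⟨1, Finset.mem_range.2 (by omega), rfl⟩)
        have := hVle _ h1
        omega
      · rw [hmemA]
        constructor
        · have h0 : a + 0 * d ∈ V := hPV (Finset.mem_image.2 ⟨0, Finset.mem_range.2 (by omega), rfl⟩)
          have := hVle _ h0
          omega
        · intro i hi
          exact hPV (Finset.mem_image.2 ⟨i, Finset.mem_range.2 hi, rfl⟩)
      · simp only [hφ]
    · rintro ⟨p, hp, rfl⟩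
      obtain ⟨hd1, hd2, hpa⟩ := (hmemT p).1 hp
      rw [hmemA] at hpa
      refine ⟨⟨?_, ?_⟩, p.1, p.2, hd1, by simp only [hφ]⟩
      · intro x hx
        rw [hmemφ] at hx
        obtain ⟨i, hi, rfl⟩ := hx
        exact hpa.2 i hi
      · simp only [hφ]
        have hcard : ((Finset.range (m + 1)).image (fun i => p.1 + i * p.2)).card
            = (Finset.range (m + 1)).card := by
          apply Finset.card_image_of_injOn
          intro i hi j hj hij
          simp only [Finset.coe_range, Set.mem_Iio] at hi hj
          have hij' : p.1 + i * p.2 = p.1 + j * p.2 := hij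
          have h1 : i * p.2 = j * p.2 := by omega
          exact Nat.eq_of_mul_eq_mul_right (by omega) h1
        rw [hcard, Finset.card_range]
  have hinj : Set.InjOn φ T := by
    intro p hp q hq h
    rw [Finset.mem_coe] at hp hq
    obtain ⟨hp1, hp2, hpa⟩ := (hmemT p).1 hp
    obtain ⟨hq1, hq2, hqa⟩ := (hmemT q).1 hq
    have mem1 : ∀ i, i < m + 1 → ∃ j, j < m + 1 ∧ q.1 + j * q.2 = p.1 + i * p.2 := by
      intro i hi
      have hx : p.1 + i * p.2 ∈ φ q := by
        rw [← h, hmemφ]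
        exact ⟨i, hi, rfl⟩
      rw [hmemφ] at hx
      exact hx
    have mem2 : ∀ i, i < m + 1 → ∃ j, j < m + 1 ∧ p.1 + j * p.2 = q.1 + i * q.2 := by
      intro i hi
      have hx : q.1 + i * q.2 ∈ φ p := by
        rw [h, hmemφ]
        exact ⟨i, hi, rfl⟩
      rw [hmemφ] at hx
      exact hx
    obtain ⟨i0, hi0, h0⟩ := mem1 0 (by omega)
    obtain ⟨j0, hj0, h0'⟩ := mem2 0 (by omega)
    have ha : p.1 = q.1 := by omega
    obtain ⟨i1, hi1, h1⟩ := mem1 1 (by omega)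
    obtain ⟨j1, hj1, h1'⟩ := mem2 1 (by omega)
    have hd1 : p.2 = i1 * q.2 := by omega
    have hd2 : q.2 = j1 * p.2 := by omega
    have hij : (i1 * j1) * p.2 = 1 * p.2 := by
      rw [one_mul]
      calc (i1 * j1) * p.2 = i1 * (j1 * p.2) := by ring
        _ = i1 * q.2 := by rw [← hd2]
        _ = p.2 := hd1.symm
    have hone : i1 * j1 = 1 := Nat.eq_of_mul_eq_mul_right (by omega) hij
    have hi1' : i1 = 1 := Nat.eq_one_of_mul_eq_one_right hone
    have hdd : p.2 = q.2 := by rw [hd1, hi1', one_mul]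
    exact Prod.ext ha hdd
  have hdisj : ∀ x ∈ Finset.Icc 1 (n + 1), ∀ y ∈ Finset.Icc 1 (n + 1), x ≠ y →
      Disjoint ((A x).image (fun a => (a, x))) ((A y).image (fun a => (a, y))) := by
    intro x _ y _ hxy
    rw [Finset.disjoint_left]
    intro p hp1 hp2
    obtain ⟨a, _, rfl⟩ := Finset.mem_image.1 hp1
    obtain ⟨b, _, hb⟩ := Finset.mem_image.1 hp2
    exact hxy (congrArg Prod.snd hb).symm
  have hcardT : T.card = ∑ d ∈ Finset.Icc 1 (n + 1), (A d).card := by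
    rw [hT, Finset.card_biUnion hdisj]
    refine Finset.sum_congr rfl (fun d _ => ?_)
    exact Finset.card_image_of_injective _ (fun a b hab => congrArg Prod.fst hab)
  have hstruct : ∀ d, 1 ≤ d → ∀ a ∈ A d, a = 0 ∨ a + m * d = n + 1 ∨ (2 ≤ a ∧ a + m * d ≤ n - 1) := by
    intro d hd a ha
    rw [hmemA] at ha
    obtain ⟨_, hall⟩ := ha
    have h0 := hall 0 (by omega)
    have h1 := hall 1 (by omega)
    have htop := hall m (by omega)
    rw [hmemV] at h0 h1 htop
    omega
  have hbound2 : ∀ d, 2 ≤ d →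
      (A d).card ≤ (n - m * d) + ((if m * d = n - 1 then 1 else 0) + (if m * d = n + 1 then 1 else 0)) := by
    intro d hd
    have hkey := hstruct d (by omega)
    by_cases hle : m * d ≤ n - 1
    · have hsub : A d ⊆ insert 0 (insert (n + 1 - m * d) (Finset.Icc 2 (n - 1 - m * d))) := by
        intro a ha
        have := hkey a ha
        simp only [Finset.mem_insert, Finset.mem_Icc]
        omega
      have hc := Finset.card_le_card hsub
      have hc2 : (insert 0 (insert (n + 1 - m * d) (Finset.Icc 2 (n - 1 - m * d)))).card
          ≤ (Finset.Icc 2 (n - 1 - m * d)).card + 2 := by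
        refine le_trans (Finset.card_insert_le _ _) ?_
        have := Finset.card_insert_le (n + 1 - m * d) (Finset.Icc 2 (n - 1 - m * d))
        omega
      rw [Nat.card_Icc] at hc2
      split_ifs <;> omega
    · by_cases he : m * d = n + 1
      · have hsub : A d ⊆ {0} := by
          intro a ha
          have := hkey a ha
          simp only [Finset.mem_singleton]
          omega
        have hc := Finset.card_le_card hsub
        rw [Finset.card_singleton] at hc
        split_ifs <;> omega
      · have hsub : A d ⊆ ∅ := by
          intro a ha
          have hk2 := hkey a ha
          rw [hmemA] at ha
          obtain ⟨_, hall⟩ := ha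
          have h0 := hall 0 (by omega)
          have htop := hall m (by omega)
          rw [hmemV] at h0 htop
          exfalso
          have h6 : 3 * 2 ≤ m * d := Nat.mul_le_mul hm3 hd
          omega
        have hc := Finset.card_le_card hsub
        rw [Finset.card_empty] at hc
        split_ifs <;> omega
  have hb1 : (A 1).card ≤ n - m - 2 := by
    have hsub : A 1 ⊆ Finset.Icc 2 (n - m - 1) := by
      intro a ha
      rw [hmemA] at ha
      obtain ⟨_, hall⟩ := ha
      have h0 := hall 0 (by omega)
      have h1 := hall 1 (by omega)
      have htop := hall m (by omega)
      have hpre := hall (m - 1) (by omega)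
      rw [hmemV] at h0 h1 htop hpre
      simp only [Finset.mem_Icc]
      omega
    have := Finset.card_le_card hsub
    rw [Nat.card_Icc] at this
    omega
  set c1 := ((Finset.Icc 2 (n + 1)).filter (fun d => m * d = n - 1)).card with hc1def
  set c2 := ((Finset.Icc 2 (n + 1)).filter (fun d => m * d = n + 1)).card with hc2def
  have hc1le : c1 ≤ 1 := by
    rw [hc1def]
    refine Finset.card_le_one.2 ?_
    intro a ha b hb
    simp only [Finset.mem_filter, Finset.mem_Icc] at ha hb
    exact Nat.eq_of_mul_eq_mul_left (by omega) (ha.2.trans hb.2.symm)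
  have hc2le : c2 ≤ 1 := by
    rw [hc2def]
    refine Finset.card_le_one.2 ?_
    intro a ha b hb
    simp only [Finset.mem_filter, Finset.mem_Icc] at ha hb
    exact Nat.eq_of_mul_eq_mul_left (by omega) (ha.2.trans hb.2.symm)
  have hc12 : c1 + c2 ≤ 1 := by
    by_contra hcon
    have h1 : 0 < c1 := by omega
    have h2 : 0 < c2 := by omega
    rw [hc1def] at h1
    rw [hc2def] at h2
    obtain ⟨d1, hd1⟩ := Finset.card_pos.1 h1
    obtain ⟨d2, hd2⟩ := Finset.card_pos.1 h2
    simp only [Finset.mem_filter, Finset.mem_Icc] at hd1 hd2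
    have hlt : d1 < d2 := by
      rcases Nat.lt_or_ge d1 d2 with h | h
      · exact h
      · exfalso
        have : m * d2 ≤ m * d1 := Nat.mul_le_mul (Nat.le_refl m) h
        omega
    have : m * (d1 + 1) ≤ m * d2 := Nat.mul_le_mul (Nat.le_refl m) (by omega)
    rw [Nat.mul_add, Nat.mul_one] at this
    omega
  have hextra : 1 ≤ c1 + c2 → m + 2 ≤ n := by
    intro hpos
    have hor : 0 < c1 ∨ 0 < c2 := by omega
    rcases hor with h | h
    · rw [hc1def] at h
      obtain ⟨d, hd⟩ := Finset.card_pos.1 h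
      simp only [Finset.mem_filter, Finset.mem_Icc] at hd
      have : m * 2 ≤ m * d := Nat.mul_le_mul (Nat.le_refl m) hd.1.1
      omega
    · rw [hc2def] at h
      obtain ⟨d, hd⟩ := Finset.card_pos.1 h
      simp only [Finset.mem_filter, Finset.mem_Icc] at hd
      have : m * 2 ≤ m * d := Nat.mul_le_mul (Nat.le_refl m) hd.1.1
      omega
  have hsum2 : ∑ d ∈ Finset.Icc 2 (n + 1), (A d).card
      ≤ (∑ d ∈ Finset.Icc 2 (n + 1), (n - m * d)) + (c1 + c2) := by
    have h1 : ∑ d ∈ Finset.Icc 2 (n + 1), (A d).card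
        ≤ ∑ d ∈ Finset.Icc 2 (n + 1), ((n - m * d) + ((if m * d = n - 1 then 1 else 0) + (if m * d = n + 1 then 1 else 0))) := by
      refine Finset.sum_le_sum ?_
      intro d hd
      simp only [Finset.mem_Icc] at hd
      exact hbound2 d (by omega)
    rw [Finset.sum_add_distrib, Finset.sum_add_distrib] at h1
    rw [hc1def, hc2def, Finset.card_filter, Finset.card_filter]
    exact h1
  have hsplit : ∀ f : ℕ → ℕ, ∑ d ∈ Finset.Icc 1 (n + 1), f d = f 1 + ∑ d ∈ Finset.Icc 2 (n + 1), f d := by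
    intro f
    have h : Finset.Icc 1 (n + 1) = insert 1 (Finset.Icc 2 (n + 1)) := by
      ext x
      simp only [Finset.mem_Icc, Finset.mem_insert]
      omega
    rw [h, Finset.sum_insert (by simp only [Finset.mem_Icc]; omega)]
  have hform := sum_formula m n r (n / m) hm3 hn4
    (by rw [hr]; exact (Nat.div_add_mod n m).symm)
    (by rw [hr]; exact Nat.mod_lt _ (by omega))
  have hM : (n - r) * (n + r + 1 - (m + 1)) / (2 * m) = ∑ d ∈ Finset.Icc 1 (n + 1), (n - m * d) :=
    Nat.div_eq_of_eq_mul_right (by omega) hform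
  rw [hSeq, Finset.card_image_of_injOn hinj, hcardT, hM,
    hsplit (fun d => (A d).card), hsplit (fun d => n - m * d)]
  have h := hsum2
  rcases Nat.eq_zero_or_pos (c1 + c2) with hc | hc
  · omega
  · have := hextra hc
    omega
end

section
/- Let ζ₆ = e^{iπ/3} and let ≺ denote the lexicographic order on ℂ (y ≺ z iff Re(y) < Re(z), or Re(y) = Re(z) and Im(y) < Im(z)). For distinct u, v ∈ ℂ, the point w = ζ₆u + conj(ζ₆)v satisfies u ≺ w and v ≺ w if and only if Arg(v-u) ∈ (π/6, 5π/6]. -/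
open Complex Real

lemma arg_mem_iff (z : ℂ) (hz : z ≠ 0) :
    Complex.arg z ∈ Set.Ioc (Real.pi/6) (5*Real.pi/6) ↔
      0 < z.im ∧ -(Real.sqrt 3 * z.im) ≤ z.re ∧ z.re < Real.sqrt 3 * z.im := by
  have hr : 0 < ‖z‖ := (norm_pos_iff.mpr hz)
  set r := ‖z‖ with hrdef
  set θ := Complex.arg z with hθdef
  have hcos : Real.cos θ = z.re / r := Complex.cos_arg hz
  have hsin : Real.sin θ = z.im / r := Complex.sin_arg z
  have hre : z.re = r * Real.cos θ := by rw [hcos, mul_div_assoc']; exact (mul_div_cancel_left₀ _ hr.ne').symm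
  have him : z.im = r * Real.sin θ := by rw [hsin, mul_div_assoc']; exact (mul_div_cancel_left₀ _ hr.ne').symm
  have hθ1 : -Real.pi < θ := Complex.neg_pi_lt_arg z
  have hθ2 : θ ≤ Real.pi := Complex.arg_le_pi z
  have hπ : 0 < Real.pi := Real.pi_pos
  have hsub : Real.sin (θ - Real.pi/6) = Real.sin θ * (Real.sqrt 3 / 2) - Real.cos θ * (1/2) := by
    rw [Real.sin_sub, Real.cos_pi_div_six, Real.sin_pi_div_six]
  have hadd : Real.sin (θ + Real.pi/6) = Real.sin θ * (Real.sqrt 3 / 2) + Real.cos θ * (1/2) := by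
    rw [Real.sin_add, Real.cos_pi_div_six, Real.sin_pi_div_six]
  have e1 : Real.sqrt 3 * z.im - z.re
      = r * (2 * (Real.sin θ * (Real.sqrt 3 / 2) - Real.cos θ * (1/2))) := by
    rw [hre, him]; ring
  have e2 : Real.sqrt 3 * z.im + z.re
      = r * (2 * (Real.sin θ * (Real.sqrt 3 / 2) + Real.cos θ * (1/2))) := by
    rw [hre, him]; ring
  constructor
  · rintro ⟨h1, h2⟩
    have hs1 : 0 < Real.sin θ := Real.sin_pos_of_pos_of_lt_pi (by linarith) (by linarith)
    have hs2 : 0 < Real.sin (θ - Real.pi/6) :=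
      Real.sin_pos_of_pos_of_lt_pi (by linarith) (by linarith)
    have hs3 : 0 ≤ Real.sin (θ + Real.pi/6) :=
      Real.sin_nonneg_of_nonneg_of_le_pi (by linarith) (by linarith)
    rw [hsub] at hs2
    rw [hadd] at hs3
    have p1 : 0 < r * (2 * (Real.sin θ * (Real.sqrt 3 / 2) - Real.cos θ * (1/2))) :=
      mul_pos hr (by linarith)
    have p2 : 0 ≤ r * (2 * (Real.sin θ * (Real.sqrt 3 / 2) + Real.cos θ * (1/2))) :=
      mul_nonneg hr.le (by linarith)
    have p3 : 0 < r * Real.sin θ := mul_pos hr hs1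
    refine ⟨by linarith [him ▸ p3], by linarith, by linarith⟩
  · rintro ⟨hb, hle, hlt⟩
    have hs1 : 0 < Real.sin θ := by
      rw [hsin]; positivity
    have hθpos : 0 < θ := by
      by_contra h
      push_neg at h
      have := Real.sin_nonpos_of_nonpos_of_neg_pi_le h (le_of_lt hθ1)
      linarith
    have hθlt : θ < Real.pi := by
      rcases lt_or_eq_of_le hθ2 with h | h
      · exact h
      · exfalso; rw [h] at hs1; simp [Real.sin_pi] at hs1
    constructor
    · by_contra h
      push_neg at h
      have hs2 : Real.sin (θ - Real.pi/6) ≤ 0 :=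
        Real.sin_nonpos_of_nonpos_of_neg_pi_le (by linarith) (by linarith)
      rw [hsub] at hs2
      have : r * (2 * (Real.sin θ * (Real.sqrt 3 / 2) - Real.cos θ * (1/2))) ≤ 0 :=
        mul_nonpos_of_nonneg_of_nonpos hr.le (by linarith)
      linarith
    · by_contra h
      push_neg at h
      have hs3 : Real.sin (θ + Real.pi/6) < 0 := by
        have : Real.sin (θ + Real.pi/6 - Real.pi) > 0 :=
          Real.sin_pos_of_pos_of_lt_pi (by linarith) (by linarith)
        have heq := Real.sin_sub_pi (θ + Real.pi/6)
        linarith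
      rw [hadd] at hs3
      have : r * (2 * (Real.sin θ * (Real.sqrt 3 / 2) + Real.cos θ * (1/2))) < 0 :=
        mul_neg_of_pos_of_neg hr (by linarith)
      linarith

/-- Lexicographic order on ℂ. -/
def CLexLt (y z : ℂ) : Prop := y.re < z.re ∨ (y.re = z.re ∧ y.im < z.im)

set_option maxHeartbeats 1000000 in
theorem stmt_11 (u v : ℂ) (huv : u ≠ v)
    (ζ : ℂ) (hζ : ζ = Complex.exp (Real.pi * Complex.I / 3))
    (w : ℂ) (hw : w = ζ * u + (starRingEnd ℂ) ζ * v) :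
    (CLexLt u w ∧ CLexLt v w) ↔
      Complex.arg (v - u) ∈ Set.Ioc (Real.pi / 6) (5 * Real.pi / 6) := by
  have hzne : v - u ≠ 0 := sub_ne_zero.mpr (Ne.symm huv)
  set s := Real.sqrt 3 with hs
  have hs2 : s * s = 3 := Real.mul_self_sqrt (by norm_num)
  have hspos : 0 < s := Real.sqrt_pos.mpr (by norm_num)
  have hζre : ζ.re = 1/2 := by
    rw [hζ, Complex.exp_re]
    simp [Complex.div_im, Complex.div_re, Real.cos_pi_div_three]
  have hζim : ζ.im = s/2 := by
    rw [hζ, Complex.exp_im]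
    simp [Complex.div_im, Complex.div_re, Real.sin_pi_div_three, hs]
  set a := (v - u).re with ha
  set b := (v - u).im with hb
  have ha' : a = v.re - u.re := by simp [ha]
  have hb' : b = v.im - u.im := by simp [hb]
  have hwre : w.re = u.re + (a/2 + s/2 * b) := by
    rw [hw]; simp [Complex.add_re, Complex.mul_re, hζre, hζim, ha', hb']; ring
  have hwim : w.im = u.im + (b/2 - s/2 * a) := by
    rw [hw]; simp [Complex.add_im, Complex.mul_im, hζre, hζim, ha', hb']; ring
  have hwre' : w.re = v.re + (-a/2 + s/2 * b) := by rw [hwre, ha']; ring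
  have hwim' : w.im = v.im + (-b/2 - s/2 * a) := by rw [hwim, ha', hb']; ring
  rw [arg_mem_iff _ hzne]
  constructor
  · rintro ⟨h1, h2⟩
    rcases h2 with h2 | ⟨h2e, h2i⟩
    · -- -a/2 + s/2*b > 0, i.e. a < s*b
      rw [hwre'] at h2
      have halt : a < s * b := by linarith
      rcases h1 with h1 | ⟨h1e, h1i⟩
      · rw [hwre] at h1
        have : 0 < a + s * b := by linarith
        refine ⟨by nlinarith, by linarith, halt⟩
      · rw [hwre] at h1e; rw [hwim] at h1i
        have hae : a = -(s*b) := by linarith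
        have h4b : 0 < b := by nlinarith
        exact ⟨h4b, by linarith, halt⟩
    · rw [hwre'] at h2e; rw [hwim'] at h2i
      have hae : a = s * b := by linarith
      have hbneg : b < 0 := by nlinarith
      exfalso
      rcases h1 with h1 | ⟨h1e, _⟩
      · rw [hwre] at h1; nlinarith
      · rw [hwre] at h1e; nlinarith
  · rintro ⟨hbpos, hle, hlt⟩
    constructor
    · rcases eq_or_lt_of_le hle with h | h
      · right
        constructor
        · rw [hwre]; nlinarith
        · rw [hwim]; nlinarith
      · left; rw [hwre]; nlinarith
    · left; rw [hwre']; nlinarith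
end

section
/- Let u, v be distinct points of ℂ with lexicographic order ≺. If Arg(v-u) ∉ (-5π/6, -π/6] ∪ (π/6, 5π/6], then neither of the two equilateral triangles with vertices u and v has u and v as its two ≺-smallest vertices, nor as its two ≺-largest vertices. -/
open Complex

private lemma stmt12_aux (s a b p1 p2 q1 q2 m1 m2 n1 n2 : ℝ)
    (hs0 : 0 < s) (hs2 : s^2 = 3)
    (hcase : (-a < s*b ∧ s*b ≤ a) ∨ (a ≤ s*b ∧ s*b < -a))
    (h1 : p1 = (a + s*b)/2) (h2 : p2 = (s*b - a)/2)
    (h3 : q1 = (b - s*a)/2) (h4 : q2 = (-(s*a) - b)/2)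
    (h5 : m1 = (a - s*b)/2) (h6 : m2 = (-a - s*b)/2)
    (h7 : n1 = (s*a + b)/2) (h8 : n2 = (s*a - b)/2) :
    ¬((0 < p1 ∨ (p1 = 0 ∧ 0 < q1)) ∧ (0 < p2 ∨ (p2 = 0 ∧ 0 < q2))) ∧
    ¬((0 < m1 ∨ (m1 = 0 ∧ 0 < n1)) ∧ (0 < m2 ∨ (m2 = 0 ∧ 0 < n2))) ∧
    ¬((p1 < 0 ∨ (p1 = 0 ∧ q1 < 0)) ∧ (p2 < 0 ∨ (p2 = 0 ∧ q2 < 0))) ∧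
    ¬((m1 < 0 ∨ (m1 = 0 ∧ n1 < 0)) ∧ (m2 < 0 ∨ (m2 = 0 ∧ n2 < 0))) := by
  subst h1 h2 h3 h4 h5 h6 h7 h8
  refine ⟨?_, ?_, ?_, ?_⟩
  · rintro ⟨hX, hY⟩
    rcases hcase with ⟨c1, c2⟩ | ⟨c1, c2⟩
    · rcases hY with h | ⟨e, i⟩
      · linarith
      · nlinarith [c1, c2, e, i, hs0, hs2]
    · rcases hX with h | ⟨e, i⟩
      · linarith
      · linarith
  · rintro ⟨hX, hY⟩
    rcases hcase with ⟨c1, c2⟩ | ⟨c1, c2⟩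
    · rcases hY with h | ⟨e, i⟩
      · linarith
      · linarith
    · rcases hX with h | ⟨e, i⟩
      · linarith
      · nlinarith [c1, c2, e, i, hs0, hs2]
  · rintro ⟨hX, hY⟩
    rcases hcase with ⟨c1, c2⟩ | ⟨c1, c2⟩
    · rcases hX with h | ⟨e, i⟩
      · linarith
      · linarith
    · rcases hY with h | ⟨e, i⟩
      · linarith
      · nlinarith [c1, c2, e, i, hs0, hs2]
  · rintro ⟨hX, hY⟩
    rcases hcase with ⟨c1, c2⟩ | ⟨c1, c2⟩
    · rcases hX with h | ⟨e, i⟩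
      · linarith
      · nlinarith [c1, c2, e, i, hs0, hs2]
    · rcases hY with h | ⟨e, i⟩
      · linarith
      · linarith

set_option maxHeartbeats 1000000 in
theorem stmt_12 (u v : ℂ) (huv : u ≠ v)
    (ζ : ℂ) (hζ : ζ = Complex.exp (Real.pi * Complex.I / 3))
    (w w' : ℂ) (hw : w = ζ * u + (starRingEnd ℂ) ζ * v)
    (hw' : w' = (starRingEnd ℂ) ζ * u + ζ * v)
    (harg : Complex.arg (v - u) ∉
      Set.Ioc (-(5 * Real.pi) / 6) (-Real.pi / 6) ∪
        Set.Ioc (Real.pi / 6) (5 * Real.pi / 6)) :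
    ¬(CLexLt u w ∧ CLexLt v w) ∧ ¬(CLexLt u w' ∧ CLexLt v w') ∧
    ¬(CLexLt w u ∧ CLexLt w v) ∧ ¬(CLexLt w' u ∧ CLexLt w' v) := by
  have hd : v - u ≠ 0 := sub_ne_zero.mpr huv.symm
  have hs0 : (0:ℝ) < Real.sqrt 3 := Real.sqrt_pos.mpr (by norm_num)
  have hs2 : (Real.sqrt 3)^2 = 3 := Real.sq_sqrt (by norm_num)
  have hπ : (0:ℝ) < Real.pi := Real.pi_pos
  -- coordinates of ζ
  have hz : ζ = Complex.exp ((↑(Real.pi/3) : ℂ) * Complex.I) := by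
    rw [hζ]; congr 1; push_cast; ring
  have hζre : ζ.re = 1/2 := by
    rw [hz, Complex.exp_ofReal_mul_I_re, Real.cos_pi_div_three]
  have hζim : ζ.im = Real.sqrt 3 / 2 := by
    rw [hz, Complex.exp_ofReal_mul_I_im, Real.sin_pi_div_three]
  -- the main case disjunction from the arg hypothesis
  have hcase : (-(v-u).re < Real.sqrt 3 * (v-u).im ∧ Real.sqrt 3 * (v-u).im ≤ (v-u).re)
      ∨ ((v-u).re ≤ Real.sqrt 3 * (v-u).im ∧ Real.sqrt 3 * (v-u).im < -(v-u).re) := by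
    have h1 : -Real.pi < Complex.arg (v-u) := Complex.neg_pi_lt_arg _
    have h2 : Complex.arg (v-u) ≤ Real.pi := Complex.arg_le_pi _
    have hr : 0 < ‖v-u‖ := norm_pos_iff.mpr hd
    have hra : ‖v-u‖ * Real.cos (Complex.arg (v-u)) = (v-u).re :=
      Complex.norm_mul_cos_arg _
    have hrb : ‖v-u‖ * Real.sin (Complex.arg (v-u)) = (v-u).im :=
      Complex.norm_mul_sin_arg _
    set θ := Complex.arg (v-u) with hθdef
    set r := ‖v-u‖ with hrdef
    simp only [Set.mem_union, Set.mem_Ioc, not_or, not_and, not_le] at harg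
    obtain ⟨hA, hB⟩ := harg
    rcases le_or_gt θ (-(5 * Real.pi)/6) with hI | hI
    · -- θ ∈ (-π, -5π/6]
      right
      have e1 : 0 ≤ Real.sin (θ - Real.pi/6) := by
        have h := Real.sin_nonpos_of_nonpos_of_neg_pi_le
          (x := (θ - Real.pi/6) + Real.pi) (by linarith) (by linarith)
        rw [Real.sin_add_pi] at h; linarith
      have e2 : Real.sin (θ + Real.pi/6) < 0 := by
        have h := Real.sin_pos_of_pos_of_lt_pi (x := -(θ + Real.pi/6))
          (by linarith) (by linarith)
        rw [Real.sin_neg] at h; linarith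
      rw [Real.sin_sub, Real.sin_pi_div_six, Real.cos_pi_div_six] at e1
      rw [Real.sin_add, Real.sin_pi_div_six, Real.cos_pi_div_six] at e2
      constructor
      · nlinarith [mul_nonneg hr.le e1, hra, hrb]
      · nlinarith [mul_pos hr (neg_pos.mpr e2), hra, hrb]
    · rcases le_or_gt θ (Real.pi/6) with hI2 | hI2
      · -- θ ∈ (-π/6, π/6]
        left
        have hm : -Real.pi/6 < θ := hA (by linarith)
        have e1 : 0 < Real.sin (θ + Real.pi/6) :=
          Real.sin_pos_of_pos_of_lt_pi (by linarith) (by linarith)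
        have e2 : Real.sin (θ - Real.pi/6) ≤ 0 :=
          Real.sin_nonpos_of_nonpos_of_neg_pi_le (by linarith) (by linarith)
        rw [Real.sin_add, Real.sin_pi_div_six, Real.cos_pi_div_six] at e1
        rw [Real.sin_sub, Real.sin_pi_div_six, Real.cos_pi_div_six] at e2
        constructor
        · nlinarith [mul_pos hr e1, hra, hrb]
        · nlinarith [mul_nonneg hr.le (neg_nonneg.mpr e2), hra, hrb]
      · -- θ ∈ (5π/6, π]
        right
        have hm : 5 * Real.pi / 6 < θ := hB hI2
        have e1 : 0 ≤ Real.sin (θ - Real.pi/6) :=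
          Real.sin_nonneg_of_nonneg_of_le_pi (by linarith) (by linarith)
        have e2 : Real.sin (θ + Real.pi/6) < 0 := by
          have h := Real.sin_pos_of_pos_of_lt_pi (x := (θ + Real.pi/6) - Real.pi)
            (by linarith) (by linarith)
          rw [Real.sin_sub_pi] at h; linarith
        rw [Real.sin_sub, Real.sin_pi_div_six, Real.cos_pi_div_six] at e1
        rw [Real.sin_add, Real.sin_pi_div_six, Real.cos_pi_div_six] at e2
        constructor
        · nlinarith [mul_nonneg hr.le e1, hra, hrb]
        · nlinarith [mul_pos hr (neg_pos.mpr e2), hra, hrb]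
  -- coordinates of w and w'
  have hwre : w.re = (1/2)*u.re - (Real.sqrt 3/2)*u.im + (1/2)*v.re + (Real.sqrt 3/2)*v.im := by
    rw [hw]
    simp only [Complex.add_re, Complex.mul_re, Complex.conj_re, Complex.conj_im, hζre, hζim]
    ring
  have hwim : w.im = (1/2)*u.im + (Real.sqrt 3/2)*u.re + (1/2)*v.im - (Real.sqrt 3/2)*v.re := by
    rw [hw]
    simp only [Complex.add_im, Complex.mul_im, Complex.conj_re, Complex.conj_im, hζre, hζim]
    ring
  have hw're : w'.re = (1/2)*u.re + (Real.sqrt 3/2)*u.im + (1/2)*v.re - (Real.sqrt 3/2)*v.im := by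
    rw [hw']
    simp only [Complex.add_re, Complex.mul_re, Complex.conj_re, Complex.conj_im, hζre, hζim]
    ring
  have hw'im : w'.im = (1/2)*u.im - (Real.sqrt 3/2)*u.re + (1/2)*v.im + (Real.sqrt 3/2)*v.re := by
    rw [hw']
    simp only [Complex.add_im, Complex.mul_im, Complex.conj_re, Complex.conj_im, hζre, hζim]
    ring
  have hsubre : (v-u).re = v.re - u.re := Complex.sub_re v u
  have hsubim : (v-u).im = v.im - u.im := Complex.sub_im v u
  rw [hsubre, hsubim] at hcase
  obtain ⟨G1, G2, G3, G4⟩ := stmt12_aux (Real.sqrt 3) (v.re - u.re) (v.im - u.im)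
    (w.re - u.re) (w.re - v.re) (w.im - u.im) (w.im - v.im)
    (w'.re - u.re) (w'.re - v.re) (w'.im - u.im) (w'.im - v.im)
    hs0 hs2 hcase
    (by rw [hwre]; ring) (by rw [hwre]; ring) (by rw [hwim]; ring) (by rw [hwim]; ring)
    (by rw [hw're]; ring) (by rw [hw're]; ring) (by rw [hw'im]; ring) (by rw [hw'im]; ring)
  have conv : ∀ x y : ℂ, CLexLt x y →
      (0 < y.re - x.re ∨ (y.re - x.re = 0 ∧ 0 < y.im - x.im)) := by
    rintro x y (h | ⟨e, i⟩)
    · exact Or.inl (by linarith)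
    · exact Or.inr ⟨by linarith, by linarith⟩
  have conv' : ∀ x y : ℂ, CLexLt y x →
      (y.re - x.re < 0 ∨ (y.re - x.re = 0 ∧ y.im - x.im < 0)) := by
    rintro x y (h | ⟨e, i⟩)
    · exact Or.inl (by linarith)
    · exact Or.inr ⟨by linarith, by linarith⟩
  exact ⟨fun ⟨hu, hv⟩ => G1 ⟨conv u w hu, conv v w hv⟩,
    fun ⟨hu, hv⟩ => G2 ⟨conv u w' hu, conv v w' hv⟩,
    fun ⟨hu, hv⟩ => G3 ⟨conv' u w hu, conv' v w hv⟩,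
    fun ⟨hu, hv⟩ => G4 ⟨conv' u w' hu, conv' v w' hv⟩⟩
end

section
/- Let V be an n-point subset of the plane ℝ². Then the number of 3-element subsets of V forming an equilateral triangle is at most ⌊(n-1)²/4⌋. -/
attribute [local instance] Classical.propDecidable
set_option synthInstance.maxHeartbeats 4000000
set_option maxHeartbeats 1000000

noncomputable section
open Finset

private def g15 (z : ℂ) : ℝ ×ₗ ℝ := toLex (z.im, z.re)

private lemma g15_inj : Function.Injective g15 := by
  intro x y h
  have h' : (x.im, x.re) = (y.im, y.re) := h
  exact Complex.ext (congrArg Prod.snd h') (congrArg Prod.fst h')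

private lemma g15_lt {x y : ℂ} : g15 x < g15 y ↔ (x.im < y.im ∨ (x.im = y.im ∧ x.re < y.re)) :=
  Prod.Lex.lt_iff

-- apex classification
private lemma apex15 {a b c : ℂ} (hab : b ≠ a)
    (h1 : ‖c - a‖ = ‖b - a‖)
    (h2 : ‖c - b‖ = ‖b - a‖) :
    ∃ z : ℂ, z.re = 1/2 ∧ (z.im = Real.sqrt 3 / 2 ∨ z.im = -(Real.sqrt 3 / 2)) ∧
      c - a = z * (b - a) := by
  have hu : b - a ≠ 0 := sub_ne_zero.mpr hab
  have hu' : ‖b - a‖ ≠ 0 := norm_ne_zero_iff.mpr hu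
  refine ⟨(c - a) / (b - a), ?_, ?_, (div_mul_cancel₀ _ hu).symm⟩
  all_goals
    have habs : ‖(c - a)/(b - a)‖ = 1 := by rw [norm_div, h1, div_self hu']
    have habs2 : ‖(c - a)/(b - a) - 1‖ = 1 := by
      have e : (c - a)/(b - a) - 1 = (c - b)/(b - a) := by field_simp; ring
      rw [e, norm_div, h2, div_self hu']
    set z := (c - a)/(b - a) with hz
    have n1 : z.re * z.re + z.im * z.im = 1 := by
      have := Complex.sq_norm z; rw [habs, Complex.normSq_apply] at this; linarith [this]
    have n2 : (z - 1).re * (z - 1).re + (z - 1).im * (z - 1).im = 1 := by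
      have := Complex.sq_norm (z - 1); rw [habs2, Complex.normSq_apply] at this; linarith [this]
    rw [Complex.sub_re, Complex.sub_im, Complex.one_re, Complex.one_im] at n2
    have hre : z.re = 1/2 := by nlinarith
  · exact hre
  · have him : z.im * z.im = 3 / 4 := by nlinarith
    have h34 : (Real.sqrt 3 / 2) * (Real.sqrt 3 / 2) = 3 / 4 := by
      have := Real.mul_self_sqrt (by norm_num : (3:ℝ) ≥ 0)
      nlinarith
    have : (z.im - Real.sqrt 3 / 2) * (z.im + Real.sqrt 3 / 2) = 0 := by nlinarith
    rcases mul_eq_zero.mp this with h | h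
    · left; linarith
    · right; linarith

private lemma sqrt3_ne : Real.sqrt 3 / 2 ≠ 0 := by
  have : 0 < Real.sqrt 3 := Real.sqrt_pos.mpr (by norm_num)
  linarith

-- a,b,c equilateral can't have all imaginary parts equal
private lemma notcol15 {a b c : ℂ} (hab : b ≠ a)
    (h1 : ‖c - a‖ = ‖b - a‖)
    (h2 : ‖c - b‖ = ‖b - a‖)
    (e1 : a.im = b.im) (e2 : c.im = a.im) : False := by
  obtain ⟨z, hre, him, hc⟩ := apex15 hab h1 h2
  have him0 : z.im ≠ 0 := by rcases him with h | h <;> rw [h] <;>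
    [skip; simp only [neg_ne_zero]] <;> exact sqrt3_ne
  have hci : (c - a).im = z.im * (b - a).re + z.re * (b - a).im := by
    rw [hc, Complex.mul_im]; ring
  have hba_im : (b - a).im = 0 := by simp [Complex.sub_im, e1]
  have hca_im : (c - a).im = 0 := by simp [Complex.sub_im, e2]
  have : (b - a).re = 0 := by
    rw [hca_im, hba_im] at hci
    have : z.im = 0 ∨ (b - a).re = 0 := mul_eq_zero.mp (by linarith)
    rcases this with h | h
    · exact absurd h him0
    · exact h
  have hre0 : b.re = a.re := by
    simpa [Complex.sub_re, sub_eq_zero] using this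
  exact hab (Complex.ext hre0 e1.symm)

-- two apexes over the same base: equal or sum to a+b
private lemma core15 {a b c c' : ℂ} (hab : b ≠ a)
    (h1 : ‖c - a‖ = ‖b - a‖)
    (h2 : ‖c - b‖ = ‖b - a‖)
    (h1' : ‖c' - a‖ = ‖b - a‖)
    (h2' : ‖c' - b‖ = ‖b - a‖) :
    c = c' ∨ c + c' = a + b := by
  obtain ⟨z, hre, him, hc⟩ := apex15 hab h1 h2
  obtain ⟨z', hre', him', hc'⟩ := apex15 hab h1' h2'
  rcases him with hi | hi <;> rcases him' with hi' | hi'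
  · left
    have : z = z' := Complex.ext (by rw [hre, hre']) (by rw [hi, hi'])
    have := hc.trans (this ▸ hc'.symm)
    linear_combination this
  · right
    have hzz : z + z' = 1 := Complex.ext (by rw [Complex.add_re, hre, hre']; norm_num) (by rw [Complex.add_im, hi, hi']; norm_num)
    have : (c - a) + (c' - a) = (z + z') * (b - a) := by rw [hc, hc']; ring
    rw [hzz, one_mul] at this
    linear_combination this
  · right
    have hzz : z + z' = 1 := Complex.ext (by rw [Complex.add_re, hre, hre']; norm_num) (by rw [Complex.add_im, hi, hi']; norm_num)
    have : (c - a) + (c' - a) = (z + z') * (b - a) := by rw [hc, hc']; ring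
    rw [hzz, one_mul] at this
    linear_combination this
  · left
    have : z = z' := Complex.ext (by rw [hre, hre']) (by rw [hi, hi'])
    have := hc.trans (this ▸ hc'.symm)
    linear_combination this

-- uniqueness of the top vertex given bottom two vertices
private lemma top_unique15 {a b c c' : ℂ} (hab : g15 a < g15 b) (hbc : g15 b < g15 c)
    (hbc' : g15 b < g15 c')
    (h1 : ‖c - a‖ = ‖b - a‖)
    (h2 : ‖c - b‖ = ‖b - a‖)
    (h1' : ‖c' - a‖ = ‖b - a‖)
    (h2' : ‖c' - b‖ = ‖b - a‖) : c = c' := by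
  have hba : b ≠ a := by rintro rfl; exact absurd hab (lt_irrefl _)
  rcases core15 hba h1 h2 h1' h2' with h | h
  · exact h
  · exfalso
    have him : c.im + c'.im = a.im + b.im := by
      have := congrArg Complex.im h; simpa using this
    rw [g15_lt] at hab hbc hbc'
    have iab : a.im ≤ b.im := by rcases hab with h' | h' <;> [exact le_of_lt h'; exact le_of_eq h'.1]
    have ibc : b.im ≤ c.im := by rcases hbc with h' | h' <;> [exact le_of_lt h'; exact le_of_eq h'.1]
    have ibc' : b.im ≤ c'.im := by rcases hbc' with h' | h' <;> [exact le_of_lt h'; exact le_of_eq h'.1]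
    have eab : a.im = b.im := by linarith
    have eca : c.im = a.im := by linarith
    exact notcol15 hba h1 h2 eab eca

-- uniqueness of the bottom vertex given top two vertices (b middle, c top)
private lemma bot_unique15 {a a' b c : ℂ} (hab : g15 a < g15 b) (hab' : g15 a' < g15 b)
    (hbc : g15 b < g15 c)
    (h1 : ‖a - b‖ = ‖c - b‖)
    (h2 : ‖a - c‖ = ‖c - b‖)
    (h1' : ‖a' - b‖ = ‖c - b‖)
    (h2' : ‖a' - c‖ = ‖c - b‖) : a = a' := by
  have hcb : c ≠ b := by rintro rfl; exact absurd hbc (lt_irrefl _)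
  rcases core15 hcb h1 h2 h1' h2' with h | h
  · exact h
  · exfalso
    have him : a.im + a'.im = b.im + c.im := by
      have := congrArg Complex.im h; simpa using this
    rw [g15_lt] at hab hab' hbc
    have iab : a.im ≤ b.im := by rcases hab with h' | h' <;> [exact le_of_lt h'; exact le_of_eq h'.1]
    have iab' : a'.im ≤ b.im := by rcases hab' with h' | h' <;> [exact le_of_lt h'; exact le_of_eq h'.1]
    have ibc : b.im ≤ c.im := by rcases hbc with h' | h' <;> [exact le_of_lt h'; exact le_of_eq h'.1]
    have ebc : b.im = c.im := by linarith
    have eab : a.im = b.im := by linarith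
    exact notcol15 hcb h1 h2 ebc eab

private lemma count15 {α : Type*} [LinearOrder α] (W : Finset α) :
    (∑ b ∈ W, min ((W.filter (· < b)).card) ((W.filter (b < ·)).card))
      ≤ (W.card - 1)^2 / 4 := by
  induction W using Finset.strongInduction with
  | _ W ih =>
    by_cases hsmall : W.card ≤ 1
    · have : ∀ b ∈ W, min ((W.filter (· < b)).card) ((W.filter (b < ·)).card) = 0 := by
        intro b hb
        have : (W.filter (· < b)) = ∅ := by
          rw [Finset.eq_empty_iff_forall_notMem]
          intro x hx
          rw [Finset.mem_filter] at hx
          have hxb : x ≠ b := ne_of_lt hx.2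
          have : 2 ≤ W.card := Finset.one_lt_card.mpr ⟨x, hx.1, b, hb, hxb⟩
          omega
        simp [this]
      rw [Finset.sum_congr rfl this]
      simp
    · push_neg at hsmall
      have hne : W.Nonempty := Finset.card_pos.mp (by omega)
      set a := W.min' hne with hadef
      set z := W.max' hne with hzdef
      have haz : a < z := Finset.min'_lt_max'_of_card W hsmall
      have ha : a ∈ W := Finset.min'_mem W hne
      have hz : z ∈ W := Finset.max'_mem W hne
      have hzea : z ∈ W.erase a := Finset.mem_erase.mpr ⟨ne_of_gt haz, hz⟩
      set f : α → ℕ := fun b => min ((W.filter (· < b)).card) ((W.filter (b < ·)).card) with hf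
      set W2 := (W.erase a).erase z with hW2
      have hW2card : W2.card = W.card - 2 := by
        rw [hW2, Finset.card_erase_of_mem hzea, Finset.card_erase_of_mem ha]
        omega
      have hsplit : ∑ b ∈ W, f b = f a + (f z + ∑ b ∈ W2, f b) := by
        rw [Finset.add_sum_erase _ f hzea, Finset.add_sum_erase _ f ha]
      have hfa : f a = 0 := by
        have : (W.filter (· < a)) = ∅ := by
          rw [Finset.eq_empty_iff_forall_notMem]
          intro x hx
          rw [Finset.mem_filter] at hx
          exact absurd hx.2 (not_lt.mpr (W.min'_le x hx.1))
        simp [hf, this]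
      have hfz : f z = 0 := by
        have : (W.filter (z < ·)) = ∅ := by
          rw [Finset.eq_empty_iff_forall_notMem]
          intro x hx
          rw [Finset.mem_filter] at hx
          exact absurd hx.2 (not_lt.mpr (W.le_max' x hx.1))
        simp [hf, this]
      -- relate terms on W2
      have hterm : ∀ b ∈ W2, f b
          = min ((W2.filter (· < b)).card) ((W2.filter (b < ·)).card) + 1 := by
        intro b hb
        rw [hW2, Finset.mem_erase, Finset.mem_erase] at hb
        obtain ⟨hbz, hba, hbW⟩ := hb
        have hab : a < b := lt_of_le_of_ne (W.min'_le b hbW) (Ne.symm hba)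
        have hbz' : b < z := lt_of_le_of_ne (W.le_max' b hbW) hbz
        have e1 : W.filter (· < b) = insert a (W2.filter (· < b)) := by
          ext x
          simp only [Finset.mem_filter, Finset.mem_insert, hW2, Finset.mem_erase]
          constructor
          · rintro ⟨hxW, hxb⟩
            by_cases hxa : x = a
            · exact Or.inl hxa
            · exact Or.inr ⟨⟨ne_of_lt (hxb.trans hbz'), hxa, hxW⟩, hxb⟩
          · rintro (rfl | ⟨⟨_, _, hxW⟩, hxb⟩)
            · exact ⟨ha, hab⟩
            · exact ⟨hxW, hxb⟩
        have e2 : W.filter (b < ·) = insert z (W2.filter (b < ·)) := by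
          ext x
          simp only [Finset.mem_filter, Finset.mem_insert, hW2, Finset.mem_erase]
          constructor
          · rintro ⟨hxW, hxb⟩
            by_cases hxz : x = z
            · exact Or.inl hxz
            · exact Or.inr ⟨⟨hxz, ne_of_gt (hab.trans hxb), hxW⟩, hxb⟩
          · rintro (rfl | ⟨⟨_, _, hxW⟩, hxb⟩)
            · exact ⟨hz, hbz'⟩
            · exact ⟨hxW, hxb⟩
        have c1 : (W.filter (· < b)).card = (W2.filter (· < b)).card + 1 := by
          rw [e1, Finset.card_insert_of_notMem]
          simp only [Finset.mem_filter, hW2, Finset.mem_erase]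
          rintro ⟨⟨_, haa, _⟩, _⟩
          exact haa rfl
        have c2 : (W.filter (b < ·)).card = (W2.filter (b < ·)).card + 1 := by
          rw [e2, Finset.card_insert_of_notMem]
          simp only [Finset.mem_filter, hW2, Finset.mem_erase]
          rintro ⟨⟨hzz, _, _⟩, _⟩
          exact hzz rfl
        rw [hf]; simp only [c1, c2]
        omega
      have hW2sub : W2 ⊂ W := by
        rw [hW2]
        exact lt_of_le_of_lt (Finset.erase_subset _ _ : (W.erase a).erase z ⊆ W.erase a)
          (Finset.erase_ssubset ha)
      have hih := ih W2 hW2sub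
      have hsum2 : ∑ b ∈ W2, f b
          = (∑ b ∈ W2, min ((W2.filter (· < b)).card) ((W2.filter (b < ·)).card)) + W2.card := by
        rw [Finset.sum_congr rfl hterm, Finset.sum_add_distrib]
        simp
      rw [hsplit, hfa, hfz, hsum2, hW2card]
      have hq : ∀ m : ℕ, 2 ≤ m → (m - 2 - 1)^2/4 + (m - 2) ≤ (m - 1)^2/4 := by
        intro m hm
        rcases Nat.exists_eq_add_of_le hm with ⟨j, rfl⟩
        rcases j with _ | i
        · simp
        · have h1 : 2 + (i+1) - 2 - 1 = i := by omega
          have h2 : 2 + (i+1) - 2 = i + 1 := by omega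
          have h3 : 2 + (i+1) - 1 = i + 2 := by omega
          rw [h1, h2, h3]
          have : (i+2)^2 = i^2 + (i+1)*4 := by ring
          rw [this, Nat.add_mul_div_right _ _ (by norm_num : 0 < 4)]
      rw [hW2card] at hih
      have hqq := hq W.card hsmall
      omega

private abbrev lle15 : ℝ ×ₗ ℝ → ℝ ×ₗ ℝ → Prop := (· ≤ ·)

private lemma sort3 {x y z : ℝ ×ₗ ℝ} (hxy : x < y) (hyz : y < z) :
    ({x, y, z} : Finset (ℝ ×ₗ ℝ)).sort lle15 = [x, y, z] := by
  have hxz : x < z := hxy.trans hyz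
  rw [Finset.sort_insert]
  · rw [Finset.sort_insert]
    · rw [Finset.sort_singleton]
    · intro b hb; rw [Finset.mem_singleton] at hb; subst hb; exact le_of_lt hyz
    · rw [Finset.mem_singleton]; exact ne_of_lt hyz
  · intro b hb
    simp only [Finset.mem_insert, Finset.mem_singleton] at hb
    rcases hb with rfl | rfl
    · exact le_of_lt hxy
    · exact le_of_lt hxz
  · simp only [Finset.mem_insert, Finset.mem_singleton]
    push_neg
    exact ⟨ne_of_lt hxy, ne_of_lt hxz⟩

private def bot15 (P : Finset ℂ) : ℝ ×ₗ ℝ := ((P.image g15).sort lle15).getD 0 (toLex (0,0))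
private def mid15 (P : Finset ℂ) : ℝ ×ₗ ℝ := ((P.image g15).sort lle15).getD 1 (toLex (0,0))
private def top15 (P : Finset ℂ) : ℝ ×ₗ ℝ := ((P.image g15).sort lle15).getD 2 (toLex (0,0))

private lemma order3 {x y z : ℂ} (hxy : x ≠ y) (hxz : x ≠ z) (hyz : y ≠ z) :
    ∃ a b c : ℂ, ({x, y, z} : Finset ℂ) = {a, b, c} ∧ g15 a < g15 b ∧ g15 b < g15 c := by
  have gxy := (g15_inj.ne_iff).mpr hxy
  have gxz := (g15_inj.ne_iff).mpr hxz
  have gyz := (g15_inj.ne_iff).mpr hyz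
  have perm : ∀ (u v w : ℂ), ({x,y,z} : Finset ℂ) = {u,v,w} →
      ({x,y,z} : Finset ℂ) = {u,w,v} := by
    intro u v w h; rw [h]; ext t; simp only [Finset.mem_insert, Finset.mem_singleton]; tauto
  rcases lt_trichotomy (g15 x) (g15 y) with h1 | h1 | h1
  · rcases lt_trichotomy (g15 y) (g15 z) with h2 | h2 | h2
    · exact ⟨x, y, z, rfl, h1, h2⟩
    · exact absurd h2 gyz
    · rcases lt_trichotomy (g15 x) (g15 z) with h3 | h3 | h3
      · refine ⟨x, z, y, ?_, h3, h2⟩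
        ext t; simp only [Finset.mem_insert, Finset.mem_singleton]; tauto
      · exact absurd h3 gxz
      · refine ⟨z, x, y, ?_, h3, h1⟩
        ext t; simp only [Finset.mem_insert, Finset.mem_singleton]; tauto
  · exact absurd h1 gxy
  · rcases lt_trichotomy (g15 x) (g15 z) with h2 | h2 | h2
    · refine ⟨y, x, z, ?_, h1, h2⟩
      ext t; simp only [Finset.mem_insert, Finset.mem_singleton]; tauto
    · exact absurd h2 gxz
    · rcases lt_trichotomy (g15 y) (g15 z) with h3 | h3 | h3
      · refine ⟨y, z, x, ?_, h3, h2⟩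
        ext t; simp only [Finset.mem_insert, Finset.mem_singleton]; tauto
      · exact absurd h3 gyz
      · refine ⟨z, y, x, ?_, h3, h1⟩
        ext t; simp only [Finset.mem_insert, Finset.mem_singleton]; tauto

private lemma struct15 {V P : Finset ℂ}
    (hP : P ∈ (V.powersetCard 3).filter
        (fun P => ∃ d : ℝ, 0 < d ∧
          ∀ x ∈ P, ∀ y ∈ P, x ≠ y → ‖x - y‖ = d)) :
    ∃ a b c : ℂ, a ∈ V ∧ b ∈ V ∧ c ∈ V ∧ P = {a, b, c} ∧
      g15 a < g15 b ∧ g15 b < g15 c ∧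
      bot15 P = g15 a ∧ mid15 P = g15 b ∧ top15 P = g15 c ∧
      ‖c - a‖ = ‖b - a‖ ∧
      ‖c - b‖ = ‖b - a‖ ∧
      ‖a - b‖ = ‖c - b‖ ∧
      ‖a - c‖ = ‖c - b‖ := by
  rw [Finset.mem_filter, Finset.mem_powersetCard] at hP
  obtain ⟨⟨hPV, hP3⟩, d, hd, hdist⟩ := hP
  obtain ⟨x, y, z, hxy, hxz, hyz, rfl⟩ := Finset.card_eq_three.mp hP3
  obtain ⟨a, b, c, hset, hab, hbc⟩ := order3 hxy hxz hyz
  have haP : a ∈ ({x,y,z} : Finset ℂ) := by rw [hset]; simp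
  have hbP : b ∈ ({x,y,z} : Finset ℂ) := by rw [hset]; simp
  have hcP : c ∈ ({x,y,z} : Finset ℂ) := by rw [hset]; simp
  have hne_ab : a ≠ b := fun h => absurd (h ▸ hab) (lt_irrefl _)
  have hne_bc : b ≠ c := fun h => absurd (h ▸ hbc) (lt_irrefl _)
  have hne_ac : a ≠ c := fun h => absurd (h ▸ (hab.trans hbc)) (lt_irrefl _)
  have himg : ({x,y,z} : Finset ℂ).image g15 = {g15 a, g15 b, g15 c} := by
    rw [hset]; simp [Finset.image_insert]
  have hsort : (({x,y,z} : Finset ℂ).image g15).sort lle15 = [g15 a, g15 b, g15 c] := by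
    rw [himg]; exact sort3 hab hbc
  refine ⟨a, b, c, hPV haP, hPV hbP, hPV hcP, hset, hab, hbc, ?_, ?_, ?_, ?_, ?_, ?_, ?_⟩
  · rw [bot15, hsort]; rfl
  · rw [mid15, hsort]; rfl
  · rw [top15, hsort]; rfl
  · rw [hdist c hcP a haP hne_ac.symm, hdist b hbP a haP hne_ab.symm]
  · rw [hdist c hcP b hbP hne_bc.symm, hdist b hbP a haP hne_ab.symm]
  · rw [hdist a haP b hbP hne_ab, hdist c hcP b hbP hne_bc.symm]
  · rw [hdist a haP c hcP hne_ac, hdist c hcP b hbP hne_bc.symm]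

end

theorem stmt_15 (n : ℕ) (V : Finset ℂ) (hV : V.card = n) :
    ((V.powersetCard 3).filter
        (fun P => ∃ d : ℝ, 0 < d ∧
          ∀ x ∈ P, ∀ y ∈ P, x ≠ y → ‖x - y‖ = d)).card
      ≤ (n - 1) ^ 2 / 4 := by
  subst hV
  set T := ((V.powersetCard 3).filter
      (fun P => ∃ d : ℝ, 0 < d ∧
        ∀ x ∈ P, ∀ y ∈ P, x ≠ y → ‖x - y‖ = d)) with hT
  set W := V.image g15 with hW
  have hWcard : W.card = V.card := Finset.card_image_of_injective V g15_inj
  have hmaps : ∀ P ∈ T, mid15 P ∈ W := by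
    intro P hP
    obtain ⟨a, b, c, _, hbV, _, _, _, _, _, hmid, _⟩ := struct15 hP
    rw [hmid, hW]
    exact Finset.mem_image_of_mem g15 hbV
  rw [Finset.card_eq_sum_card_fiberwise hmaps]
  have hfiber : ∀ w ∈ W, (T.filter (fun P => mid15 P = w)).card
      ≤ min ((W.filter (· < w)).card) ((W.filter (w < ·)).card) := by
    intro w hw
    rw [Nat.le_min]
    constructor
    · apply Finset.card_le_card_of_injOn bot15
      · intro P hP
        rw [Finset.mem_coe, Finset.mem_filter] at hP
        obtain ⟨hPT, hPm⟩ := hP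
        obtain ⟨a, b, c, haV, _, _, _, hab, _, hbot, hmid, _⟩ := struct15 hPT
        rw [Finset.mem_coe, Finset.mem_filter, hbot]
        exact ⟨Finset.mem_image_of_mem g15 haV, by rw [← hPm, hmid]; exact hab⟩
      · intro P hP P' hP' hbb
        rw [Finset.mem_coe, Finset.mem_filter] at hP hP'
        obtain ⟨hPT, hPm⟩ := hP
        obtain ⟨hPT', hPm'⟩ := hP'
        obtain ⟨a, b, c, _, _, _, hPs, hab, hbc, hbot, hmid, _, d1, d2, _, _⟩ := struct15 hPT
        obtain ⟨a', b', c', _, _, _, hPs', hab', hbc', hbot', hmid', _, d1', d2', _, _⟩ :=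
          struct15 hPT'
        have hb : b = b' := g15_inj (by rw [← hmid, ← hmid', hPm, hPm'])
        have ha : a = a' := g15_inj (by rw [← hbot, ← hbot', hbb])
        subst hb; subst ha
        have hc : c = c' := top_unique15 hab hbc hbc' d1 d2 d1' d2'
        rw [hPs, hPs', hc]
    · apply Finset.card_le_card_of_injOn top15
      · intro P hP
        rw [Finset.mem_coe, Finset.mem_filter] at hP
        obtain ⟨hPT, hPm⟩ := hP
        obtain ⟨a, b, c, _, _, hcV, _, _, hbc, _, hmid, htop, _⟩ := struct15 hPT
        rw [Finset.mem_coe, Finset.mem_filter, htop]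
        exact ⟨Finset.mem_image_of_mem g15 hcV, by rw [← hPm, hmid]; exact hbc⟩
      · intro P hP P' hP' hbb
        rw [Finset.mem_coe, Finset.mem_filter] at hP hP'
        obtain ⟨hPT, hPm⟩ := hP
        obtain ⟨hPT', hPm'⟩ := hP'
        obtain ⟨a, b, c, _, _, _, hPs, hab, hbc, _, hmid, htop, _, _, d3, d4⟩ := struct15 hPT
        obtain ⟨a', b', c', _, _, _, hPs', hab', hbc', _, hmid', htop', _, _, d3', d4'⟩ :=
          struct15 hPT'
        have hb : b = b' := g15_inj (by rw [← hmid, ← hmid', hPm, hPm'])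
        have hc : c = c' := g15_inj (by rw [← htop, ← htop', hbb])
        subst hb; subst hc
        have ha : a = a' := bot_unique15 hab hab' hbc d3 d4 d3' d4'
        rw [hPs, hPs', ha]
  calc ∑ w ∈ W, (T.filter (fun P => mid15 P = w)).card
      ≤ ∑ w ∈ W, min ((W.filter (· < w)).card) ((W.filter (w < ·)).card) :=
        Finset.sum_le_sum hfiber
    _ ≤ (W.card - 1)^2/4 := count15 W
    _ = (V.card - 1)^2/4 := by rw [hWcard]
end

section
/- Let V be a finite subset of ℂ. Then there exists a unit complex number ζ such that the halving lines of V in the three directions ζ, e^{2πi/3}ζ, and e^{4πi/3}ζ are concurrent (pass through a common point). -/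
attribute [local instance] Classical.propDecidable

open Complex

/-- The order `≺_ζ` on ℂ: compare `i·conj ζ·y` and `i·conj ζ·z` lexicographically. -/
def ZetaLt (ζ y z : ℂ) : Prop :=
  (Complex.I * (starRingEnd ℂ) ζ * y).re < (Complex.I * (starRingEnd ℂ) ζ * z).re ∨
    ((Complex.I * (starRingEnd ℂ) ζ * y).re = (Complex.I * (starRingEnd ℂ) ζ * z).re ∧
      (Complex.I * (starRingEnd ℂ) ζ * y).im < (Complex.I * (starRingEnd ℂ) ζ * z).im)

/-- `m` is the ζ-median of the finite set `V`: the middle element when `|V|` is odd,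
and the average of the two middle elements when `|V|` is even. -/
def IsZetaMedian (ζ : ℂ) (V : Finset ℂ) (m : ℂ) : Prop :=
  (Odd V.card ∧ m ∈ V ∧ (V.filter (fun z => ZetaLt ζ z m)).card = (V.card - 1) / 2) ∨
  (Even V.card ∧ ∃ a ∈ V, ∃ b ∈ V, m = (a + b) / 2 ∧
    (V.filter (fun z => ZetaLt ζ z a)).card = V.card / 2 - 1 ∧
    (V.filter (fun z => ZetaLt ζ z b)).card = V.card / 2)

noncomputable section AuxHalving

namespace AuxHalving

/-- real key in direction ζ -/
def gkey (ζ v : ℂ) : ℝ := (Complex.I * (starRingEnd ℂ) ζ * v).re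

def hkey (ζ v : ℂ) : ℝ := (Complex.I * (starRingEnd ℂ) ζ * v).im

lemma zetaLt_iff (ζ y z : ℂ) :
    ZetaLt ζ y z ↔ (gkey ζ y < gkey ζ z ∨ (gkey ζ y = gkey ζ z ∧ hkey ζ y < hkey ζ z)) :=
  Iff.rfl

lemma gkey_mono {ζ y z : ℂ} (h : ZetaLt ζ y z) : gkey ζ y ≤ gkey ζ z := by
  rcases h with h | ⟨h, _⟩
  · exact le_of_lt h
  · exact le_of_eq h

lemma zetaLt_of_gkey_lt {ζ y z : ℂ} (h : gkey ζ y < gkey ζ z) : ZetaLt ζ y z := Or.inl h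

lemma zetaLt_irrefl (ζ y : ℂ) : ¬ ZetaLt ζ y y := by
  rintro (h | ⟨_, h⟩) <;> exact lt_irrefl _ h

lemma zetaLt_asymm {ζ y z : ℂ} (h : ZetaLt ζ y z) : ¬ ZetaLt ζ z y := by
  rintro (h' | ⟨e', h'⟩) <;> rcases h with h | ⟨e, h⟩ <;> linarith

lemma zetaLt_total {ζ y z : ℂ} (hζ : ζ ≠ 0) (hyz : y ≠ z) : ZetaLt ζ y z ∨ ZetaLt ζ z y := by
  have hne : Complex.I * (starRingEnd ℂ) ζ * y ≠ Complex.I * (starRingEnd ℂ) ζ * z := by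
    intro h
    exact hyz (mul_left_cancel₀ (mul_ne_zero Complex.I_ne_zero (by simpa using hζ)) h)
  rcases lt_trichotomy (gkey ζ y) (gkey ζ z) with h | h | h
  · exact Or.inl (Or.inl h)
  · rcases lt_trichotomy (hkey ζ y) (hkey ζ z) with h2 | h2 | h2
    · exact Or.inl (Or.inr ⟨h, h2⟩)
    · exact absurd (Complex.ext h h2) hne
    · exact Or.inr (Or.inr ⟨h.symm, h2⟩)
  · exact Or.inr (Or.inl h)

/-- the lex key into ℝ ×ₗ ℝ -/
def lkey (ζ v : ℂ) : ℝ ×ₗ ℝ := toLex (gkey ζ v, hkey ζ v)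

lemma zetaLt_iff_lkey (ζ y z : ℂ) : ZetaLt ζ y z ↔ lkey ζ y < lkey ζ z := by
  rw [zetaLt_iff, lkey, lkey, Prod.Lex.lt_iff]
  rfl

lemma lkey_injective {ζ : ℂ} (hζ : ζ ≠ 0) : Function.Injective (lkey ζ) := by
  intro y z h
  have h1 : gkey ζ y = gkey ζ z ∧ hkey ζ y = hkey ζ z := by
    have := congrArg (fun p => ((ofLex p).1, (ofLex p).2)) h
    simpa [lkey] using this
  have hmul : Complex.I * (starRingEnd ℂ) ζ * y = Complex.I * (starRingEnd ℂ) ζ * z :=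
    Complex.ext h1.1 h1.2
  have hne : Complex.I * (starRingEnd ℂ) ζ ≠ 0 :=
    mul_ne_zero Complex.I_ne_zero (by simpa using hζ)
  exact mul_left_cancel₀ hne hmul

theorem rank_general {β : Type*} [LinearOrder β] (W : Finset β) :
    ∀ k : ℕ, k < W.card → ∃ b ∈ W, (W.filter (· < b)).card = k := by
  intro k
  induction k with
  | zero =>
    intro hk
    have hW : W.Nonempty := Finset.card_pos.mp (by omega)
    refine ⟨W.min' hW, W.min'_mem hW, ?_⟩
    rw [Finset.card_eq_zero, Finset.filter_eq_empty_iff]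
    intro x hx
    exact not_lt.mpr (W.min'_le x hx)
  | succ k ih =>
    intro hk
    obtain ⟨b, hb, hcard⟩ := ih (by omega)
    have hsplit : (W.filter (· < b)).card + (W.filter (fun x => ¬ x < b)).card = W.card :=
      Finset.card_filter_add_card_filter_not _
    have hU : (W.filter (fun x => b < x)).Nonempty := by
      have heq : W.filter (fun x => ¬ x < b) = insert b (W.filter (fun x => b < x)) := by
        ext x
        simp only [Finset.mem_filter, Finset.mem_insert, not_lt]
        constructor
        · rintro ⟨hx, hbx⟩
          rcases eq_or_lt_of_le hbx with h | h
          · exact Or.inl h.symm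
          · exact Or.inr ⟨hx, h⟩
        · rintro (rfl | ⟨hx, h⟩)
          · exact ⟨hb, le_refl _⟩
          · exact ⟨hx, le_of_lt h⟩
      by_contra hne
      rw [Finset.not_nonempty_iff_eq_empty] at hne
      rw [heq, hne] at hsplit
      simp at hsplit
      omega
    set c := (W.filter (fun x => b < x)).min' hU with hc
    have hcmem := (W.filter (fun x => b < x)).min'_mem hU
    rw [Finset.mem_filter] at hcmem
    refine ⟨c, hcmem.1, ?_⟩
    have heq2 : W.filter (· < c) = insert b (W.filter (· < b)) := by
      ext x
      simp only [Finset.mem_filter, Finset.mem_insert]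
      constructor
      · rintro ⟨hx, hxc⟩
        rcases lt_trichotomy x b with h | h | h
        · exact Or.inr ⟨hx, h⟩
        · exact Or.inl h
        · exfalso
          have := Finset.min'_le _ x (Finset.mem_filter.mpr ⟨hx, h⟩)
          exact absurd hxc (not_lt.mpr this)
      · rintro (rfl | ⟨hx, h⟩)
        · exact ⟨hb, hcmem.2⟩
        · exact ⟨hx, lt_trans h hcmem.2⟩
    rw [heq2, Finset.card_insert_of_notMem (by simp), hcard]

/-- existence of the element of any given rank for ZetaLt -/
theorem exists_rank {ζ : ℂ} (hζ : ζ ≠ 0) (V : Finset ℂ) (k : ℕ) (hk : k < V.card) :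
    ∃ a ∈ V, (V.filter (fun z => ZetaLt ζ z a)).card = k := by
  classical
  set W := V.image (lkey ζ) with hW
  have hcard : W.card = V.card := Finset.card_image_of_injective _ (lkey_injective hζ)
  obtain ⟨b, hb, hbcard⟩ := rank_general W k (by omega)
  obtain ⟨a, ha, rfl⟩ := Finset.mem_image.mp hb
  refine ⟨a, ha, ?_⟩
  have himg : (V.filter (fun z => lkey ζ z < lkey ζ a)).image (lkey ζ)
      = W.filter (· < lkey ζ a) := by
    rw [hW, Finset.filter_image]
  have h2 : ((V.filter (fun z => lkey ζ z < lkey ζ a)).image (lkey ζ)).card = k := by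
    rw [himg]
    convert hbcard using 2
    congr!
  rw [Finset.card_image_of_injective _ (lkey_injective hζ)] at h2
  rw [← h2]
  congr 1
  ext z
  simp [zetaLt_iff_lkey]

/-- `k`-th order statistic (0-indexed) of the values `gkey ζ v`, `v ∈ V`. -/
def OS (V : Finset ℂ) (k : ℕ) (ζ : ℂ) : ℝ :=
  if h : k + 1 ≤ V.card then
    (V.powersetCard (k + 1)).attach.inf'
      (Finset.attach_nonempty_iff.mpr (Finset.powersetCard_nonempty.mpr h))
      (fun S => S.1.sup'
        (Finset.card_pos.mp (by rw [(Finset.mem_powersetCard.mp S.2).2]; omega))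
        (gkey ζ))
  else 0

lemma OS_eq {ζ : ℂ} {V : Finset ℂ} {k : ℕ} (hk : k < V.card) {a : ℂ} (haV : a ∈ V)
    (ha : (V.filter (fun z => ZetaLt ζ z a)).card = k) : OS V k ζ = gkey ζ a := by
  rw [OS, dif_pos (by omega)]
  have hanot : a ∉ V.filter (fun z => ZetaLt ζ z a) := by
    simp [zetaLt_irrefl]
  set S₀ : Finset ℂ := insert a (V.filter (fun z => ZetaLt ζ z a)) with hS₀
  have hS₀mem : S₀ ∈ V.powersetCard (k + 1) := by
    rw [Finset.mem_powersetCard]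
    constructor
    · exact Finset.insert_subset haV (Finset.filter_subset _ _)
    · rw [Finset.card_insert_of_notMem hanot, ha]
  apply le_antisymm
  · have hle := Finset.inf'_le
      (f := fun S : {x // x ∈ V.powersetCard (k + 1)} => S.1.sup'
        (Finset.card_pos.mp (by rw [(Finset.mem_powersetCard.mp S.2).2]; omega)) (gkey ζ))
      (Finset.mem_attach _ ⟨S₀, hS₀mem⟩)
    refine le_trans hle (le_of_eq ?_)
    apply le_antisymm
    · apply Finset.sup'_le
      intro x hx
      rcases Finset.mem_insert.mp hx with rfl | hx
      · exact le_refl _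
      · exact gkey_mono (Finset.mem_filter.mp hx).2
    · exact Finset.le_sup' _ (Finset.mem_insert_self _ _)
  · apply Finset.le_inf'
    intro S _
    by_contra hlt
    push_neg at hlt
    have hsub : S.1 ⊆ V.filter (fun z => ZetaLt ζ z a) := by
      intro x hx
      have hxV : x ∈ V := (Finset.mem_powersetCard.mp S.2).1 hx
      have hxle : gkey ζ x ≤ _ := Finset.le_sup' (gkey ζ) hx
      exact Finset.mem_filter.mpr ⟨hxV, zetaLt_of_gkey_lt (lt_of_le_of_lt hxle hlt)⟩
    have hcard := Finset.card_le_card hsub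
    rw [(Finset.mem_powersetCard.mp S.2).2, ha] at hcard
    omega

lemma gkey_continuous (v : ℂ) : Continuous fun ζ => gkey ζ v := by
  unfold gkey
  fun_prop

lemma OS_continuous (V : Finset ℂ) (k : ℕ) : Continuous (OS V k) := by
  by_cases h : k + 1 ≤ V.card
  · have : OS V k = fun ζ => (V.powersetCard (k + 1)).attach.inf'
        (Finset.attach_nonempty_iff.mpr (Finset.powersetCard_nonempty.mpr h))
        (fun S => S.1.sup'
          (Finset.card_pos.mp (by rw [(Finset.mem_powersetCard.mp S.2).2]; omega))
          (gkey ζ)) := by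
      funext ζ
      rw [OS, dif_pos h]
    rw [this]
    apply Continuous.finset_inf'_apply
    intro S _
    apply Continuous.finset_sup'_apply
    intro v _
    exact gkey_continuous v
  · have : OS V k = fun _ => (0 : ℝ) := by
      funext ζ
      rw [OS, dif_neg h]
    rw [this]
    exact continuous_const

lemma gkey_neg (ζ v : ℂ) : gkey (-ζ) v = - gkey ζ v := by
  simp only [gkey, map_neg, mul_neg, neg_mul, Complex.neg_re]

lemma hkey_neg (ζ v : ℂ) : hkey (-ζ) v = - hkey ζ v := by
  simp only [hkey, map_neg, mul_neg, neg_mul, Complex.neg_im]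

lemma zetaLt_neg (ζ y z : ℂ) : ZetaLt (-ζ) y z ↔ ZetaLt ζ z y := by
  simp only [zetaLt_iff, gkey_neg, hkey_neg]
  constructor
  · rintro (h | ⟨h1, h2⟩)
    · exact Or.inl (by linarith)
    · exact Or.inr ⟨by linarith, by linarith⟩
  · rintro (h | ⟨h1, h2⟩)
    · exact Or.inl (by linarith)
    · exact Or.inr ⟨by linarith, by linarith⟩

lemma rank_neg {ζ a : ℂ} (hζ : ζ ≠ 0) {V : Finset ℂ} (haV : a ∈ V) {k : ℕ}
    (h : (V.filter (fun z => ZetaLt ζ z a)).card = k) :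
    (V.filter (fun z => ZetaLt (-ζ) z a)).card = V.card - 1 - k := by
  have h1 : V.filter (fun z => ZetaLt (-ζ) z a) = V.filter (fun z => ZetaLt ζ a z) := by
    ext z
    simp [zetaLt_neg]
  have hsplit : (V.filter (fun z => ZetaLt ζ z a)).card
      + (V.filter (fun z => ¬ ZetaLt ζ z a)).card = V.card :=
    Finset.card_filter_add_card_filter_not _
  have h2 : V.filter (fun z => ¬ ZetaLt ζ z a) = insert a (V.filter (fun z => ZetaLt ζ a z)) := by
    ext z
    simp only [Finset.mem_filter, Finset.mem_insert]
    constructor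
    · rintro ⟨hz, hn⟩
      by_cases hza : z = a
      · exact Or.inl hza
      · rcases zetaLt_total hζ hza with hlt | hlt
        · exact absurd hlt hn
        · exact Or.inr ⟨hz, hlt⟩
    · rintro (rfl | ⟨hz, hlt⟩)
      · exact ⟨haV, zetaLt_irrefl _ _⟩
      · exact ⟨hz, fun hcon => zetaLt_asymm hlt hcon⟩
  have hnotmem : a ∉ V.filter (fun z => ZetaLt ζ a z) := by simp [zetaLt_irrefl]
  rw [h2, Finset.card_insert_of_notMem hnotmem, h] at hsplit
  rw [h1]
  omega

lemma gkey_add (ζ x y : ℂ) : gkey ζ (x + y) = gkey ζ x + gkey ζ y := by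
  simp [gkey, mul_add]

lemma gkey_sub (ζ x y : ℂ) : gkey ζ (x - y) = gkey ζ x - gkey ζ y := by
  simp [gkey, mul_sub]

lemma gkey_real_smul (ζ : ℂ) (t : ℝ) (w : ℂ) : gkey ζ ((t : ℂ) * w) = t * gkey ζ w := by
  have h : Complex.I * (starRingEnd ℂ) ζ * ((t : ℂ) * w)
      = (t : ℂ) * (Complex.I * (starRingEnd ℂ) ζ * w) := by ring
  rw [gkey, h, Complex.re_ofReal_mul, gkey]

lemma gkey_avg (ζ a b : ℂ) : gkey ζ ((a + b) / 2) = (gkey ζ a + gkey ζ b) / 2 := by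
  have h : ((a + b) / 2 : ℂ) = (((2 : ℝ)⁻¹ : ℝ) : ℂ) * (a + b) := by
    push_cast
    ring
  rw [h, gkey_real_smul, gkey_add]
  ring

/-- the median offset -/
def c0 (V : Finset ℂ) (ζ : ℂ) : ℝ := (OS V ((V.card - 1) / 2) ζ + OS V (V.card / 2) ζ) / 2

lemma c0_continuous (V : Finset ℂ) : Continuous (c0 V) := by
  unfold c0
  exact ((OS_continuous V _).add (OS_continuous V _)).div_const 2

lemma median_exists {ζ : ℂ} (hζ : ζ ≠ 0) {V : Finset ℂ} (hV : V.Nonempty) :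
    ∃ m, IsZetaMedian ζ V m ∧ gkey ζ m = c0 V ζ := by
  have hn : 1 ≤ V.card := hV.card_pos
  rcases Nat.even_or_odd V.card with he | ho
  · obtain ⟨r, hr⟩ := he
    have h2 : 2 ≤ V.card := by omega
    obtain ⟨a, haV, hak⟩ := exists_rank hζ V (V.card / 2 - 1) (by omega)
    obtain ⟨b, hbV, hbk⟩ := exists_rank hζ V (V.card / 2) (by omega)
    refine ⟨(a + b) / 2, Or.inr ⟨⟨r, hr⟩, a, haV, b, hbV, rfl, hak, hbk⟩, ?_⟩
    have hidx : (V.card - 1) / 2 = V.card / 2 - 1 := by omega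
    have hga : OS V ((V.card - 1) / 2) ζ = gkey ζ a := by
      rw [hidx]
      exact OS_eq (by omega) haV hak
    have hgb : OS V (V.card / 2) ζ = gkey ζ b := OS_eq (by omega) hbV hbk
    rw [gkey_avg, c0, hga, hgb]
  · obtain ⟨r, hr⟩ := ho
    obtain ⟨a, haV, hak⟩ := exists_rank hζ V ((V.card - 1) / 2) (by omega)
    refine ⟨a, Or.inl ⟨⟨r, hr⟩, haV, hak⟩, ?_⟩
    have hga : OS V ((V.card - 1) / 2) ζ = gkey ζ a := OS_eq (by omega) haV hak
    have hidx : V.card / 2 = (V.card - 1) / 2 := by omega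
    rw [c0, hidx, hga]
    ring

lemma c0_neg {ζ : ℂ} (hζ : ζ ≠ 0) {V : Finset ℂ} (hV : V.Nonempty) :
    c0 V (-ζ) = - c0 V ζ := by
  have hn : 1 ≤ V.card := hV.card_pos
  obtain ⟨a, haV, hak⟩ := exists_rank hζ V ((V.card - 1) / 2) (by omega)
  obtain ⟨b, hbV, hbk⟩ := exists_rank hζ V (V.card / 2) (by omega)
  have ha' := rank_neg hζ haV hak
  have hb' := rank_neg hζ hbV hbk
  have e1 : V.card - 1 - (V.card - 1) / 2 = V.card / 2 := by omega
  have e2 : V.card - 1 - V.card / 2 = (V.card - 1) / 2 := by omega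
  rw [e1] at ha'
  rw [e2] at hb'
  have o1 : OS V ((V.card - 1) / 2) (-ζ) = gkey (-ζ) b := OS_eq (by omega) hbV hb'
  have o2 : OS V (V.card / 2) (-ζ) = gkey (-ζ) a := OS_eq (by omega) haV ha'
  have o3 : OS V ((V.card - 1) / 2) ζ = gkey ζ a := OS_eq (by omega) haV hak
  have o4 : OS V (V.card / 2) ζ = gkey ζ b := OS_eq (by omega) hbV hbk
  rw [c0, c0, o1, o2, o3, o4, gkey_neg, gkey_neg]
  ring

lemma eq_real_mul_of_gkey_eq_zero {ζ w : ℂ} (hζ : ζ ≠ 0) (h : gkey ζ w = 0) :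
    ∃ t : ℝ, w = (t : ℂ) * ζ := by
  set u := w / ζ with hu
  have hw : u * ζ = w := div_mul_cancel₀ w hζ
  have h1 : Complex.I * (starRingEnd ℂ) ζ * w
      = ((Complex.normSq ζ : ℝ) : ℂ) * (Complex.I * u) := by
    rw [← hw, ← Complex.mul_conj ζ]
    ring
  have h2 : gkey ζ w = Complex.normSq ζ * (Complex.I * u).re := by
    rw [gkey, h1, Complex.re_ofReal_mul]
  have hnsq : Complex.normSq ζ ≠ 0 := by
    simpa [Complex.normSq_eq_zero] using hζ
  have h3 : (Complex.I * u).re = 0 := by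
    rw [h2] at h
    rcases mul_eq_zero.mp h with h' | h'
    · exact absurd h' hnsq
    · exact h'
  have him : u.im = 0 := by
    simpa [Complex.mul_re] using h3
  refine ⟨u.re, ?_⟩
  have hre : ((u.re : ℝ) : ℂ) = u := by
    apply Complex.ext <;> simp [him]
  rw [hre, hw]

end AuxHalving

end AuxHalving

section OmegaFacts

open AuxHalving

local notation "ω" => Complex.exp (2 * Real.pi * Complex.I / 3)
local notation "σ" => Complex.exp (4 * Real.pi * Complex.I / 3)

lemma omega_arg : (2 * (Real.pi : ℂ) * Complex.I / 3) = ((2 * Real.pi / 3 : ℝ) : ℂ) * Complex.I := by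
  push_cast
  ring

lemma omega_im : (ω).im = Real.sin (2 * Real.pi / 3) := by
  rw [omega_arg, Complex.exp_ofReal_mul_I_im]

lemma sin_two_pi_div_three_pos : 0 < Real.sin (2 * Real.pi / 3) := by
  apply Real.sin_pos_of_pos_of_lt_pi
  · positivity
  · linarith [Real.pi_pos]

lemma omega_ne_one : (ω) ≠ 1 := by
  intro h
  have := congrArg Complex.im h
  rw [omega_im] at this
  simp at this
  linarith [sin_two_pi_div_three_pos]

lemma omega_cube : (ω) ^ 3 = 1 := by
  rw [← Complex.exp_nat_mul]
  rw [show ((3 : ℕ) : ℂ) * (2 * (Real.pi : ℂ) * Complex.I / 3) = 2 * (Real.pi : ℂ) * Complex.I by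
    push_cast; ring]
  exact Complex.exp_two_pi_mul_I

lemma sigma_eq : (σ) = (ω) ^ 2 := by
  rw [sq, ← Complex.exp_add]
  congr 1
  ring

lemma one_add_omega_add_sigma : 1 + (ω) + (σ) = 0 := by
  have h : ((ω) - 1) * (1 + (ω) + (ω) ^ 2) = 0 := by
    linear_combination omega_cube
  rcases mul_eq_zero.mp h with h' | h'
  · exact absurd (sub_eq_zero.mp h') omega_ne_one
  · rw [sigma_eq]
    exact h'

end OmegaFacts

section MainAux

open AuxHalving

noncomputable def FF (V : Finset ℂ) (ζ : ℂ) : ℝ :=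
  c0 V ζ + c0 V (Complex.exp (2 * Real.pi * Complex.I / 3) * ζ)
    + c0 V (Complex.exp (4 * Real.pi * Complex.I / 3) * ζ)

lemma FF_continuous (V : Finset ℂ) : Continuous (FF V) := by
  unfold FF
  exact (((c0_continuous V).add
    ((c0_continuous V).comp (continuous_const.mul continuous_id))).add
    ((c0_continuous V).comp (continuous_const.mul continuous_id)))

lemma FF_neg (V : Finset ℂ) (hV : V.Nonempty) {ζ : ℂ} (hζ : ζ ≠ 0) :
    FF V (-ζ) = - FF V ζ := by
  unfold FF
  rw [mul_neg, mul_neg, c0_neg hζ hV,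
    c0_neg (mul_ne_zero (Complex.exp_ne_zero _) hζ) hV,
    c0_neg (mul_ne_zero (Complex.exp_ne_zero _) hζ) hV]
  ring

lemma exists_FF_zero (V : Finset ℂ) (hV : V.Nonempty) :
    ∃ ζ : ℂ, ‖ζ‖ = 1 ∧ FF V ζ = 0 := by
  set G : ℝ → ℝ := fun θ => FF V (Complex.exp ((θ : ℂ) * Complex.I)) with hG
  have hGc : Continuous G := by
    apply (FF_continuous V).comp
    apply Complex.continuous_exp.comp
    fun_prop
  have hG0 : G 0 = FF V 1 := by simp [hG]
  have hGpi : G Real.pi = - FF V 1 := by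
    have h1 : Complex.exp ((Real.pi : ℂ) * Complex.I) = -1 := Complex.exp_pi_mul_I
    have : G Real.pi = FF V (-1) := by rw [hG]; simp only [h1]
    rw [this, show (-1 : ℂ) = -(1 : ℂ) from rfl, FF_neg V hV one_ne_zero]
  have hpi : (0 : ℝ) ≤ Real.pi := le_of_lt Real.pi_pos
  rcases le_total (G 0) 0 with h | h
  · have h0mem : (0 : ℝ) ∈ Set.Icc (G 0) (G Real.pi) := by
      constructor
      · exact h
      · rw [hGpi, ← hG0]; linarith
    obtain ⟨θ, _, hθ0⟩ := intermediate_value_Icc hpi hGc.continuousOn h0mem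
    exact ⟨Complex.exp ((θ : ℂ) * Complex.I), Complex.norm_exp_ofReal_mul_I θ, hθ0⟩
  · have h0mem : (0 : ℝ) ∈ Set.Icc (G Real.pi) (G 0) := by
      constructor
      · rw [hGpi, ← hG0]; linarith
      · exact h
    obtain ⟨θ, _, hθ0⟩ := intermediate_value_Icc' hpi hGc.continuousOn h0mem
    exact ⟨Complex.exp ((θ : ℂ) * Complex.I), Complex.norm_exp_ofReal_mul_I θ, hθ0⟩

end MainAux

open AuxHalving

theorem stmt_17 (V : Finset ℂ) (hV : V.Nonempty) :
    ∃ ζ : ℂ, ‖ζ‖ = 1 ∧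
      ∃ m₁ m₂ m₃ p : ℂ,
        IsZetaMedian ζ V m₁ ∧
        IsZetaMedian (Complex.exp (2 * Real.pi * Complex.I / 3) * ζ) V m₂ ∧
        IsZetaMedian (Complex.exp (4 * Real.pi * Complex.I / 3) * ζ) V m₃ ∧
        (∃ t : ℝ, p = m₁ + (t : ℂ) * ζ) ∧
        (∃ t : ℝ, p = m₂ + (t : ℂ) * (Complex.exp (2 * Real.pi * Complex.I / 3) * ζ)) ∧
        (∃ t : ℝ, p = m₃ + (t : ℂ) * (Complex.exp (4 * Real.pi * Complex.I / 3) * ζ)) := by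
  obtain ⟨ζ, habs, hF⟩ := exists_FF_zero V hV
  have hζ0 : ζ ≠ 0 := by
    intro h
    rw [h] at habs
    simp at habs
  set ω : ℂ := Complex.exp (2 * Real.pi * Complex.I / 3) with hωdef
  set σ' : ℂ := Complex.exp (4 * Real.pi * Complex.I / 3) with hσdef
  have hω0 : ω ≠ 0 := Complex.exp_ne_zero _
  have hσ0 : σ' ≠ 0 := Complex.exp_ne_zero _
  obtain ⟨m₁, hm₁, hg₁⟩ := median_exists hζ0 hV
  obtain ⟨m₂, hm₂, hg₂⟩ := median_exists (mul_ne_zero hω0 hζ0) hV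
  obtain ⟨m₃, hm₃, hg₃⟩ := median_exists (mul_ne_zero hσ0 hζ0) hV
  have hnsq : ((starRingEnd ℂ) ζ) * ζ = 1 := by
    rw [mul_comm, Complex.mul_conj, Complex.normSq_eq_norm_sq, habs]
    norm_num
  have hkey1 : gkey ζ ζ = 0 := by
    rw [gkey, mul_assoc, hnsq, mul_one]
    simp
  have hkey2 : gkey (ω * ζ) ζ = ω.im := by
    have h1 : Complex.I * (starRingEnd ℂ) (ω * ζ) * ζ
        = (Complex.I * (starRingEnd ℂ) ω) * ((starRingEnd ℂ) ζ * ζ) := by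
      rw [map_mul]
      ring
    rw [gkey, h1, hnsq, mul_one]
    simp [Complex.mul_re]
  have hωim : ω.im ≠ 0 := by
    rw [hωdef, omega_im]
    exact ne_of_gt sin_two_pi_div_three_pos
  set t : ℝ := (c0 V (ω * ζ) - gkey (ω * ζ) m₁) / ω.im with ht
  set p : ℂ := m₁ + (t : ℂ) * ζ with hp
  have hp2 : gkey (ω * ζ) p = c0 V (ω * ζ) := by
    rw [hp, gkey_add, gkey_real_smul, hkey2, ht]
    field_simp
    ring
  have hp1 : gkey ζ p = c0 V ζ := by
    rw [hp, gkey_add, gkey_real_smul, hkey1, mul_zero, add_zero, hg₁]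
  have hsum : ∀ w : ℂ, gkey ζ w + gkey (ω * ζ) w + gkey (σ' * ζ) w = 0 := by
    intro w
    have hc : (starRingEnd ℂ) ζ + (starRingEnd ℂ) (ω * ζ) + (starRingEnd ℂ) (σ' * ζ) = 0 := by
      rw [← map_add, ← map_add, show ζ + ω * ζ + σ' * ζ = (1 + ω + σ') * ζ from by ring,
        hωdef, hσdef, one_add_omega_add_sigma, zero_mul, map_zero]
    have h3 : Complex.I * (starRingEnd ℂ) ζ * w + Complex.I * (starRingEnd ℂ) (ω * ζ) * w
        + Complex.I * (starRingEnd ℂ) (σ' * ζ) * w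
        = Complex.I * ((starRingEnd ℂ) ζ + (starRingEnd ℂ) (ω * ζ) + (starRingEnd ℂ) (σ' * ζ)) * w := by
      ring
    rw [hc, mul_zero, zero_mul] at h3
    rw [gkey, gkey, gkey, ← Complex.add_re, ← Complex.add_re, h3]
    simp
  have hF' : c0 V ζ + c0 V (ω * ζ) + c0 V (σ' * ζ) = 0 := by
    simpa [FF, hωdef, hσdef] using hF
  have hp3 : gkey (σ' * ζ) p = c0 V (σ' * ζ) := by
    have h1 := hsum p
    rw [hp1, hp2] at h1
    linarith
  refine ⟨ζ, habs, m₁, m₂, m₃, p, hm₁, hm₂, hm₃, ⟨t, hp⟩, ?_, ?_⟩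
  · have hz : gkey (ω * ζ) (p - m₂) = 0 := by
      rw [gkey_sub, hp2, hg₂, sub_self]
    obtain ⟨t₂, ht₂⟩ := eq_real_mul_of_gkey_eq_zero (mul_ne_zero hω0 hζ0) hz
    exact ⟨t₂, by linear_combination ht₂⟩
  · have hz : gkey (σ' * ζ) (p - m₃) = 0 := by
      rw [gkey_sub, hp3, hg₃, sub_self]
    obtain ⟨t₃, ht₃⟩ := eq_real_mul_of_gkey_eq_zero (mul_ne_zero hσ0 hζ0) hz
    exact ⟨t₃, by linear_combination ht₃⟩
end

section
/- Let P be the pattern of all sets directly similar to {0,1,3} in ℝ. For any n-point set V ⊆ ℝ, the number of subsets of V directly similar to {0,1,3} is at most ⌊(n-r)(n+r-2)/4⌋ where r = n mod 2, and the set {0,1,…,n-1} contains at least (n-s)(n+s-3)/6 such subsets, where s = n mod 3. -/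
attribute [local instance] Classical.propDecidable


lemma nat_set_inj (a b a' b' : ℕ)
    (h : ({b, b+(a+1), b+3*(a+1)} : Finset ℕ) = {b', b'+(a'+1), b'+3*(a'+1)}) : a = a' ∧ b = b' := by
  have h1 := Finset.ext_iff.mp h b
  have h3 := Finset.ext_iff.mp h b'
  simp only [Finset.mem_insert, Finset.mem_singleton, true_or, true_iff, iff_true,
    or_true] at h1 h3
  have hbb : b = b' := by omega
  subst hbb
  have h5 := Finset.ext_iff.mp h (b+(a+1))
  have h6 := Finset.ext_iff.mp h (b+(a'+1))
  simp only [Finset.mem_insert, Finset.mem_singleton, true_or, true_iff, iff_true,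
    or_true] at h5 h6
  omega

lemma key_low (m : ℕ) : (m+3 - (m+3) % 3) * (m+3 + (m+3) % 3 - 3) ≤ (m - m % 3) * (m + m % 3 - 3) + 6*m := by
  have hm3 : (m+3)%3 = m%3 := by omega
  rw [hm3]
  rcases Nat.lt_or_ge m 3 with h | h
  · interval_cases m <;> decide
  · zify [show m % 3 ≤ m by omega, show 3 ≤ m + m % 3 by omega,
      show m % 3 ≤ m + 3 by omega, show 3 ≤ m + 3 + m % 3 by omega]
    nlinarith [sq_nonneg ((m:ℤ) - m % 3)]

lemma arith_low : ∀ n : ℕ, (n - n % 3) * (n + n % 3 - 3) ≤ 6 * ∑ a ∈ Finset.range n, (n - 3*(a+1)) := by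
  intro n
  induction n using Nat.strong_induction_on with
  | _ n ih =>
    match n with
    | 0 => simp
    | 1 => simp
    | 2 => decide
    | (m+3) =>
      have h1 : ∑ a ∈ Finset.range (m+3), (m+3 - 3*(a+1))
          = (∑ a ∈ Finset.range m, (m - 3*(a+1))) + m := by
        rw [Finset.sum_range_succ', Finset.sum_range_succ, Finset.sum_range_succ]
        have h2 : ∀ a ∈ Finset.range m, (m+3 - 3*(a+1+1)) = m - 3*(a+1) := by
          intro a _; omega
        rw [Finset.sum_congr rfl h2]
        omega
      rw [h1]
      have ihm := ih m (by omega)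
      have := key_low m
      omega

lemma lower (n : ℕ) : (n - n % 3) * (n + n % 3 - 3) / 6 ≤
      ((((Finset.range n).image (fun i => (i : ℝ))).powersetCard 3).filter
          (fun Q => ∃ b a : ℝ, 0 < a ∧ Q = {b, b + a, b + 3 * a})).card := by
  have e : Finset.image (fun i : ℝ => i) (Finset.range n >>= fun a => pure (a:ℝ))
      = Finset.image (fun i : ℕ => (i:ℝ)) (Finset.range n) := by
    ext x
    simp [Bind.bind, Finset.mem_sup]
  rw [e]
  set S := (Finset.range n).sigma (fun a => Finset.range (n - 3*(a+1))) with hS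
  have hST : S.card ≤ (((Finset.image (fun i : ℕ => (i:ℝ)) (Finset.range n)).powersetCard 3).filter
          (fun Q => ∃ b a : ℝ, 0 < a ∧ Q = {b, b + a, b + 3 * a})).card := by
    apply Finset.card_le_card_of_injOn
      (fun p => Finset.image (fun i : ℕ => (i:ℝ)) {p.2, p.2 + (p.1+1), p.2 + 3*(p.1+1)})
    · rintro ⟨a, b⟩ hp
      simp only [hS, Finset.mem_coe, Finset.mem_sigma, Finset.mem_range] at hp
      obtain ⟨ha, hb⟩ := hp
      have hlt : b + 3*(a+1) < n := by omega
      rw [Finset.mem_coe, Finset.mem_filter, Finset.mem_powersetCard]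
      refine ⟨⟨?_, ?_⟩, (b:ℝ), ((a:ℝ)+1), by positivity, ?_⟩
      · apply Finset.image_subset_image
        intro x hx
        simp only [Finset.mem_insert, Finset.mem_singleton] at hx
        simp only [Finset.mem_range]
        omega
      · rw [Finset.card_image_of_injective _ Nat.cast_injective]
        rw [Finset.card_insert_of_notMem
             (by simp only [Finset.mem_insert, Finset.mem_singleton]; omega),
            Finset.card_insert_of_notMem
             (by simp only [Finset.mem_singleton]; omega), Finset.card_singleton]
      · simp only [Finset.image_insert, Finset.image_singleton]
        push_cast
        ring_nf
    · rintro ⟨a, b⟩ _ ⟨a', b'⟩ _ hfeq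
      simp only at hfeq
      have h2 := Finset.image_injective (Nat.cast_injective (R := ℝ)) hfeq
      obtain ⟨e1, e2⟩ := nat_set_inj a b a' b' h2
      simp [e1, e2]
  have hcard : S.card = ∑ a ∈ Finset.range n, (n - 3*(a+1)) := by
    rw [hS, Finset.card_sigma]
    simp
  calc (n - n % 3) * (n + n % 3 - 3) / 6 ≤ (6 * ∑ a ∈ Finset.range n, (n - 3*(a+1))) / 6 :=
        Nat.div_le_div_right (arith_low n)
    _ = S.card := by rw [Nat.mul_div_cancel_left _ (by norm_num), hcard]
    _ ≤ _ := hST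


lemma key_up (m : ℕ) : (m - m % 2) * (m + m % 2 - 2) + 4*m ≤ (m+2 - (m+2) % 2) * (m+2 + (m+2) % 2 - 2) := by
  have hm2 : (m+2)%2 = m%2 := by omega
  rw [hm2]
  rcases Nat.lt_or_ge m 2 with h | h
  · interval_cases m <;> decide
  · zify [show m % 2 ≤ m by omega, show 2 ≤ m + m % 2 by omega,
      show m % 2 ≤ m + 2 by omega, show 2 ≤ m + 2 + m % 2 by omega]
    nlinarith [sq_nonneg ((m:ℤ) - m % 2)]

lemma arith_up : ∀ n : ℕ, 4 * ∑ i ∈ Finset.range n, min i (n - 1 - i) ≤ (n - n % 2) * (n + n % 2 - 2) := by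
  intro n
  induction n using Nat.strong_induction_on with
  | _ n ih =>
    match n with
    | 0 => simp
    | 1 => simp
    | (m+2) =>
      have h1 : ∑ i ∈ Finset.range (m+2), min i (m+2-1-i)
          = (∑ i ∈ Finset.range m, min i (m-1-i)) + m := by
        rw [Finset.sum_range_succ, Finset.sum_range_succ']
        have h2 : ∀ i ∈ Finset.range m, min (i+1) (m+2-1-(i+1)) = min i (m-1-i) + 1 := by
          intro i hi
          simp only [Finset.mem_range] at hi
          omega
        rw [Finset.sum_congr rfl h2, Finset.sum_add_distrib]
        simp
      rw [h1]
      have ihm := ih m (by omega)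
      have := key_up m
      omega

noncomputable def lo (Q : Finset ℝ) : ℝ := if h : Q.Nonempty then Q.min' h else 0
noncomputable def hi (Q : Finset ℝ) : ℝ := if h : Q.Nonempty then Q.max' h else 0
noncomputable def mid (Q : Finset ℝ) : ℝ := (∑ x ∈ Q, x + lo Q) / 4

lemma lo_triple (b a : ℝ) (ha : 0 < a) : lo {b, b+a, b+3*a} = b := by
  have hne : ({b, b+a, b+3*a} : Finset ℝ).Nonempty := ⟨b, by simp⟩
  rw [lo, dif_pos hne]
  apply le_antisymm (Finset.min'_le _ b (by simp))
  apply Finset.le_min'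
  intro y hy
  simp only [Finset.mem_insert, Finset.mem_singleton] at hy
  rcases hy with rfl | rfl | rfl <;> linarith

lemma hi_triple (b a : ℝ) (ha : 0 < a) : hi {b, b+a, b+3*a} = b + 3*a := by
  have hne : ({b, b+a, b+3*a} : Finset ℝ).Nonempty := ⟨b, by simp⟩
  rw [hi, dif_pos hne]
  apply le_antisymm
  · apply Finset.max'_le
    intro y hy
    simp only [Finset.mem_insert, Finset.mem_singleton] at hy
    rcases hy with rfl | rfl | rfl <;> linarith
  · exact Finset.le_max' _ _ (by simp)

lemma sum_triple (b a : ℝ) (ha : 0 < a) : ∑ x ∈ ({b, b+a, b+3*a} : Finset ℝ), x = 3*b + 4*a := by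
  have h1 : b ∉ ({b+a, b+3*a} : Finset ℝ) := by
    simp only [Finset.mem_insert, Finset.mem_singleton]
    push_neg
    constructor <;> intro h <;> linarith
  have h2 : b+a ∉ ({b+3*a} : Finset ℝ) := by
    simp only [Finset.mem_singleton]
    intro h; linarith
  rw [Finset.sum_insert h1, Finset.sum_insert h2, Finset.sum_singleton]
  ring

lemma mid_triple (b a : ℝ) (ha : 0 < a) : mid {b, b+a, b+3*a} = b + a := by
  rw [mid, sum_triple b a ha, lo_triple b a ha]
  ring

lemma fiber_le (V : Finset ℝ) (v : ℝ)
    (F : Finset (Finset ℝ))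
    (hF : F = (V.powersetCard 3).filter (fun Q => ∃ b a : ℝ, 0 < a ∧ Q = {b, b + a, b + 3 * a})) :
    (F.filter (fun Q => mid Q = v)).card ≤
      min ((V.filter (· < v)).card) ((V.filter (fun x => v < x)).card) := by
  classical
  apply le_min
  · apply Finset.card_le_card_of_injOn lo
    · intro Q hQ
      rw [Finset.mem_coe, Finset.mem_filter, hF, Finset.mem_filter, Finset.mem_powersetCard] at hQ
      obtain ⟨⟨⟨hsub, _⟩, b, a, ha, rfl⟩, hmid⟩ := hQ
      rw [mid_triple b a ha] at hmid
      rw [lo_triple b a ha, Finset.mem_coe, Finset.mem_filter]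
      exact ⟨hsub (by simp), by linarith⟩
    · intro Q1 hQ1 Q2 hQ2 hlo
      simp only [Finset.mem_coe, Finset.mem_filter, hF, Finset.mem_powersetCard] at hQ1 hQ2
      obtain ⟨⟨_, b1, a1, ha1, rfl⟩, hm1⟩ := hQ1
      obtain ⟨⟨_, b2, a2, ha2, rfl⟩, hm2⟩ := hQ2
      rw [mid_triple b1 a1 ha1] at hm1
      rw [mid_triple b2 a2 ha2] at hm2
      rw [lo_triple b1 a1 ha1, lo_triple b2 a2 ha2] at hlo
      have hae : a1 = a2 := by linarith
      rw [hlo, hae]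
  · apply Finset.card_le_card_of_injOn hi
    · intro Q hQ
      rw [Finset.mem_coe, Finset.mem_filter, hF, Finset.mem_filter, Finset.mem_powersetCard] at hQ
      obtain ⟨⟨⟨hsub, _⟩, b, a, ha, rfl⟩, hmid⟩ := hQ
      rw [mid_triple b a ha] at hmid
      rw [hi_triple b a ha, Finset.mem_coe, Finset.mem_filter]
      exact ⟨hsub (by simp), by linarith⟩
    · intro Q1 hQ1 Q2 hQ2 hhi
      simp only [Finset.mem_coe, Finset.mem_filter, hF, Finset.mem_powersetCard] at hQ1 hQ2
      obtain ⟨⟨_, b1, a1, ha1, rfl⟩, hm1⟩ := hQ1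
      obtain ⟨⟨_, b2, a2, ha2, rfl⟩, hm2⟩ := hQ2
      rw [mid_triple b1 a1 ha1] at hm1
      rw [mid_triple b2 a2 ha2] at hm2
      rw [hi_triple b1 a1 ha1, hi_triple b2 a2 ha2] at hhi
      have hae : a1 = a2 := by linarith
      have hbe : b1 = b2 := by linarith
      rw [hbe, hae]

lemma sum_min_eq_s19 (n : ℕ) (V : Finset ℝ) (hV : V.card = n) :
    ∑ v ∈ V, min ((V.filter (· < v)).card) ((V.filter (fun x => v < x)).card)
      = ∑ i ∈ Finset.range n, min i (n - 1 - i) := by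
  classical
  let f : Fin n ↪o ℝ := V.orderEmbOfFin hV
  have himg : Finset.image (⇑f) Finset.univ = V := by
    apply Finset.coe_injective
    rw [Finset.coe_image, Finset.coe_univ, Set.image_univ]
    exact Finset.range_orderEmbOfFin V hV
  rw [← Fin.sum_univ_eq_sum_range (fun i => min i (n - 1 - i)), ← himg,
    Finset.sum_image (fun x _ y _ h => f.injective h)]
  apply Finset.sum_congr rfl
  intro i _
  congr 1
  · have h1 : (Finset.image (⇑f) Finset.univ).filter (· < f i)
        = Finset.image (⇑f) (Finset.Iio i) := by
      ext x
      simp only [Finset.mem_filter, Finset.mem_image, Finset.mem_Iio, Finset.mem_univ, true_and]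
      constructor
      · rintro ⟨⟨j, rfl⟩, hlt⟩
        exact ⟨j, f.lt_iff_lt.mp hlt, rfl⟩
      · rintro ⟨j, hj, rfl⟩
        exact ⟨⟨j, rfl⟩, f.lt_iff_lt.mpr hj⟩
    rw [h1, Finset.card_image_of_injective _ f.injective, Fin.card_Iio]
  · have h1 : (Finset.image (⇑f) Finset.univ).filter (fun x => f i < x)
        = Finset.image (⇑f) (Finset.Ioi i) := by
      ext x
      simp only [Finset.mem_filter, Finset.mem_image, Finset.mem_Ioi, Finset.mem_univ, true_and]
      constructor
      · rintro ⟨⟨j, rfl⟩, hlt⟩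
        exact ⟨j, f.lt_iff_lt.mp hlt, rfl⟩
      · rintro ⟨j, hj, rfl⟩
        exact ⟨⟨j, rfl⟩, f.lt_iff_lt.mpr hj⟩
    rw [h1, Finset.card_image_of_injective _ f.injective, Fin.card_Ioi]

lemma upper (n : ℕ) (V : Finset ℝ) (hV : V.card = n) :
    ((V.powersetCard 3).filter
        (fun Q => ∃ b a : ℝ, 0 < a ∧ Q = {b, b + a, b + 3 * a})).card
      ≤ (n - n % 2) * (n + n % 2 - 2) / 4 := by
  classical
  set F := (V.powersetCard 3).filter
      (fun Q => ∃ b a : ℝ, 0 < a ∧ Q = {b, b + a, b + 3 * a}) with hF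
  have hmidV : ∀ Q ∈ F, mid Q ∈ V := by
    intro Q hQ
    rw [hF, Finset.mem_filter, Finset.mem_powersetCard] at hQ
    obtain ⟨⟨hsub, _⟩, b, a, ha, rfl⟩ := hQ
    rw [mid_triple b a ha]
    exact hsub (by simp)
  have hcard : F.card = ∑ v ∈ V, (F.filter (fun Q => mid Q = v)).card :=
    Finset.card_eq_sum_card_fiberwise hmidV
  have hle : F.card ≤ ∑ i ∈ Finset.range n, min i (n - 1 - i) := by
    rw [hcard, ← sum_min_eq_s19 n V hV]
    exact Finset.sum_le_sum (fun v hv => fiber_le V v F hF)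
  have harith : 4 * ∑ i ∈ Finset.range n, min i (n - 1 - i)
      ≤ (n - n % 2) * (n + n % 2 - 2) := arith_up n
  omega



theorem stmt_19 (n : ℕ) (r s : ℕ) (hr : r = n % 2) (hs : s = n % 3) :
    (∀ V : Finset ℝ, V.card = n →
      ((V.powersetCard 3).filter
          (fun Q => ∃ b a : ℝ, 0 < a ∧ Q = {b, b + a, b + 3 * a})).card
        ≤ (n - r) * (n + r - 2) / 4)
    ∧
    (n - s) * (n + s - 3) / 6 ≤
      ((((Finset.range n).image (fun i => (i : ℝ))).powersetCard 3).filter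
          (fun Q => ∃ b a : ℝ, 0 < a ∧ Q = {b, b + a, b + 3 * a})).card := by
  subst hr hs
  exact ⟨fun V hV => upper n V hV, lower n⟩
end
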